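/- arXiv:0909.0567 — 9 statements merged into one kernel-verified Lean document; each statement's English description precedes it below -/
import Mathlib

section
/- Assume ∫₀¹ ν₊(x)² dx = ∞ (ν₊ ∉ L²(0,1)). Let φ : (0,∞) → ℝ be differentiable with ∫₀^∞ φ(x)² dx < ∞, and suppose the function x ↦ c(x)φ'(x) is differentiable on (0,∞) with derivative g satisfying ∫₀^∞ g(x)² dx < ∞ (these conditions express membership of φ in the domain of the adjoint H₊*). Then lim_{x→0⁺} c(x)φ'(x) = 0 and lim_{x→0⁺} c(x)·φ(x)·φ'(x) = 0. -/
open MeasureTheory Filter Set Topology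

private lemma tendsto_prim (f : ℝ → ℝ) (hf : IntegrableOn f (Set.Ioc 0 1)) :
    Tendsto (fun x => ∫ s in x..1, f s) (nhdsWithin 0 (Set.Ioi 0))
      (nhds (∫ s in Set.Ioc (0:ℝ) 1, f s)) := by
  have huicc : IntegrableOn f (Set.uIcc 0 1) := by
    rw [Set.uIcc_of_le (zero_le_one)]
    rwa [integrableOn_Icc_iff_integrableOn_Ioc]
  have hP := intervalIntegral.continuousOn_primitive_interval_left (a := 0) (b := 1) huicc
  have h0 : (0:ℝ) ∈ Set.uIcc (0:ℝ) 1 := Set.left_mem_uIcc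
  have hcw : Tendsto (fun x => ∫ t in x..1, f t) (nhdsWithin 0 (Set.uIcc (0:ℝ) 1))
      (nhds (∫ t in (0:ℝ)..1, f t)) := hP 0 h0
  have hle : nhdsWithin (0:ℝ) (Set.Ioi 0) ≤ nhdsWithin 0 (Set.uIcc (0:ℝ) 1) := by
    apply nhdsWithin_le_iff.mpr
    have h1 : Set.Ioc (0:ℝ) 1 ∈ nhdsWithin (0:ℝ) (Set.Ioi 0) :=
      Ioc_mem_nhdsGT_of_mem ⟨le_refl 0, zero_lt_one⟩
    exact Filter.mem_of_superset h1
      (by rw [Set.uIcc_of_le zero_le_one]; exact Set.Ioc_subset_Icc_self)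
  have h2 := hcw.mono_left hle
  rwa [intervalIntegral.integral_of_le zero_le_one] at h2

set_option maxHeartbeats 1000000 in
/-- Paper: Lemma 2.2. If ν₊ ∉ L²(0,1) and φ is in the domain of H₊*, then
(cφ')(0⁺) = 0 and (c·φ·φ')(0⁺) = 0. -/
theorem stmt_1 (c : ℝ → ℝ)
    (hc_cont : ContinuousOn c (Set.Ioi 0))
    (hc_pos : ∀ x > (0:ℝ), 0 < c x)
    (hν : ∫⁻ x in Set.Ioc (0:ℝ) 1,
      ENNReal.ofReal ((∫ s in x..1, (c s)⁻¹) ^ 2) = ⊤)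
    (φ g : ℝ → ℝ)
    (hφ_diff : ∀ x > (0:ℝ), DifferentiableAt ℝ φ x)
    (hφ_L2 : MeasureTheory.IntegrableOn (fun x => (φ x) ^ 2) (Set.Ioi 0))
    (hg : ∀ x > (0:ℝ), HasDerivAt (fun y => c y * deriv φ y) (g x) x)
    (hg_L2 : MeasureTheory.IntegrableOn (fun x => (g x) ^ 2) (Set.Ioi 0)) :
    Filter.Tendsto (fun x => c x * deriv φ x)
      (nhdsWithin 0 (Set.Ioi 0)) (nhds 0) ∧
    Filter.Tendsto (fun x => c x * φ x * deriv φ x)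
      (nhdsWithin 0 (Set.Ioi 0)) (nhds 0) := by
  set u : ℝ → ℝ := fun x => c x * deriv φ x with hu_def
  set ν : ℝ → ℝ := fun x => ∫ s in x..1, (c s)⁻¹ with hν_def
  -- basic continuity and measurability facts
  have hu_cont : ContinuousOn u (Set.Ioi 0) := fun x hx =>
    ((hg x hx).continuousAt).continuousWithinAt
  have hφ_cont : ContinuousOn φ (Set.Ioi 0) := fun x hx =>
    ((hφ_diff x hx).continuousAt).continuousWithinAt
  have hdφ : ∀ x ∈ Set.Ioi (0:ℝ), deriv φ x = u x / c x := by
    intro x hx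
    rw [hu_def]
    field_simp [(hc_pos x hx).ne']
  have hdφ_cont : ContinuousOn (deriv φ) (Set.Ioi 0) := by
    refine ContinuousOn.congr ?_ hdφ
    exact hu_cont.div hc_cont (fun x hx => (hc_pos x hx).ne')
  have hg_meas : AEStronglyMeasurable g (volume.restrict (Set.Ioi 0)) := by
    refine (measurable_deriv u).aestronglyMeasurable.congr ?_
    refine ((ae_restrict_iff' measurableSet_Ioi).2 (ae_of_all _ fun x hx => ?_))
    exact ((hg x hx).deriv)
  have hφ_meas : AEStronglyMeasurable φ (volume.restrict (Set.Ioi 0)) :=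
    hφ_cont.aestronglyMeasurable measurableSet_Ioi
  have hg_meas1 : AEStronglyMeasurable g (volume.restrict (Set.Ioc 0 1)) :=
    hg_meas.mono_measure (Measure.restrict_mono Set.Ioc_subset_Ioi_self le_rfl)
  have hgφ_meas1 : AEStronglyMeasurable (fun x => g x * φ x) (volume.restrict (Set.Ioc 0 1)) :=
    (hg_meas.mul hφ_meas).mono_measure
      (Measure.restrict_mono Set.Ioc_subset_Ioi_self le_rfl)
  -- integrability of g and g·φ on (0,1]
  have hg_int1 : IntegrableOn g (Set.Ioc 0 1) := by
    have h2 : IntegrableOn (fun x => (1 + g x ^ 2) / 2) (Set.Ioc 0 1) := by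
      apply Integrable.div_const
      exact (integrable_const 1).add (hg_L2.mono_set Set.Ioc_subset_Ioi_self)
    refine h2.mono' hg_meas1 (ae_of_all _ fun x => ?_)
    simp only [Real.norm_eq_abs]
    nlinarith [sq_nonneg (|g x| - 1), sq_abs (g x), abs_nonneg (g x)]
  have hgφ_int1 : IntegrableOn (fun x => g x * φ x) (Set.Ioc 0 1) := by
    have h2 : IntegrableOn (fun x => (g x ^ 2 + φ x ^ 2) / 2) (Set.Ioc 0 1) := by
      apply Integrable.div_const
      exact (hg_L2.mono_set Set.Ioc_subset_Ioi_self).add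
        (hφ_L2.mono_set Set.Ioc_subset_Ioi_self)
    refine h2.mono' hgφ_meas1 (ae_of_all _ fun x => ?_)
    simp only [Real.norm_eq_abs, abs_mul]
    nlinarith [sq_nonneg (|g x| - |φ x|), sq_abs (g x), sq_abs (φ x),
      abs_nonneg (g x), abs_nonneg (φ x)]
  -- fundamental theorem of calculus for u
  have hu_ftc : ∀ x : ℝ, 0 < x → x ≤ 1 → ∫ s in x..1, g s = u 1 - u x := by
    intro x hx hx1
    apply intervalIntegral.integral_eq_sub_of_hasDerivAt
    · intro s hs
      rw [Set.uIcc_of_le hx1] at hs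
      exact hg s (lt_of_lt_of_le hx hs.1)
    · rw [intervalIntegrable_iff_integrableOn_Ioc_of_le hx1]
      exact hg_int1.mono_set (Set.Ioc_subset_Ioc hx.le le_rfl)
  -- limit of u at 0⁺
  have hIoc_mem : Set.Ioc (0:ℝ) 1 ∈ nhdsWithin (0:ℝ) (Set.Ioi 0) :=
    Ioc_mem_nhdsGT_of_mem ⟨le_refl 0, zero_lt_one⟩
  set L : ℝ := u 1 - ∫ s in Set.Ioc (0:ℝ) 1, g s with hL_def
  have hu_lim : Tendsto u (nhdsWithin 0 (Set.Ioi 0)) (nhds L) := by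
    have h1 := tendsto_prim g hg_int1
    have h2 : Tendsto (fun x => u 1 - ∫ s in x..1, g s) (nhdsWithin 0 (Set.Ioi 0))
        (nhds L) := tendsto_const_nhds.sub h1
    refine h2.congr' ?_
    filter_upwards [hIoc_mem] with x hx
    rw [hu_ftc x hx.1 hx.2]
    ring
  -- ν facts
  have hcinv_cont : ContinuousOn (fun s => (c s)⁻¹) (Set.Ioi 0) :=
    hc_cont.inv₀ (fun x hx => (hc_pos x hx).ne')
  have hii : ∀ x y : ℝ, 0 < x → x ≤ y →
      IntervalIntegrable (fun s => (c s)⁻¹) volume x y := by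
    intro x y hx hxy
    apply ContinuousOn.intervalIntegrable
    refine hcinv_cont.mono ?_
    rw [Set.uIcc_of_le hxy]
    exact fun s hs => lt_of_lt_of_le hx hs.1
  have hν_sub : ∀ x y : ℝ, 0 < x → x ≤ y → y ≤ 1 →
      ∫ s in x..y, (c s)⁻¹ = ν x - ν y := by
    intro x y hx hxy hy1
    have h1 := intervalIntegral.integral_add_adjacent_intervals (hii x y hx hxy)
      (hii y 1 (lt_of_lt_of_le hx hxy) hy1)
    rw [hν_def]; simp only []; linarith [h1]
  have hν_anti : ∀ x y : ℝ, 0 < x → x ≤ y → y ≤ 1 → ν y ≤ ν x := by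
    intro x y hx hxy hy1
    have h1 : 0 ≤ ∫ s in x..y, (c s)⁻¹ := by
      apply intervalIntegral.integral_nonneg hxy
      intro s hs
      exact (inv_nonneg).2 (hc_pos s (lt_of_lt_of_le hx hs.1)).le
    linarith [hν_sub x y hx hxy hy1]
  have hν_nonneg : ∀ x : ℝ, 0 < x → x ≤ 1 → 0 ≤ ν x := by
    intro x hx hx1
    apply intervalIntegral.integral_nonneg hx1
    intro s hs
    exact (inv_nonneg).2 (hc_pos s (lt_of_lt_of_le hx hs.1)).le
  -- L = 0
  have hL0 : L = 0 := by
    by_contra hL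
    have hLpos : 0 < |L| := abs_pos.2 hL
    rw [Metric.tendsto_nhdsWithin_nhds] at hu_lim
    obtain ⟨δ, hδpos, hδ⟩ := hu_lim (|L| / 2) (by positivity)
    set a : ℝ := min (δ / 2) 1 with ha_def
    have ha_pos : 0 < a := lt_min (by positivity) zero_lt_one
    have ha1 : a ≤ 1 := min_le_right _ _
    have hua : ∀ x ∈ Set.Ioc (0:ℝ) a, |u x - L| ≤ |L| / 2 := by
      intro x hx
      have h1 : dist x 0 < δ := by
        rw [Real.dist_eq, sub_zero, abs_of_pos hx.1]
        exact lt_of_le_of_lt (hx.2.trans (min_le_left _ _)) (by linarith)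
      have h2 := hδ hx.1 h1
      rw [Real.dist_eq] at h2
      exact h2.le
    set C : ℝ := |L| / 2 * ν a + |φ a| with hC_def
    have hC_nonneg : 0 ≤ C := by
      have := hν_nonneg a ha_pos ha1
      positivity
    have hφ_lb : ∀ x ∈ Set.Ioc (0:ℝ) a, |L| / 2 * ν x - C ≤ |φ x| := by
      intro x hx
      have hx0 := hx.1
      have hxa := hx.2
      have hsub : ∀ s ∈ Set.uIcc x a, s ∈ Set.Ioi (0:ℝ) := by
        rw [Set.uIcc_of_le hxa]
        exact fun s hs => lt_of_lt_of_le hx0 hs.1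
      have hftc : ∫ s in x..a, deriv φ s = φ a - φ x := by
        apply intervalIntegral.integral_eq_sub_of_hasDerivAt
        · exact fun s hs => (hφ_diff s (hsub s hs)).hasDerivAt
        · exact ((hdφ_cont.mono hsub).intervalIntegrable)
      have hcong : ∫ s in x..a, deriv φ s
          = (∫ s in x..a, L * (c s)⁻¹) + ∫ s in x..a, (u s - L) * (c s)⁻¹ := by
        rw [← intervalIntegral.integral_add (f := fun s => L * (c s)⁻¹) (g := fun s => (u s - L) * (c s)⁻¹) (((continuousOn_const.mul
              (hcinv_cont.mono hsub))).intervalIntegrable)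
            ((((hu_cont.mono hsub).sub continuousOn_const).mul
              (hcinv_cont.mono hsub)).intervalIntegrable)]
        apply intervalIntegral.integral_congr
        intro s hs
        rw [hdφ s (hsub s hs)]
        field_simp
        ring
      have hA1 : ∫ s in x..a, L * (c s)⁻¹ = L * (ν x - ν a) := by
        rw [intervalIntegral.integral_const_mul, hν_sub x a hx0 hxa ha1]
      have hA2 : |∫ s in x..a, (u s - L) * (c s)⁻¹| ≤ |L| / 2 * (ν x - ν a) := by
        calc |∫ s in x..a, (u s - L) * (c s)⁻¹|
            ≤ ∫ s in x..a, |(u s - L) * (c s)⁻¹| :=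
              intervalIntegral.abs_integral_le_integral_abs hxa
          _ ≤ ∫ s in x..a, |L| / 2 * (c s)⁻¹ := by
              apply intervalIntegral.integral_mono_on hxa
              · exact (((hu_cont.mono hsub).sub continuousOn_const).mul
                  (hcinv_cont.mono hsub)).intervalIntegrable.abs
              · exact ((continuousOn_const.mul (hcinv_cont.mono hsub))).intervalIntegrable
              · intro s hs
                have hs0 : 0 < s := lt_of_lt_of_le hx0 hs.1
                rw [abs_mul, abs_of_nonneg ((inv_nonneg).2 (hc_pos s hs0).le)]
                have h3 := hua s ⟨hs0, hs.2⟩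
                have hcp : (0:ℝ) ≤ (c s)⁻¹ := (inv_nonneg).2 (hc_pos s hs0).le
                exact mul_le_mul_of_nonneg_right h3 hcp
          _ = |L| / 2 * (ν x - ν a) := by
              rw [intervalIntegral.integral_const_mul, hν_sub x a hx0 hxa ha1]
      have hνd : 0 ≤ ν x - ν a := sub_nonneg.2 (hν_anti x a hx0 hxa ha1)
      have h5 : |L| * (ν x - ν a) - |L| / 2 * (ν x - ν a) ≤ |φ a - φ x| := by
        have h6 : |L * (ν x - ν a)| - |∫ s in x..a, (u s - L) * (c s)⁻¹| ≤ |φ a - φ x| := by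
          rw [← hftc, hcong, hA1]
          calc |L * (ν x - ν a)| - |∫ s in x..a, (u s - L) * (c s)⁻¹|
              ≤ |L * (ν x - ν a) + ∫ s in x..a, (u s - L) * (c s)⁻¹| := by
                have h7 := abs_sub_abs_le_abs_sub (L * (ν x - ν a))
                  (-(∫ s in x..a, (u s - L) * (c s)⁻¹))
                simp only [abs_neg, sub_neg_eq_add] at h7
                exact h7
            _ = _ := rfl
        rw [abs_mul, abs_of_nonneg hνd] at h6
        linarith [hA2]
      have h7 : |φ a - φ x| ≤ |φ a| + |φ x| := abs_sub _ _
      rw [hν_def] at hC_def ⊢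
      nlinarith [h5, h7]
    have hb_ex : ∃ b : ℝ, 0 < b ∧ b ≤ a ∧ 4 * C / |L| ≤ ν b := by
      by_contra hcon
      push_neg at hcon
      set M : ℝ := max (4 * C / |L|) (ν a) with hM_def
      have hM0 : 0 ≤ M := le_max_of_le_right (hν_nonneg a ha_pos ha1)
      have hbd : ∀ x ∈ Set.Ioc (0:ℝ) 1, ν x ^ 2 ≤ M ^ 2 := by
        intro x hx
        have h0 := hν_nonneg x hx.1 hx.2
        rcases le_or_gt x a with h | h
        · have h1 := (hcon x hx.1 h).le
          have h2 : ν x ≤ M := h1.trans (le_max_left _ _)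
          nlinarith
        · have h1 := hν_anti a x ha_pos h.le hx.2
          have h2 : ν x ≤ M := h1.trans (le_max_right _ _)
          nlinarith
      have hfin : (∫⁻ x in Set.Ioc (0:ℝ) 1, ENNReal.ofReal (ν x ^ 2))
          ≤ ENNReal.ofReal (M ^ 2) * volume (Set.Ioc (0:ℝ) 1) := by
        calc (∫⁻ x in Set.Ioc (0:ℝ) 1, ENNReal.ofReal (ν x ^ 2))
            ≤ ∫⁻ _x in Set.Ioc (0:ℝ) 1, ENNReal.ofReal (M ^ 2) :=
              setLIntegral_mono' measurableSet_Ioc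
                (fun x hx => ENNReal.ofReal_le_ofReal (hbd x hx))
          _ = ENNReal.ofReal (M ^ 2) * volume (Set.Ioc (0:ℝ) 1) :=
              setLIntegral_const _ _
      rw [hν] at hfin
      have h8 : ENNReal.ofReal (M ^ 2) * volume (Set.Ioc (0:ℝ) 1) < ⊤ := by
        apply ENNReal.mul_lt_top ENNReal.ofReal_lt_top
        rw [Real.volume_Ioc]
        exact ENNReal.ofReal_lt_top
      exact absurd (lt_of_le_of_lt hfin h8) (lt_irrefl ⊤)
    obtain ⟨b, hb0, hba, hbν⟩ := hb_ex
    have hb1 : b ≤ 1 := hba.trans ha1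
    have hν_le_φ : ∀ x ∈ Set.Ioc (0:ℝ) b,
        ENNReal.ofReal (ν x ^ 2) ≤ ENNReal.ofReal ((4 / |L|) ^ 2) * ENNReal.ofReal (φ x ^ 2) := by
      intro x hx
      have hxa : x ∈ Set.Ioc (0:ℝ) a := ⟨hx.1, hx.2.trans hba⟩
      have h1 := hφ_lb x hxa
      have hνx : 4 * C / |L| ≤ ν x := le_trans hbν (hν_anti x b hx.1 hx.2 hb1)
      have hν0 : 0 ≤ ν x := hν_nonneg x hx.1 (hxa.2.trans ha1)
      have h2 : |L| / 4 * ν x ≤ |φ x| := by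
        have h3 : C ≤ |L| / 4 * ν x := by
          have h9 := mul_le_mul_of_nonneg_left hνx
            (le_of_lt (show (0:ℝ) < |L| / 4 by positivity))
          calc C = |L| / 4 * (4 * C / |L|) := by field_simp
            _ ≤ |L| / 4 * ν x := h9
        linarith
      have h4 : ν x ≤ 4 / |L| * |φ x| := by
        have h5 := mul_le_mul_of_nonneg_left h2 (le_of_lt (by positivity : (0:ℝ) < 4 / |L|))
        have h6 : 4 / |L| * (|L| / 4 * ν x) = ν x := by field_simp
        linarith [h5, h6.le, h6.ge]
      have h7 : ν x ^ 2 ≤ (4 / |L|) ^ 2 * φ x ^ 2 := by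
        have h8 := pow_le_pow_left₀ hν0 h4 2
        rw [mul_pow, sq_abs] at h8
        exact h8
      rw [← ENNReal.ofReal_mul (by positivity)]
      exact ENNReal.ofReal_le_ofReal h7
    have hsplit : (∫⁻ x in Set.Ioc (0:ℝ) b, ENNReal.ofReal (ν x ^ 2))
        + (∫⁻ x in Set.Ioc b 1, ENNReal.ofReal (ν x ^ 2)) = ⊤ := by
      rw [← lintegral_union measurableSet_Ioc (Set.Ioc_disjoint_Ioc_of_le le_rfl),
        Set.Ioc_union_Ioc_eq_Ioc hb0.le hb1]
      exact hν
    have hfin2 : (∫⁻ x in Set.Ioc b 1, ENNReal.ofReal (ν x ^ 2)) ≠ ⊤ := by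
      have hbd2 : ∀ x ∈ Set.Ioc b 1, ENNReal.ofReal (ν x ^ 2) ≤ ENNReal.ofReal (ν b ^ 2) := by
        intro x hx
        have h0 := hν_nonneg x (hb0.trans hx.1) hx.2
        have h1 := hν_anti b x hb0 hx.1.le hx.2
        exact ENNReal.ofReal_le_ofReal (by nlinarith)
      have h9 : (∫⁻ x in Set.Ioc b 1, ENNReal.ofReal (ν x ^ 2))
          ≤ ENNReal.ofReal (ν b ^ 2) * volume (Set.Ioc b 1) := by
        calc (∫⁻ x in Set.Ioc b 1, ENNReal.ofReal (ν x ^ 2))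
            ≤ ∫⁻ _x in Set.Ioc b 1, ENNReal.ofReal (ν b ^ 2) :=
              setLIntegral_mono' measurableSet_Ioc hbd2
          _ = _ := setLIntegral_const _ _
      refine ne_top_of_le_ne_top ?_ h9
      rw [Real.volume_Ioc]
      exact (ENNReal.mul_lt_top ENNReal.ofReal_lt_top ENNReal.ofReal_lt_top).ne
    have htop : (∫⁻ x in Set.Ioc (0:ℝ) b, ENNReal.ofReal (ν x ^ 2)) = ⊤ := by
      rcases ENNReal.add_eq_top.1 hsplit with h | h
      · exact h
      · exact absurd h hfin2
    have hle2 : (⊤ : ENNReal) ≤ ENNReal.ofReal ((4 / |L|) ^ 2)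
        * ∫⁻ x in Set.Ioc (0:ℝ) b, ENNReal.ofReal (φ x ^ 2) := by
      rw [← lintegral_const_mul' _ _ ENNReal.ofReal_ne_top, ← htop]
      exact setLIntegral_mono' measurableSet_Ioc hν_le_φ
    have hφfin : (∫⁻ x in Set.Ioc (0:ℝ) b, ENNReal.ofReal (φ x ^ 2)) < ⊤ :=
      (hφ_L2.mono_set Set.Ioc_subset_Ioi_self).lintegral_lt_top
    have h10 : ENNReal.ofReal ((4 / |L|) ^ 2)
        * (∫⁻ x in Set.Ioc (0:ℝ) b, ENNReal.ofReal (φ x ^ 2)) < ⊤ :=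
      ENNReal.mul_lt_top ENNReal.ofReal_lt_top hφfin
    exact absurd (lt_of_le_of_lt hle2 h10) (lt_irrefl ⊤)
  -- first conclusion
  have hfirst : Tendsto u (nhdsWithin 0 (Set.Ioi 0)) (nhds 0) := hL0 ▸ hu_lim
  refine ⟨hfirst, ?_⟩
  -- representation u x = ∫_{(0,x]} g
  have hu1 : u 1 = ∫ s in Set.Ioc (0:ℝ) 1, g s := by
    have := hL0
    rw [hL_def] at this
    linarith
  have hu_eq : ∀ x ∈ Set.Ioc (0:ℝ) 1, u x = ∫ s in Set.Ioc (0:ℝ) x, g s := by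
    intro x hx
    have h1 := hu_ftc x hx.1 hx.2
    rw [intervalIntegral.integral_of_le hx.2] at h1
    have h2 : ∫ s in Set.Ioc (0:ℝ) 1, g s
        = (∫ s in Set.Ioc (0:ℝ) x, g s) + ∫ s in Set.Ioc x 1, g s := by
      rw [← setIntegral_union (Set.Ioc_disjoint_Ioc_of_le le_rfl) measurableSet_Ioc
        (hg_int1.mono_set (Set.Ioc_subset_Ioc le_rfl hx.2))
        (hg_int1.mono_set (Set.Ioc_subset_Ioc hx.1.le le_rfl)),
        Set.Ioc_union_Ioc_eq_Ioc hx.1.le hx.2]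
    rw [hu1] at h1
    linarith
  -- Cauchy–Schwarz type bound
  set K : ℝ := ∫ s in Set.Ioi (0:ℝ), g s ^ 2 with hK_def
  have hK0 : 0 ≤ K := setIntegral_nonneg measurableSet_Ioi (fun s _ => sq_nonneg _)
  have hu_sq : ∀ x ∈ Set.Ioc (0:ℝ) 1, u x ^ 2 ≤ (K + 1) * x := by
    intro x hx
    have hx0 := hx.1
    set ε : ℝ := Real.sqrt ((K + 1) / x) with hε_def
    have hεpos : 0 < ε := Real.sqrt_pos.2 (by positivity)
    have hε2 : ε ^ 2 = (K + 1) / x := Real.sq_sqrt (by positivity)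
    have hgx : IntegrableOn g (Set.Ioc 0 x) := hg_int1.mono_set (Set.Ioc_subset_Ioc le_rfl hx.2)
    have hg2x : IntegrableOn (fun s => g s ^ 2) (Set.Ioc 0 x) :=
      hg_L2.mono_set Set.Ioc_subset_Ioi_self
    have habs : |u x| ≤ K / (2 * ε) + ε * x / 2 := by
      rw [hu_eq x hx]
      calc |∫ s in Set.Ioc (0:ℝ) x, g s| ≤ ∫ s in Set.Ioc (0:ℝ) x, |g s| := by
            simpa [Real.norm_eq_abs] using
              norm_integral_le_integral_norm (μ := volume.restrict (Set.Ioc (0:ℝ) x)) g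
        _ ≤ ∫ s in Set.Ioc (0:ℝ) x, (g s ^ 2 / (2 * ε) + ε / 2) := by
            apply setIntegral_mono_on hgx.abs
              ((hg2x.div_const _).add (integrable_const _)) measurableSet_Ioc
            intro s _
            simp only [Pi.add_apply]
            have hgb : 2 * ε * |g s| ≤ g s ^ 2 + ε ^ 2 := by
              nlinarith [sq_nonneg (|g s| - ε), sq_abs (g s)]
            calc |g s| = (2 * ε * |g s|) / (2 * ε) := by field_simp
              _ ≤ (g s ^ 2 + ε ^ 2) / (2 * ε) := by gcongr
              _ = g s ^ 2 / (2 * ε) + ε / 2 := by field_simp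
        _ = (∫ s in Set.Ioc (0:ℝ) x, g s ^ 2) / (2 * ε) + ε / 2 * x := by
            rw [integral_add (hg2x.div_const _) (integrable_const _), integral_div,
              setIntegral_const]
            rw [Real.volume_real_Ioc_of_le hx0.le, smul_eq_mul, sub_zero]
            ring
        _ ≤ K / (2 * ε) + ε / 2 * x := by
            have h1 : (∫ s in Set.Ioc (0:ℝ) x, g s ^ 2) ≤ K := by
              apply setIntegral_mono_set hg_L2
              · exact ae_of_all _ (fun s => sq_nonneg _)
              · exact (Set.Ioc_subset_Ioi_self).eventuallyLE
            gcongr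
        _ = K / (2 * ε) + ε * x / 2 := by ring
    have h1 : (K / (2 * ε) + ε * x / 2) * ε = K / 2 + ε ^ 2 * x / 2 := by
      field_simp
    have h2 : ε ^ 2 * x = K + 1 := by
      rw [hε2]; field_simp
    have h3 : u x ^ 2 ≤ (K / (2 * ε) + ε * x / 2) ^ 2 := by
      rw [← sq_abs (u x)]
      exact pow_le_pow_left₀ (abs_nonneg _) habs 2
    nlinarith [h1, h2, h3, hεpos, hx0, hK0, sq_nonneg (K / (2 * ε) + ε * x / 2)]
  -- claim: |u·φ| gets arbitrarily small near 0
  have hclaim : ∀ δ : ℝ, 0 < δ → ∀ b : ℝ, 0 < b →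
      ∃ x : ℝ, 0 < x ∧ x ≤ min b 1 ∧ |u x * φ x| < δ := by
    intro δ hδ b hb
    by_contra hcon
    push_neg at hcon
    set b' : ℝ := min b 1 with hb'_def
    have hb'0 : 0 < b' := lt_min hb zero_lt_one
    have hb'1 : b' ≤ 1 := min_le_right _ _
    have hlb : ∀ x ∈ Set.Ioc (0:ℝ) b', δ ^ 2 / (K + 1) * x⁻¹ ≤ φ x ^ 2 := by
      intro x hx
      have hx0 := hx.1
      have h1 := hcon x hx0 hx.2
      have h2 := hu_sq x ⟨hx0, hx.2.trans hb'1⟩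
      have h3 : δ ^ 2 ≤ u x ^ 2 * φ x ^ 2 := by
        have h9 := pow_le_pow_left₀ hδ.le h1 2
        rw [sq_abs, mul_pow] at h9
        linarith
      have h4 : δ ^ 2 ≤ (K + 1) * x * φ x ^ 2 :=
        h3.trans (mul_le_mul_of_nonneg_right h2 (sq_nonneg _))
      rw [div_mul_eq_mul_div, div_le_iff₀ (by positivity : (0:ℝ) < K + 1)]
      calc δ ^ 2 * x⁻¹ ≤ ((K + 1) * x * φ x ^ 2) * x⁻¹ :=
            mul_le_mul_of_nonneg_right h4 (by positivity)
        _ = φ x ^ 2 * (K + 1) := by field_simp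
    have hint : IntegrableOn (fun x : ℝ => δ ^ 2 / (K + 1) * x⁻¹) (Set.Ioc 0 b') := by
      refine (hφ_L2.mono_set Set.Ioc_subset_Ioi_self).mono' ?_ ?_
      · exact ((measurable_inv.const_mul _).aestronglyMeasurable)
      · refine (ae_restrict_iff' measurableSet_Ioc).2 (ae_of_all _ fun x hx => ?_)
        rw [Real.norm_eq_abs, abs_of_nonneg (by have hx0 := hx.1; positivity)]
        exact hlb x hx
    have hinv : IntegrableOn (fun x : ℝ => x⁻¹) (Set.Ioc 0 b') := by
      have h5 := hint.const_mul ((K + 1) / δ ^ 2)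
      have hfun : (fun x : ℝ => x⁻¹)
          = fun x : ℝ => ((K + 1) / δ ^ 2) * (δ ^ 2 / (K + 1) * x⁻¹) := by
        funext x
        field_simp
      rw [hfun]
      exact h5
    have h6 : IntervalIntegrable (fun x : ℝ => x⁻¹) volume 0 b' :=
      (intervalIntegrable_iff_integrableOn_Ioc_of_le hb'0.le).2 hinv
    rcases intervalIntegrable_inv_iff.1 h6 with h | h
    · exact absurd h.symm hb'0.ne'
    · exact h Set.left_mem_uIcc
  -- decomposition of w = u·φ
  set w : ℝ → ℝ := fun x => u x * φ x with hw_def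
  set E : ℝ → ℝ := fun x => ∫ s in x..1, g s * φ s with hE_def
  set F : ℝ → ℝ := fun x => ∫ s in x..1, u s ^ 2 / c s with hF_def
  have hq_cont : ContinuousOn (fun s => u s ^ 2 / c s) (Set.Ioi 0) :=
    ((hu_cont.pow 2).div hc_cont (fun x hx => (hc_pos x hx).ne'))
  have hw_ftc : ∀ x : ℝ, 0 < x → x ≤ 1 → w 1 - w x = E x + F x := by
    intro x hx hx1
    have hsub : ∀ s ∈ Set.uIcc x 1, s ∈ Set.Ioi (0:ℝ) := by
      rw [Set.uIcc_of_le hx1]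
      exact fun s hs => lt_of_lt_of_le hx hs.1
    have hgφ_ii : IntervalIntegrable (fun s => g s * φ s) volume x 1 := by
      rw [intervalIntegrable_iff_integrableOn_Ioc_of_le hx1]
      exact hgφ_int1.mono_set (Set.Ioc_subset_Ioc hx.le le_rfl)
    have hq_ii : IntervalIntegrable (fun s => u s ^ 2 / c s) volume x 1 :=
      (hq_cont.mono hsub).intervalIntegrable
    have hftc : ∫ s in x..1, (g s * φ s + u s ^ 2 / c s) = w 1 - w x := by
      apply intervalIntegral.integral_eq_sub_of_hasDerivAt
      · intro s hs
        have hs0 : s ∈ Set.Ioi (0:ℝ) := hsub s hs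
        have hd := (hg s hs0).mul ((hφ_diff s hs0).hasDerivAt)
        have he : g s * φ s + u s * deriv φ s = g s * φ s + u s ^ 2 / c s := by
          rw [hdφ s hs0]
          field_simp
        rw [← he]
        exact hd
      · exact hgφ_ii.add hq_ii
    rw [← hftc, intervalIntegral.integral_add hgφ_ii hq_ii]
  have hF_anti : ∀ x y : ℝ, 0 < x → x ≤ y → y ≤ 1 → F y ≤ F x := by
    intro x y hx hxy hy1
    have hsub : ∀ s ∈ Set.uIcc x y, s ∈ Set.Ioi (0:ℝ) := by
      rw [Set.uIcc_of_le hxy]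
      exact fun s hs => lt_of_lt_of_le hx hs.1
    have h1 : 0 ≤ ∫ s in x..y, u s ^ 2 / c s := by
      apply intervalIntegral.integral_nonneg hxy
      intro s hs
      have hs0 : 0 < s := lt_of_lt_of_le hx hs.1
      have := hc_pos s hs0
      positivity
    have h2 := intervalIntegral.integral_add_adjacent_intervals (μ := volume)
      ((hq_cont.mono hsub).intervalIntegrable)
      ((hq_cont.mono (by
        rw [Set.uIcc_of_le hy1]
        exact fun s hs => lt_of_lt_of_le (lt_of_lt_of_le hx hxy) hs.1)).intervalIntegrable)
    rw [hF_def]; simp only []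
    linarith [h2, h1]
  set A : ℝ := ∫ s in Set.Ioc (0:ℝ) 1, g s * φ s with hA_def
  have hE_lim : Tendsto E (nhdsWithin 0 (Set.Ioi 0)) (nhds A) :=
    tendsto_prim _ hgφ_int1
  -- final ε-argument
  have hsecond : Tendsto w (nhdsWithin 0 (Set.Ioi 0)) (nhds 0) := by
    rw [Metric.tendsto_nhdsWithin_nhds]
    intro ε hε
    rw [Metric.tendsto_nhdsWithin_nhds] at hE_lim
    obtain ⟨δ1, hδ1pos, hδ1⟩ := hE_lim (ε / 4) (by positivity)
    set b1 : ℝ := min (δ1 / 2) 1 with hb1_def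
    have hb1pos : 0 < b1 := lt_min (by positivity) zero_lt_one
    have hb11 : b1 ≤ 1 := min_le_right _ _
    have hEb : ∀ x ∈ Set.Ioc (0:ℝ) b1, |E x - A| < ε / 4 := by
      intro x hx
      have h1 : dist x 0 < δ1 := by
        rw [Real.dist_eq, sub_zero, abs_of_pos hx.1]
        exact lt_of_le_of_lt (hx.2.trans (min_le_left _ _)) (by linarith)
      have h2 := hδ1 hx.1 h1
      rwa [Real.dist_eq] at h2
    obtain ⟨x0, hx00, hx0le, hwx0⟩ := hclaim (ε / 4) (by positivity) b1 hb1pos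
    have hx0b1 : x0 ≤ b1 := hx0le.trans (by rw [min_eq_left hb11])
    have hx01 : x0 ≤ 1 := hx0b1.trans hb11
    refine ⟨x0, hx00, ?_⟩
    intro x hxIoi hxd
    rw [Real.dist_eq, sub_zero, abs_of_pos hxIoi] at hxd
    have hx0p : (0:ℝ) < x := hxIoi
    have hxx0 : x < x0 := hxd
    have hx1 : x ≤ 1 := (hxx0.le).trans hx01
    obtain ⟨x1, hx10, hx1le, hwx1⟩ := hclaim (ε / 4) (by positivity) x hx0p
    have hx1x : x1 ≤ x := hx1le.trans (min_le_left _ _)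
    -- identities
    have hid0 := hw_ftc x0 hx00 hx01
    have hid1 := hw_ftc x1 hx10 (hx1x.trans hx1)
    have hidx := hw_ftc x hx0p hx1
    -- E bounds
    have hEx0 := hEb x0 ⟨hx00, hx0b1⟩
    have hEx1 := hEb x1 ⟨hx10, (hx1x.trans (hxx0.le.trans hx0b1))⟩
    have hExx := hEb x ⟨hx0p, hxx0.le.trans hx0b1⟩
    -- F monotonicity
    have hFx0 : F x0 ≤ F x := hF_anti x x0 hx0p hxx0.le hx01
    have hFx1 : F x ≤ F x1 := hF_anti x1 x hx10 hx1x hx1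
    -- combine
    rw [Real.dist_eq, sub_zero, abs_lt]
    have e0 : w x0 = u x0 * φ x0 := rfl
    have e1 : w x1 = u x1 * φ x1 := rfl
    have ha0 := abs_lt.1 hwx0
    have ha1 := abs_lt.1 hwx1
    have haE0 := abs_lt.1 hEx0
    have haE1 := abs_lt.1 hEx1
    have haEx := abs_lt.1 hExx
    constructor <;> linarith
  refine hsecond.congr (fun x => ?_)
  rw [hw_def, hu_def]
  ring
end

section
/- Assume ∫₀¹ ν₊(x)² dx < ∞. Let ψ : (0,∞) → ℝ be measurable with ∫₀^∞ ψ(x)² dx < ∞. Then ν₊(x)·∫₀ˣ ψ(t) dt → 0 as x → 0⁺. (Combined with the preceding representation c·φ'(x) = −∫₀ˣ ψ on the closure domain, this says (ν₊·c·φ')(0⁺) = 0 for every φ in the domain of the closure of H₊.) -/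
open MeasureTheory Filter Set Topology

lemma tendsto_setIntegral_Ioc_zero_aux (f : ℝ → ℝ)
    (hf : MeasureTheory.IntegrableOn f (Set.Ioc 0 1)) :
    Filter.Tendsto (fun x => ∫ t in Set.Ioc (0:ℝ) x, f t)
      (nhdsWithin 0 (Set.Ioi 0)) (nhds 0) := by
  have hIcc : MeasureTheory.IntegrableOn f (Set.Icc 0 1) := by
    rwa [integrableOn_Icc_iff_integrableOn_Ioc]
  have hcont := intervalIntegral.continuousOn_primitive (a := 0) (b := 1)
    (μ := volume) hIcc
  have h0 : ContinuousWithinAt (fun x => ∫ t in Set.Ioc (0:ℝ) x, f t) (Set.Icc 0 1) 0 :=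
    hcont 0 (by norm_num)
  have hval : (∫ t in Set.Ioc (0:ℝ) (0:ℝ), f t) = 0 := by simp
  have h1 : Filter.Tendsto (fun x => ∫ t in Set.Ioc (0:ℝ) x, f t)
      (nhdsWithin 0 (Set.Icc 0 1)) (nhds 0) := by
    have := h0.tendsto
    rwa [hval] at this
  have h2 : nhdsWithin (0:ℝ) (Set.Ioi 0) = nhdsWithin 0 (Set.Ioc 0 1) :=
    (nhdsWithin_Ioc_eq_nhdsGT (one_pos)).symm
  rw [h2]
  exact h1.mono_left (nhdsWithin_mono 0 Set.Ioc_subset_Icc_self)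

/-- Paper: Corollary 2.5. If ν₊ ∈ L²(0,1) and ψ ∈ L²(0,∞) then
ν₊(x)·∫₀ˣ ψ → 0 as x → 0⁺. -/
theorem stmt_3 (c : ℝ → ℝ)
    (hc_cont : ContinuousOn c (Set.Ioi 0))
    (hc_pos : ∀ x > (0:ℝ), 0 < c x)
    (hν_L2 : MeasureTheory.IntegrableOn
      (fun x => (∫ s in x..1, (c s)⁻¹) ^ 2) (Set.Ioc 0 1))
    (ψ : ℝ → ℝ) (hψ_meas : Measurable ψ)
    (hψ_L2 : MeasureTheory.IntegrableOn (fun x => (ψ x) ^ 2) (Set.Ioi 0)) :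
    Filter.Tendsto
      (fun x => (∫ s in x..1, (c s)⁻¹) * ∫ t in Set.Ioc (0:ℝ) x, ψ t)
      (nhdsWithin 0 (Set.Ioi 0)) (nhds 0) := by
  set ν : ℝ → ℝ := fun x => ∫ s in x..1, (c s)⁻¹ with hνdef
  -- interval integrability of c⁻¹
  have hci : ∀ a b : ℝ, 0 < a → 0 < b →
      IntervalIntegrable (fun s => (c s)⁻¹) volume a b := by
    intro a b ha hb
    have hsub : Set.uIcc a b ⊆ Set.Ioi 0 := fun x hx =>
      lt_of_lt_of_le (lt_min ha hb) hx.1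
    apply ContinuousOn.intervalIntegrable
    exact ((hc_cont.mono hsub).inv₀ (fun x hx => (hc_pos x (hsub hx)).ne'))
  have hν_nonneg : ∀ x : ℝ, 0 < x → x ≤ 1 → 0 ≤ ν x := by
    intro x hx hx1
    exact intervalIntegral.integral_nonneg hx1
      (fun u hu => inv_nonneg.2 (hc_pos u (lt_of_lt_of_le hx hu.1)).le)
  have hmono : ∀ t x : ℝ, 0 < t → t ≤ x → x ≤ 1 → ν x ≤ ν t := by
    intro t x ht htx hx1
    have hx : 0 < x := ht.trans_le htx
    have h1 : (∫ s in t..x, (c s)⁻¹) + (∫ s in x..1, (c s)⁻¹)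
        = ∫ s in t..1, (c s)⁻¹ :=
      intervalIntegral.integral_add_adjacent_intervals (hci t x ht hx)
        (hci x 1 hx one_pos)
    have h2 : 0 ≤ ∫ s in t..x, (c s)⁻¹ :=
      intervalIntegral.integral_nonneg htx
        (fun u hu => inv_nonneg.2 (hc_pos u (lt_of_lt_of_le ht hu.1)).le)
    simp only [hνdef]
    linarith
  -- key pointwise bound on Ioo 0 1
  have key : ∀ x ∈ Set.Ioo (0:ℝ) 1,
      |ν x * ∫ t in Set.Ioc (0:ℝ) x, ψ t| ≤
        Real.sqrt (∫ t in Set.Ioc (0:ℝ) x, ν t ^ 2) *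
        Real.sqrt (∫ t in Set.Ioc (0:ℝ) x, ψ t ^ 2) := by
    intro x hx
    obtain ⟨hx0, hx1⟩ := hx
    have hνx : 0 ≤ ν x := hν_nonneg x hx0 hx1.le
    -- (a) ν x * sqrt x ≤ sqrt(∫ ν²)
    have hνint : MeasureTheory.IntegrableOn (fun t => ν t ^ 2) (Set.Ioc 0 x) :=
      hν_L2.mono_set (Set.Ioc_subset_Ioc_right hx1.le)
    have hconst : ν x ^ 2 * x ≤ ∫ t in Set.Ioc (0:ℝ) x, ν t ^ 2 := by
      have := setIntegral_ge_of_const_le (c := ν x ^ 2) (f := fun t => ν t ^ 2)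
        measurableSet_Ioc (by simp [Real.volume_Ioc])
        (fun t ht => by
          have := hmono t x ht.1 ht.2 hx1.le
          exact pow_le_pow_left₀ hνx this 2) hνint
      simpa [Real.volume_Ioc, ENNReal.toReal_ofReal hx0.le, max_eq_left hx0.le, mul_comm] using this
    have hInu : 0 ≤ ∫ t in Set.Ioc (0:ℝ) x, ν t ^ 2 := by
      refine le_trans ?_ hconst
      positivity
    have ha : ν x * Real.sqrt x ≤ Real.sqrt (∫ t in Set.Ioc (0:ℝ) x, ν t ^ 2) := by
      have h1 : ν x * Real.sqrt x = Real.sqrt (ν x ^ 2 * x) := by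
        rw [Real.sqrt_mul (sq_nonneg _), Real.sqrt_sq hνx]
      rw [h1]
      exact Real.sqrt_le_sqrt hconst
    -- (b) Cauchy–Schwarz
    have hψint2 : MeasureTheory.IntegrableOn (fun t => ψ t ^ 2) (Set.Ioc 0 x) :=
      hψ_L2.mono_set (fun t ht => ht.1)
    have hψm : AEStronglyMeasurable ψ (volume.restrict (Set.Ioc (0:ℝ) x)) :=
      hψ_meas.aestronglyMeasurable.restrict
    have hmem : MemLp ψ 2 (volume.restrict (Set.Ioc (0:ℝ) x)) :=
      (memLp_two_iff_integrable_sq hψm).2 hψint2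
    have habs : MemLp (fun t => |ψ t|) 2 (volume.restrict (Set.Ioc (0:ℝ) x)) := by
      simpa [Real.norm_eq_abs] using hmem.norm
    have hone : MemLp (fun _ : ℝ => (1:ℝ)) 2 (volume.restrict (Set.Ioc (0:ℝ) x)) :=
      memLp_const 1
    have hpq : Real.HolderConjugate 2 2 := Real.HolderConjugate.two_two
    have hcs := MeasureTheory.integral_mul_le_Lp_mul_Lq_of_nonneg
      (μ := volume.restrict (Set.Ioc (0:ℝ) x)) hpq
      (Filter.Eventually.of_forall (fun t => abs_nonneg (ψ t)))
      (Filter.Eventually.of_forall (fun _ => zero_le_one))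
      (by simpa using habs) (by simpa using hone)
    simp only [mul_one] at hcs
    have he1 : (∫ t in Set.Ioc (0:ℝ) x, |ψ t| ^ (2:ℝ))
        = ∫ t in Set.Ioc (0:ℝ) x, ψ t ^ 2 := by
      refine integral_congr_ae (Filter.Eventually.of_forall (fun t => ?_))
      simp only [Real.rpow_two, sq_abs]
    have he2 : (∫ _t in Set.Ioc (0:ℝ) x, (1:ℝ) ^ (2:ℝ)) = x := by
      simp [Real.volume_Ioc, ENNReal.toReal_ofReal hx0.le, hx0.le]
    rw [he1, he2] at hcs
    have hIψ : 0 ≤ ∫ t in Set.Ioc (0:ℝ) x, ψ t ^ 2 :=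
      setIntegral_nonneg measurableSet_Ioc (fun t _ => sq_nonneg _)
    have hb : |∫ t in Set.Ioc (0:ℝ) x, ψ t| ≤
        Real.sqrt (∫ t in Set.Ioc (0:ℝ) x, ψ t ^ 2) * Real.sqrt x := by
      have h1 : |∫ t in Set.Ioc (0:ℝ) x, ψ t| ≤ ∫ t in Set.Ioc (0:ℝ) x, |ψ t| := by
        simpa [Real.norm_eq_abs] using
          norm_integral_le_integral_norm (μ := volume.restrict (Set.Ioc (0:ℝ) x)) ψ
      rw [Real.sqrt_eq_rpow, Real.sqrt_eq_rpow]
      exact h1.trans hcs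
    -- combine
    calc |ν x * ∫ t in Set.Ioc (0:ℝ) x, ψ t|
        = ν x * |∫ t in Set.Ioc (0:ℝ) x, ψ t| := by
          rw [abs_mul, abs_of_nonneg hνx]
      _ ≤ ν x * (Real.sqrt (∫ t in Set.Ioc (0:ℝ) x, ψ t ^ 2) * Real.sqrt x) :=
          mul_le_mul_of_nonneg_left hb hνx
      _ = (ν x * Real.sqrt x) * Real.sqrt (∫ t in Set.Ioc (0:ℝ) x, ψ t ^ 2) := by
          ring
      _ ≤ Real.sqrt (∫ t in Set.Ioc (0:ℝ) x, ν t ^ 2) *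
          Real.sqrt (∫ t in Set.Ioc (0:ℝ) x, ψ t ^ 2) :=
          mul_le_mul_of_nonneg_right ha (Real.sqrt_nonneg _)
  -- limits
  have hA := tendsto_setIntegral_Ioc_zero_aux (fun t => ν t ^ 2) hν_L2
  have hB := tendsto_setIntegral_Ioc_zero_aux (fun t => ψ t ^ 2)
    (hψ_L2.mono_set (fun t ht => ht.1))
  have hsqrt : Filter.Tendsto Real.sqrt (nhds 0) (nhds 0) := by
    simpa using (Real.continuous_sqrt.tendsto 0).congr (fun _ => rfl) |>.mono_right
      (by rw [Real.sqrt_zero])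
  have hg : Filter.Tendsto
      (fun x => Real.sqrt (∫ t in Set.Ioc (0:ℝ) x, ν t ^ 2) *
        Real.sqrt (∫ t in Set.Ioc (0:ℝ) x, ψ t ^ 2))
      (nhdsWithin 0 (Set.Ioi 0)) (nhds 0) := by
    have h1 := (hsqrt.comp hA).mul (hsqrt.comp hB)
    simpa using h1
  apply squeeze_zero_norm' _ hg
  filter_upwards [Ioo_mem_nhdsGT_of_mem (by norm_num : (0:ℝ) ∈ Set.Ico 0 1)] with x hx
  simpa only [Real.norm_eq_abs] using key x hx
end

section
/- Assume ∫₀¹ ν₊(x)² dx = ∞. Let ψ : (0,∞) → ℝ be differentiable with ∫₀^∞ ψ(x)² dx < ∞, and suppose the function x ↦ c(x)ψ'(x) is differentiable on (0,∞) with (c(x)ψ'(x))' = ψ(x) for every x > 0. Then ψ(x) = 0 for all x > 0. -/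
open MeasureTheory Filter Set Topology

private lemma key_aux (c : ℝ → ℝ)
    (hc_cont : ContinuousOn c (Set.Ioi 0))
    (hc_pos : ∀ x > (0:ℝ), 0 < c x)
    (hν : ∫⁻ x in Set.Ioc (0:ℝ) 1,
      ENNReal.ofReal ((∫ s in x..1, (c s)⁻¹) ^ 2) = ⊤)
    (ψ : ℝ → ℝ)
    (hψ_diff : ∀ x > (0:ℝ), DifferentiableAt ℝ ψ x)
    (hψ_L2 : MeasureTheory.IntegrableOn (fun x => (ψ x) ^ 2) (Set.Ioi 0))
    (hode : ∀ x > (0:ℝ), HasDerivAt (fun y => c y * deriv ψ y) (ψ x) x)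
    (x₁ : ℝ) (hx₁ : 0 < x₁) (hpos : 0 < ψ x₁) : False := by
  obtain ⟨ν, hνdef⟩ : ∃ ν : ℝ → ℝ, ∀ x, ν x = ∫ s in x..1, (c s)⁻¹ := ⟨_, fun _ => rfl⟩
  obtain ⟨f, hfdef⟩ : ∃ f : ℝ → ℝ, ∀ y, f y = c y * deriv ψ y := ⟨_, fun _ => rfl⟩
  have hffun : f = fun y => c y * deriv ψ y := funext hfdef
  have hν' : ∫⁻ x in Set.Ioc (0:ℝ) 1, ENNReal.ofReal ((ν x) ^ 2) = ⊤ := by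
    simp only [hνdef]; exact hν
  have hode' : ∀ x > (0:ℝ), HasDerivAt f (ψ x) x := by
    intro x hx; rw [hffun]; exact hode x hx
  have hcont_ψ : ContinuousOn ψ (Ioi 0) :=
    fun x hx => ((hψ_diff x hx).continuousAt).continuousWithinAt
  have hf_cont : ContinuousOn f (Ioi 0) :=
    fun x hx => ((hode' x hx).differentiableAt.continuousAt).continuousWithinAt
  have hcne : ∀ x ∈ Ioi (0:ℝ), c x ≠ 0 := fun x hx => (hc_pos x hx).ne'
  have hcinv_cont : ContinuousOn (fun s => (c s)⁻¹) (Ioi 0) := hc_cont.inv₀ hcne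
  have huIcc_sub : ∀ a b : ℝ, 0 < a → 0 < b → uIcc a b ⊆ Ioi 0 := by
    intro a b ha hb t ht
    rw [uIcc] at ht
    exact lt_of_lt_of_le (lt_inf_iff.mpr ⟨ha, hb⟩) ht.1
  have hintc : ∀ a b : ℝ, 0 < a → 0 < b →
      IntervalIntegrable (fun s => (c s)⁻¹) volume a b := fun a b ha hb =>
    (hcinv_cont.mono (huIcc_sub a b ha hb)).intervalIntegrable
  have hintψ : ∀ a b : ℝ, 0 < a → 0 < b → IntervalIntegrable ψ volume a b := fun a b ha hb =>
    (hcont_ψ.mono (huIcc_sub a b ha hb)).intervalIntegrable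
  have hψ'_eq : ∀ x ∈ Ioi (0:ℝ), deriv ψ x = f x / c x := by
    intro x hx
    rw [hfdef x, mul_div_cancel_left₀ _ (hcne x hx)]
  have hψ'_cont : ContinuousOn (deriv ψ) (Ioi 0) := by
    have h : ContinuousOn (fun x => f x / c x) (Ioi 0) := hf_cont.div hc_cont hcne
    exact h.congr (fun x hx => hψ'_eq x hx)
  have hintψ' : ∀ a b : ℝ, 0 < a → 0 < b → IntervalIntegrable (deriv ψ) volume a b :=
    fun a b ha hb => (hψ'_cont.mono (huIcc_sub a b ha hb)).intervalIntegrable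
  -- the energy function E = (cψ')ψ
  obtain ⟨E, hEdef⟩ : ∃ E : ℝ → ℝ, ∀ y, E y = f y * ψ y := ⟨_, fun _ => rfl⟩
  have hEfun : E = fun y => f y * ψ y := funext hEdef
  have hE_deriv : ∀ x ∈ Ioi (0:ℝ),
      HasDerivAt E (ψ x * ψ x + f x * deriv ψ x) x := by
    intro x hx
    rw [hEfun]
    exact (hode' x hx).mul (hψ_diff x hx).hasDerivAt
  have hE_cont : ContinuousOn E (Ioi 0) := by
    rw [hEfun]; exact hf_cont.mul hcont_ψ
  have hE_deriv_nonneg : ∀ x ∈ Ioi (0:ℝ), 0 ≤ ψ x * ψ x + f x * deriv ψ x := by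
    intro x hx
    rw [hfdef x]
    nlinarith [mul_nonneg (hc_pos x hx).le (mul_self_nonneg (deriv ψ x)),
      mul_self_nonneg (ψ x)]
  have hE_mono : MonotoneOn E (Ioi 0) := by
    apply monotoneOn_of_deriv_nonneg (convex_Ioi 0) hE_cont
    · intro x hx
      rw [interior_Ioi] at hx
      exact (hE_deriv x hx).differentiableAt.differentiableWithinAt
    · intro x hx
      rw [interior_Ioi] at hx
      rw [(hE_deriv x hx).deriv]
      exact hE_deriv_nonneg x hx
  -- E ≤ 0 everywhere
  have hE_nonpos : ∀ x ∈ Ioi (0:ℝ), E x ≤ 0 := by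
    by_contra h
    push_neg at h
    obtain ⟨x₀, hx₀, hE0⟩ := h
    have hψx₀ : ψ x₀ ≠ 0 := by
      intro h0
      rw [hEdef x₀, h0, mul_zero] at hE0
      exact lt_irrefl 0 hE0
    have hIci : Ici x₀ ⊆ Ioi (0:ℝ) := fun t ht => mem_Ioi.mpr (lt_of_lt_of_le (mem_Ioi.mp hx₀) ht)
    have hψψ'_pos : ∀ x ∈ Ioi x₀, 0 < ψ x * deriv ψ x := by
      intro x hx
      have hxpos : x ∈ Ioi (0:ℝ) := lt_trans hx₀ (mem_Ioi.mp hx)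
      have hEx : E x₀ ≤ E x := hE_mono hx₀ hxpos (le_of_lt hx)
      have h1 : 0 < E x := lt_of_lt_of_le hE0 hEx
      rw [hEdef x, hfdef x] at h1
      have hcx := hc_pos x hxpos
      by_contra hcon
      push_neg at hcon
      have h2 : c x * (ψ x * deriv ψ x) ≤ 0 :=
        mul_nonpos_of_nonneg_of_nonpos hcx.le hcon
      nlinarith
    have hsq_mono : MonotoneOn (fun x => ψ x ^ 2) (Ici x₀) := by
      apply monotoneOn_of_deriv_nonneg (convex_Ici x₀)
        ((hcont_ψ.mono hIci).pow 2)
      · intro x hx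
        rw [interior_Ici] at hx
        exact ((hψ_diff x (lt_trans hx₀ hx)).pow 2).differentiableWithinAt
      · intro x hx
        rw [interior_Ici] at hx
        rw [((hψ_diff x (lt_trans hx₀ hx)).hasDerivAt.pow 2).deriv]
        have h3 := hψψ'_pos x hx
        norm_num
        nlinarith
    have hlb : ∀ x ∈ Ici x₀, ψ x₀ ^ 2 ≤ ψ x ^ 2 :=
      fun x hx => hsq_mono (self_mem_Ici) hx hx
    have hconst : Integrable (fun _ : ℝ => ψ x₀ ^ 2) (volume.restrict (Ici x₀)) := by
      apply Integrable.mono' (hψ_L2.mono_set hIci)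
        aestronglyMeasurable_const
      refine Filter.eventually_of_mem (self_mem_ae_restrict measurableSet_Ici) ?_
      intro x hx
      rw [Real.norm_eq_abs, abs_of_nonneg (sq_nonneg _)]
      exact hlb x hx
    rw [integrable_const_iff] at hconst
    rcases hconst with h0 | hfin
    · exact hψx₀ (sq_eq_zero_iff.mp h0)
    · have hfin : volume.restrict (Ici x₀) univ < ⊤ := measure_lt_top _ _
      rw [Measure.restrict_apply_univ, Real.volume_Ici] at hfin
      exact absurd hfin (lt_irrefl _)
  -- ψ² is nonincreasing on (0,∞)
  have hψψ'_nonpos : ∀ x ∈ Ioi (0:ℝ), ψ x * deriv ψ x ≤ 0 := by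
    intro x hx
    have h := hE_nonpos x hx
    rw [hEdef x, hfdef x] at h
    have hcx := hc_pos x hx
    by_contra hcon
    push_neg at hcon
    have h2 : 0 < c x * (ψ x * deriv ψ x) := mul_pos hcx hcon
    nlinarith
  have hsq_anti : AntitoneOn (fun x => ψ x ^ 2) (Ioi 0) := by
    apply antitoneOn_of_deriv_nonpos (convex_Ioi 0) (hcont_ψ.pow 2)
    · intro x hx
      rw [interior_Ioi] at hx
      exact ((hψ_diff x hx).pow 2).differentiableWithinAt
    · intro x hx
      rw [interior_Ioi] at hx
      rw [((hψ_diff x hx).hasDerivAt.pow 2).deriv]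
      have h3 := hψψ'_nonpos x hx
      norm_num
      nlinarith
  -- ψ ≥ ψ x₁ > 0 on (0, x₁]
  have hψ_pos : ∀ x ∈ Ioc (0:ℝ) x₁, 0 < ψ x := by
    intro x hx
    have hsq : ψ x₁ ^ 2 ≤ ψ x ^ 2 := hsq_anti hx.1 hx₁ hx.2
    by_contra h
    push_neg at h
    have hxlt : ψ x < 0 := by
      rcases lt_or_eq_of_le h with h' | h'
      · exact h'
      · nlinarith
    have hsub : Icc x x₁ ⊆ Ioi (0:ℝ) := fun t ht => lt_of_lt_of_le hx.1 ht.1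
    obtain ⟨z, hz, hz0⟩ := intermediate_value_Icc hx.2 (hcont_ψ.mono hsub)
      (show (0:ℝ) ∈ Icc (ψ x) (ψ x₁) from ⟨hxlt.le, hpos.le⟩)
    have hzz : ψ x₁ ^ 2 ≤ ψ z ^ 2 :=
      hsq_anti (lt_of_lt_of_le hx.1 hz.1) hx₁ hz.2
    rw [hz0] at hzz
    nlinarith
  have hψ_lb : ∀ x ∈ Ioc (0:ℝ) x₁, ψ x₁ ≤ ψ x := by
    intro x hx
    have h1 : ψ x₁ ^ 2 ≤ ψ x ^ 2 := hsq_anti hx.1 hx₁ hx.2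
    have h2 := hψ_pos x hx
    nlinarith
  -- f x₁ ≤ 0
  have hf_x₁ : f x₁ ≤ 0 := by
    have h := hE_nonpos x₁ hx₁
    rw [hEdef x₁] at h
    by_contra hcon
    push_neg at hcon
    nlinarith [mul_pos hcon hpos]
  -- upper bound on f on (0, x₁)
  have hf_ub : ∀ x ∈ Ioo (0:ℝ) x₁, f x ≤ -(ψ x₁ * (x₁ - x)) := by
    intro x hx
    have hftc : ∫ t in x..x₁, ψ t = f x₁ - f x := by
      apply intervalIntegral.integral_eq_sub_of_hasDerivAt
      · intro t ht
        have ht' : t ∈ Icc x x₁ := by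
          rwa [uIcc_of_le hx.2.le] at ht
        exact hode' t (lt_of_lt_of_le hx.1 ht'.1)
      · exact hintψ x x₁ hx.1 hx₁
    have hlow : ψ x₁ * (x₁ - x) ≤ ∫ t in x..x₁, ψ t := by
      have h := intervalIntegral.integral_mono_on hx.2.le
        (intervalIntegrable_const (c := ψ x₁)) (hintψ x x₁ hx.1 hx₁)
        (fun t ht => hψ_lb t ⟨lt_of_lt_of_le hx.1 ht.1, ht.2⟩)
      rwa [intervalIntegral.integral_const, smul_eq_mul, mul_comm] at h
    linarith [hftc ▸ hlow, hf_x₁]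
  obtain ⟨m, hmdef⟩ : ∃ m : ℝ, m = x₁ / 2 := ⟨_, rfl⟩
  have hm_pos : 0 < m := by rw [hmdef]; positivity
  have hm_lt : m < x₁ := by rw [hmdef]; linarith
  obtain ⟨A, hAdef⟩ : ∃ A : ℝ, A = ψ x₁ * m := ⟨_, rfl⟩
  have hA : 0 < A := by rw [hAdef]; exact mul_pos hpos hm_pos
  have hf_ub' : ∀ s ∈ Ioc (0:ℝ) m, f s ≤ -A := by
    intro s hs
    have h1 : f s ≤ -(ψ x₁ * (x₁ - s)) := hf_ub s ⟨hs.1, lt_of_le_of_lt hs.2 hm_lt⟩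
    have h2 : m ≤ x₁ - s := by rw [hmdef] at hs ⊢; linarith [hs.2]
    nlinarith [hpos]
  -- lower bound ψ x ≥ A ν x - B on (0, m)
  obtain ⟨B, hBdef⟩ : ∃ B : ℝ, B = A * ν m := ⟨_, rfl⟩
  have hψm : 0 < ψ m := hψ_pos m ⟨hm_pos, hm_lt.le⟩
  have hψ_lb2 : ∀ x ∈ Ioo (0:ℝ) m, A * ν x - B ≤ ψ x := by
    intro x hx
    have hftc : ∫ t in x..m, deriv ψ t = ψ m - ψ x := by
      apply intervalIntegral.integral_eq_sub_of_hasDerivAt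
      · intro t ht
        have ht' : t ∈ Icc x m := by rwa [uIcc_of_le hx.2.le] at ht
        exact (hψ_diff t (lt_of_lt_of_le hx.1 ht'.1)).hasDerivAt
      · exact hintψ' x m hx.1 hm_pos
    have hbound : ∫ t in x..m, deriv ψ t ≤ ∫ t in x..m, -A * (c t)⁻¹ := by
      apply intervalIntegral.integral_mono_on hx.2.le (hintψ' x m hx.1 hm_pos)
        ((hintc x m hx.1 hm_pos).const_mul (-A))
      intro t ht
      have htpos : 0 < t := lt_of_lt_of_le hx.1 ht.1
      have hct := hc_pos t htpos
      have hft : f t ≤ -A := hf_ub' t ⟨htpos, ht.2⟩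
      rw [hψ'_eq t htpos, div_le_iff₀ hct]
      calc f t ≤ -A := hft
        _ = (-A * (c t)⁻¹) * c t := by field_simp
    have hconst : ∫ t in x..m, -A * (c t)⁻¹ = -A * ∫ t in x..m, (c t)⁻¹ :=
      intervalIntegral.integral_const_mul _ _
    have hsplit : (∫ t in x..m, (c t)⁻¹) = ν x - ν m := by
      have hadd := intervalIntegral.integral_add_adjacent_intervals
        (hintc x m hx.1 hm_pos) (hintc m 1 hm_pos one_pos)
      rw [hνdef x, hνdef m]
      linarith [hadd]
    rw [hftc, hconst, hsplit] at hbound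
    linarith [hbound, hBdef, hψm]
  -- ν is antitone on positive reals and nonneg on (0,1]
  have hν_anti : ∀ x y : ℝ, 0 < x → x ≤ y → ν y ≤ ν x := by
    intro x y hx hxy
    have hy : 0 < y := lt_of_lt_of_le hx hxy
    have hadd := intervalIntegral.integral_add_adjacent_intervals
      (hintc x y hx hy) (hintc y 1 hy one_pos)
    have hnn : 0 ≤ ∫ t in x..y, (c t)⁻¹ := by
      apply intervalIntegral.integral_nonneg hxy
      intro u hu
      exact (inv_pos.mpr (hc_pos u (lt_of_lt_of_le hx hu.1))).le
    rw [hνdef x, hνdef y]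
    linarith
  have hν_nonneg : ∀ x : ℝ, 0 < x → x ≤ 1 → 0 ≤ ν x := by
    intro x hx hx1
    rw [hνdef x]
    apply intervalIntegral.integral_nonneg hx1
    intro u hu
    exact (inv_pos.mpr (hc_pos u (lt_of_lt_of_le hx hu.1))).le
  -- ν is continuous on (0,∞)
  have hν_cont : ContinuousOn ν (Ioi 0) := by
    intro x₀ hx₀
    suffices h : ContinuousAt ν x₀ from h.continuousWithinAt
    have ha : (0:ℝ) < x₀ / 2 := by
      have : (0:ℝ) < x₀ := hx₀
      linarith
    have hprim : HasDerivAt (fun u => ∫ t in (x₀/2)..u, (c t)⁻¹) ((c x₀)⁻¹) x₀ := by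
      apply intervalIntegral.integral_hasDerivAt_right (hintc _ _ ha hx₀)
      · exact ContinuousOn.stronglyMeasurableAtFilter isOpen_Ioi hcinv_cont x₀ hx₀
      · exact hcinv_cont.continuousAt (isOpen_Ioi.mem_nhds hx₀)
    have hcont2 : ContinuousAt
        (fun u => (∫ t in (x₀/2)..1, (c t)⁻¹) - ∫ t in (x₀/2)..u, (c t)⁻¹) x₀ :=
      continuousAt_const.sub hprim.continuousAt
    apply hcont2.congr
    filter_upwards [isOpen_Ioi.mem_nhds hx₀] with u hu
    have hadd := intervalIntegral.integral_add_adjacent_intervals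
      (hintc (x₀/2) u ha hu) (hintc u 1 hu one_pos)
    rw [hνdef u]
    linarith
  -- ν is unbounded near 0
  obtain ⟨K, hKdef⟩ : ∃ K : ℝ, K = max (2 * B / A) 0 + 1 := ⟨_, rfl⟩
  have hK_pos : 0 < K := by
    rw [hKdef]
    have h := le_max_right (2 * B / A) (0:ℝ)
    linarith
  obtain ⟨m₀, hm₀def⟩ : ∃ m₀ : ℝ, m₀ = min (m / 2) 1 := ⟨_, rfl⟩
  have hm₀_pos : 0 < m₀ := by
    rw [hm₀def]; exact lt_min (by linarith) one_pos
  have hm₀_le1 : m₀ ≤ 1 := by rw [hm₀def]; exact min_le_right _ _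
  have hm₀_ltm : m₀ < m := by
    rw [hm₀def]; exact lt_of_le_of_lt (min_le_left _ _) (by linarith)
  obtain ⟨ε, hε_pos, hε_le, hε_K⟩ : ∃ ε : ℝ, 0 < ε ∧ ε ≤ m₀ ∧ K ≤ ν ε := by
    by_contra h
    push_neg at h
    have hbd : ∀ x ∈ Ioc (0:ℝ) 1, ν x < K := by
      intro x hx
      rcases le_or_gt x m₀ with hle | hgt
      · exact h x hx.1 hle
      · calc ν x ≤ ν m₀ := hν_anti m₀ x hm₀_pos hgt.le
          _ < K := h m₀ hm₀_pos le_rfl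
    have hfin : (∫⁻ x in Set.Ioc (0:ℝ) 1, ENNReal.ofReal ((ν x) ^ 2)) ≤
        ENNReal.ofReal (K ^ 2) * volume (Ioc (0:ℝ) 1) := by
      rw [← setLIntegral_const]
      apply lintegral_mono_ae
      refine Filter.eventually_of_mem (self_mem_ae_restrict measurableSet_Ioc) ?_
      intro x hx
      apply ENNReal.ofReal_le_ofReal
      have h1 := hν_nonneg x hx.1 hx.2
      have h2 := hbd x hx
      nlinarith [mul_self_le_mul_self h1 h2.le]
    rw [hν'] at hfin
    have hvol : volume (Ioc (0:ℝ) 1) = 1 := by simp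
    rw [hvol, mul_one] at hfin
    exact absurd (top_le_iff.mp hfin) ENNReal.ofReal_ne_top
  have hε_le1 : ε ≤ 1 := le_trans hε_le hm₀_le1
  have hε_ltm : ε < m := lt_of_le_of_lt hε_le hm₀_ltm
  -- on (0, ε]: ψ x ≥ (A/2) ν x ≥ 0
  have hψ_big : ∀ x ∈ Ioc (0:ℝ) ε, (A / 2) * ν x ≤ ψ x ∧ 0 ≤ (A / 2) * ν x := by
    intro x hx
    have hνx : K ≤ ν x := le_trans hε_K (hν_anti x ε hx.1 hx.2)
    have hνx_pos : 0 < ν x := lt_of_lt_of_le hK_pos hνx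
    have hlb2 := hψ_lb2 x ⟨hx.1, lt_of_le_of_lt hx.2 hε_ltm⟩
    have hB_le : B ≤ (A / 2) * ν x := by
      have h2BA : 2 * B / A ≤ K - 1 := by
        rw [hKdef]
        have h := le_max_left (2 * B / A) (0:ℝ)
        linarith
      have h2B : 2 * B ≤ A * (K - 1) := by
        rw [div_le_iff₀ hA] at h2BA; linarith
      have hK1 : K - 1 ≤ ν x := by linarith
      nlinarith [mul_le_mul_of_nonneg_left hK1 hA.le]
    refine ⟨by linarith, ?_⟩
    exact mul_nonneg (by linarith) hνx_pos.le
  -- ∫ ν² over (0, ε] is infinite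
  have hν_eps_inf : (∫⁻ x in Set.Ioc (0:ℝ) ε, ENNReal.ofReal ((ν x) ^ 2)) = ⊤ := by
    have hsplit : Ioc (0:ℝ) ε ∪ Ioc ε 1 = Ioc (0:ℝ) 1 :=
      Ioc_union_Ioc_eq_Ioc hε_pos.le hε_le1
    have hdisj : Disjoint (Ioc (0:ℝ) ε) (Ioc ε 1) := Set.disjoint_left.mpr fun t h1 h2 => absurd h2.1 (not_lt.mpr h1.2)
    have hsum : (∫⁻ x in Set.Ioc (0:ℝ) ε, ENNReal.ofReal ((ν x) ^ 2)) +
        (∫⁻ x in Set.Ioc ε 1, ENNReal.ofReal ((ν x) ^ 2)) = ⊤ := by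
      rw [← lintegral_union measurableSet_Ioc hdisj, hsplit]
      exact hν'
    have htail : (∫⁻ x in Set.Ioc ε 1, ENNReal.ofReal ((ν x) ^ 2)) ≤
        ENNReal.ofReal ((ν ε) ^ 2) * volume (Ioc ε 1) := by
      rw [← setLIntegral_const]
      apply lintegral_mono_ae
      refine Filter.eventually_of_mem (self_mem_ae_restrict measurableSet_Ioc) ?_
      intro x hx
      apply ENNReal.ofReal_le_ofReal
      have h1 := hν_nonneg x (lt_trans hε_pos hx.1) hx.2
      have h2 := hν_anti ε x hε_pos hx.1.le
      nlinarith [mul_self_le_mul_self h1 h2]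
    have htail_lt : (∫⁻ x in Set.Ioc ε 1, ENNReal.ofReal ((ν x) ^ 2)) < ⊤ :=
      lt_of_le_of_lt htail (ENNReal.mul_lt_top ENNReal.ofReal_lt_top measure_Ioc_lt_top)
    rcases ENNReal.add_eq_top.mp hsum with h | h
    · exact h
    · exact absurd h htail_lt.ne
  -- but (A/2 ν)² is integrable on (0, ε]: contradiction
  have hIocsub : Ioc (0:ℝ) ε ⊆ Ioi 0 := fun t ht => ht.1
  have hint2 : Integrable (fun x => ((A / 2) * ν x) ^ 2)
      (volume.restrict (Ioc (0:ℝ) ε)) := by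
    apply Integrable.mono' (hψ_L2.mono_set hIocsub)
    · apply ContinuousOn.aestronglyMeasurable _ measurableSet_Ioc
      exact ((continuousOn_const.mul (hν_cont.mono hIocsub)).pow 2)
    · refine Filter.eventually_of_mem (self_mem_ae_restrict measurableSet_Ioc) ?_
      intro x hx
      rw [Real.norm_eq_abs, abs_of_nonneg (sq_nonneg _)]
      obtain ⟨h1, h2⟩ := hψ_big x hx
      nlinarith [mul_self_le_mul_self h2 h1]
  have hlt := hint2.lintegral_lt_top
  have heq2 : (∫⁻ x in Set.Ioc (0:ℝ) ε, ENNReal.ofReal (((A / 2) * ν x) ^ 2)) =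
      ENNReal.ofReal ((A / 2) ^ 2) * ∫⁻ x in Set.Ioc (0:ℝ) ε, ENNReal.ofReal ((ν x) ^ 2) := by
    rw [← lintegral_const_mul' _ _ ENNReal.ofReal_ne_top]
    congr 1
    funext x
    rw [← ENNReal.ofReal_mul (by positivity)]
    congr 1
    ring
  have hne0 : ENNReal.ofReal ((A / 2) ^ 2) ≠ 0 := by
    simp only [ne_eq, ENNReal.ofReal_eq_zero, not_le]
    positivity
  rw [heq2, hν_eps_inf, ENNReal.mul_top hne0] at hlt
  exact absurd hlt (lt_irrefl ⊤)

/-- Paper: core of the proof of Proposition 2.1(i). If ν₊ ∉ L²(0,1) then the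
only L²-solution of (cψ')' = ψ on (0,∞) is ψ = 0. -/
theorem stmt_7 (c : ℝ → ℝ)
    (hc_cont : ContinuousOn c (Set.Ioi 0))
    (hc_pos : ∀ x > (0:ℝ), 0 < c x)
    (hν : ∫⁻ x in Set.Ioc (0:ℝ) 1,
      ENNReal.ofReal ((∫ s in x..1, (c s)⁻¹) ^ 2) = ⊤)
    (ψ : ℝ → ℝ)
    (hψ_diff : ∀ x > (0:ℝ), DifferentiableAt ℝ ψ x)
    (hψ_L2 : MeasureTheory.IntegrableOn (fun x => (ψ x) ^ 2) (Set.Ioi 0))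
    (hode : ∀ x > (0:ℝ), HasDerivAt (fun y => c y * deriv ψ y) (ψ x) x) :
    ∀ x > (0:ℝ), ψ x = 0 := by
  intro x hx
  by_contra hne
  rcases lt_or_gt_of_ne hne with hneg | hpos
  · -- apply key_aux to -ψ
    have hψ_diff' : ∀ y > (0:ℝ), DifferentiableAt ℝ (fun z => -ψ z) y :=
      fun y hy => (hψ_diff y hy).neg
    have hψ_L2' : MeasureTheory.IntegrableOn (fun y => ((fun z => -ψ z) y) ^ 2) (Set.Ioi 0) := by
      simpa using hψ_L2
    have hode' : ∀ y > (0:ℝ),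
        HasDerivAt (fun w => c w * deriv (fun z => -ψ z) w) (-ψ y) y := by
      intro y hy
      have heq : (fun w => c w * deriv (fun z => -ψ z) w) =
          fun w => -(c w * deriv ψ w) := by
        funext w
        rw [deriv.fun_neg]
        ring
      rw [heq]
      exact (hode y hy).neg
    exact key_aux c hc_cont hc_pos hν (fun z => -ψ z) hψ_diff' hψ_L2' hode'
      x hx (by simpa using hneg)
  · exact key_aux c hc_cont hc_pos hν ψ hψ_diff hψ_L2 hode x hx hpos
end

section
/- Assume ∫₀¹ ν₊(x)² dx < ∞. Let Φ : (0,∞) → ℝ be differentiable with ∫₀^∞ Φ(x)² dx < ∞, and suppose x ↦ c(x)Φ'(x) is differentiable on (0,∞) with derivative g satisfying ∫₀^∞ g(x)² dx < ∞. Then the limit b := lim_{x→0⁺} c(x)Φ'(x) exists (as a real number), and the limit lim_{x→0⁺} (Φ(x) + b·ν₊(x)) also exists as a real number. -/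
open MeasureTheory Filter Set Topology
open scoped ENNReal NNReal

lemma tendsto_primitive_aux {h : ℝ → ℝ} (hint : IntegrableOn h (Set.Ioc 0 1)) :
    Tendsto (fun x => ∫ s in x..1, h s) (𝓝[>] (0:ℝ))
      (𝓝 (∫ s in (0:ℝ)..(1:ℝ), h s)) := by
  have hu : IntegrableOn h (Set.uIcc (0:ℝ) 1) := by
    rw [Set.uIcc_of_le (by norm_num : (0:ℝ) ≤ 1),
      integrableOn_Icc_iff_integrableOn_Ioc]
    exact hint
  have hcont := intervalIntegral.continuousOn_primitive_interval_left (a := 0) (b := 1)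
    (μ := volume) hu
  have h0 : (0:ℝ) ∈ Set.uIcc (0:ℝ) 1 := by
    rw [Set.uIcc_of_le (by norm_num : (0:ℝ) ≤ 1)]; exact ⟨le_refl _, zero_le_one⟩
  refine (hcont 0 h0).tendsto.mono_left ?_
  rw [Set.uIcc_of_le (by norm_num : (0:ℝ) ≤ 1)]
  rw [← nhdsWithin_Ioc_eq_nhdsGT (zero_lt_one : (0:ℝ) < 1)]
  exact nhdsWithin_mono _ Set.Ioc_subset_Icc_self

/-- Paper: analytic content of Proposition 2.7. If ν₊ ∈ L²(0,1) and Φ lies in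
the domain of H₊*, then b := (cΦ')(0⁺) exists and Φ(x) + b·ν₊(x) has a finite
limit as x → 0⁺. -/
theorem stmt_8 (c : ℝ → ℝ)
    (hc_cont : ContinuousOn c (Set.Ioi 0))
    (hc_pos : ∀ x > (0:ℝ), 0 < c x)
    (hν_L2 : MeasureTheory.IntegrableOn
      (fun x => (∫ s in x..1, (c s)⁻¹) ^ 2) (Set.Ioc 0 1))
    (Φ g : ℝ → ℝ)
    (hΦ_diff : ∀ x > (0:ℝ), DifferentiableAt ℝ Φ x)
    (hΦ_L2 : MeasureTheory.IntegrableOn (fun x => (Φ x) ^ 2) (Set.Ioi 0))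
    (hg : ∀ x > (0:ℝ), HasDerivAt (fun y => c y * deriv Φ y) (g x) x)
    (hg_L2 : MeasureTheory.IntegrableOn (fun x => (g x) ^ 2) (Set.Ioi 0)) :
    ∃ b : ℝ,
      Filter.Tendsto (fun x => c x * deriv Φ x)
        (nhdsWithin 0 (Set.Ioi 0)) (nhds b) ∧
      ∃ a : ℝ,
        Filter.Tendsto (fun x => Φ x + b * ∫ s in x..1, (c s)⁻¹)
          (nhdsWithin 0 (Set.Ioi 0)) (nhds a) := by
  set F : ℝ → ℝ := fun y => c y * deriv Φ y with hFdef
  have hc_ne : ∀ x ∈ Set.Ioi (0:ℝ), c x ≠ 0 := fun x hx => (hc_pos x hx).ne'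
  -- measurability of g
  have hg_meas : AEStronglyMeasurable g (volume.restrict (Set.Ioi 0)) := by
    refine (measurable_deriv F).aestronglyMeasurable.congr ?_
    exact ae_restrict_of_forall_mem measurableSet_Ioi (fun x hx => (hg x hx).deriv)
  have hg_meas1 : AEStronglyMeasurable g (volume.restrict (Set.Ioc 0 1)) :=
    hg_meas.mono_measure (Measure.restrict_mono Set.Ioc_subset_Ioi_self le_rfl)
  -- g is integrable on (0,1]
  have hg_int : IntegrableOn g (Set.Ioc 0 1) := by
    have h1 : IntegrableOn (fun x => g x ^ 2 + 1) (Set.Ioc 0 1) := by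
      refine (hg_L2.mono_set Set.Ioc_subset_Ioi_self).add ?_
      exact integrableOn_const measure_Ioc_lt_top.ne
    refine h1.mono' hg_meas1 (ae_of_all _ fun x => ?_)
    rw [Real.norm_eq_abs]
    nlinarith [sq_nonneg (|g x| - 1), abs_nonneg (g x), sq_abs (g x)]
  have hg_ii : ∀ x ∈ Set.Ioc (0:ℝ) 1, IntervalIntegrable g volume x 1 := by
    intro x hx
    rw [intervalIntegrable_iff_integrableOn_Ioc_of_le hx.2]
    exact hg_int.mono_set (Set.Ioc_subset_Ioc_left hx.1.le)
  have hg_ii0 : ∀ x ∈ Set.Ioc (0:ℝ) 1, IntervalIntegrable g volume 0 x := by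
    intro x hx
    rw [intervalIntegrable_iff_integrableOn_Ioc_of_le hx.1.le]
    exact hg_int.mono_set (Set.Ioc_subset_Ioc_right hx.2)
  -- FTC for F
  have hFtc : ∀ x ∈ Set.Ioc (0:ℝ) 1, (∫ s in x..1, g s) = F 1 - F x := by
    intro x hx
    refine intervalIntegral.integral_eq_sub_of_hasDerivAt ?_ (hg_ii x hx)
    intro t ht
    rw [Set.uIcc_of_le hx.2] at ht
    exact hg t (lt_of_lt_of_le hx.1 ht.1)
  set b : ℝ := F 1 - ∫ s in (0:ℝ)..1, g s with hbdef
  have hFt : Tendsto F (𝓝[>] (0:ℝ)) (𝓝 b) := by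
    have h1 : Tendsto (fun x => F 1 - ∫ s in x..1, g s) (𝓝[>] (0:ℝ)) (𝓝 b) :=
      tendsto_const_nhds.sub (tendsto_primitive_aux hg_int)
    refine h1.congr' ?_
    filter_upwards [Ioc_mem_nhdsGT_of_mem (⟨le_refl 0, zero_lt_one⟩ : (0:ℝ) ∈ Set.Ico 0 1)]
      with x hx
    have := hFtc x hx; linarith
  -- F s - b
  have hFb : ∀ s ∈ Set.Ioc (0:ℝ) 1, F s - b = ∫ t in Set.Ioc 0 s, g t := by
    intro s hs
    have hadd : (∫ t in (0:ℝ)..s, g t) + ∫ t in s..1, g t = ∫ t in (0:ℝ)..1, g t :=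
      intervalIntegral.integral_add_adjacent_intervals (hg_ii0 s hs) (hg_ii s hs)
    have h2 := hFtc s hs
    have h3 : F s - b = ∫ t in (0:ℝ)..s, g t := by rw [hbdef]; linarith
    rw [h3, intervalIntegral.integral_of_le hs.1.le]
  -- derivative of Φ
  have hdΦ : ∀ s ∈ Set.Ioi (0:ℝ), deriv Φ s = F s / c s := fun s hs =>
    (mul_div_cancel_left₀ (deriv Φ s) (hc_ne s hs)).symm
  have hF_cont : ContinuousOn F (Set.Ioi 0) := fun s hs =>
    ((hg s hs).differentiableAt.continuousAt).continuousWithinAt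
  have hFc_cont : ContinuousOn (fun s => F s / c s) (Set.Ioi 0) :=
    hF_cont.div hc_cont hc_ne
  -- FTC for Φ
  have hΦtc : ∀ x ∈ Set.Ioc (0:ℝ) 1, (∫ s in x..1, F s / c s) = Φ 1 - Φ x := by
    intro x hx
    refine intervalIntegral.integral_eq_sub_of_hasDerivAt ?_ ?_
    · intro t ht
      rw [Set.uIcc_of_le hx.2] at ht
      have ht0 : t ∈ Set.Ioi (0:ℝ) := lt_of_lt_of_le hx.1 ht.1
      have h4 := (hΦ_diff t ht0).hasDerivAt
      rwa [hdΦ t ht0] at h4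
    · apply ContinuousOn.intervalIntegrable
      refine hFc_cont.mono ?_
      rw [Set.uIcc_of_le hx.2]
      intro t ht; exact lt_of_lt_of_le hx.1 ht.1
  set h₀ : ℝ → ℝ := fun s => (F s - b) / c s with hh₀def
  set μ : Measure ℝ := volume.restrict (Set.Ioc 0 1) with hμdef
  have hIoc_sub : Set.Ioc (0:ℝ) 1 ⊆ Set.Ioi 0 := Set.Ioc_subset_Ioi_self
  have hcinv_cont : ContinuousOn (fun s => (c s)⁻¹) (Set.Ioc 0 1) :=
    (hc_cont.mono hIoc_sub).inv₀ (fun x hx => hc_ne x (hIoc_sub hx))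
  have hcinv_meas : AEMeasurable (fun s => (c s)⁻¹) μ :=
    hcinv_cont.aemeasurable measurableSet_Ioc
  have hF_meas : AEMeasurable F μ :=
    (hF_cont.mono hIoc_sub).aemeasurable measurableSet_Ioc
  have hh₀_meas : AEStronglyMeasurable h₀ μ := by
    have h5 : AEMeasurable h₀ μ := by
      simp only [hh₀def, div_eq_mul_inv]
      exact (hF_meas.sub aemeasurable_const).mul hcinv_meas
    exact h5.aestronglyMeasurable
  set G : ℝ → ℝ≥0∞ := fun t => ENNReal.ofReal |g t| with hGdef
  set C : ℝ → ℝ≥0∞ := fun s => ENNReal.ofReal (c s)⁻¹ with hCdef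
  have hG_meas : AEMeasurable G μ :=
    (ENNReal.measurable_ofReal.comp continuous_abs.measurable).comp_aemeasurable
      hg_meas1.aemeasurable
  have hC_meas : AEMeasurable C μ :=
    ENNReal.measurable_ofReal.comp_aemeasurable hcinv_meas
  set ν : ℝ → ℝ := fun t => ∫ u in Set.Ioc t 1, (c u)⁻¹ with hνdef
  have hcinv_intOn : ∀ t ∈ Set.Ioi (0:ℝ), IntegrableOn (fun u => (c u)⁻¹) (Set.Ioc t 1) := by
    intro t ht
    rcases le_or_gt t 1 with h1 | h1
    · refine (ContinuousOn.integrableOn_Icc ?_).mono_set Set.Ioc_subset_Icc_self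
      refine (hc_cont.inv₀ hc_ne).mono ?_
      intro u hu; exact lt_of_lt_of_le ht hu.1
    · rw [Set.Ioc_eq_empty (not_lt.2 h1.le)]
      simp
  have hcinv_nn : ∀ t ∈ Set.Ioi (0:ℝ),
      0 ≤ᵐ[volume.restrict (Set.Ioc t 1)] fun u => (c u)⁻¹ := by
    intro t ht
    exact ae_restrict_of_forall_mem measurableSet_Ioc
      fun u hu => inv_nonneg.2 (hc_pos u (lt_trans ht hu.1)).le
  have hν_anti : AntitoneOn ν (Set.Ioc 0 1) := by
    intro t1 ht1 t2 ht2 h12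
    exact setIntegral_mono_set (hcinv_intOn t1 ht1.1) (hcinv_nn t1 ht1.1)
      (HasSubset.Subset.eventuallyLE (Set.Ioc_subset_Ioc_left h12))
  set N : ℝ → ℝ≥0∞ := fun t => ENNReal.ofReal (ν t) with hNdef
  have hN_meas : AEMeasurable N μ :=
    ENNReal.measurable_ofReal.comp_aemeasurable
      (aemeasurable_restrict_of_antitoneOn measurableSet_Ioc hν_anti)
  have hν_nn : ∀ t ∈ Set.Ioc (0:ℝ) 1, 0 ≤ ν t := fun t ht =>
    setIntegral_nonneg measurableSet_Ioc
      fun u hu => inv_nonneg.2 (hc_pos u (lt_trans ht.1 hu.1)).le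
  have hν2_int : Integrable (fun t => ν t ^ 2) μ := by
    refine hν_L2.congr ?_
    refine ae_restrict_of_forall_mem measurableSet_Ioc fun t ht => ?_
    exact congrArg (· ^ 2) (intervalIntegral.integral_of_le ht.2)
  have hg2_int : Integrable (fun t => g t ^ 2) μ := hg_L2.mono_set hIoc_sub
  -- finiteness of the two L² factors
  have hGfin : ∫⁻ t, G t ^ (2:ℝ) ∂μ < ⊤ := by
    have h1 : ∀ t, G t ^ (2:ℝ) = ENNReal.ofReal (g t ^ 2) := by
      intro t
      rw [hGdef, show (2:ℝ) = ((2:ℕ):ℝ) by norm_num, ENNReal.rpow_natCast,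
        ← ENNReal.ofReal_pow (abs_nonneg _), sq_abs]
    calc ∫⁻ t, G t ^ (2:ℝ) ∂μ = ∫⁻ t, ENNReal.ofReal (g t ^ 2) ∂μ := by simp_rw [h1]
      _ = ENNReal.ofReal (∫ t, g t ^ 2 ∂μ) :=
        (ofReal_integral_eq_lintegral_ofReal hg2_int (ae_of_all _ fun t => sq_nonneg _)).symm
      _ < ⊤ := ENNReal.ofReal_lt_top
  have hNfin : ∫⁻ t, N t ^ (2:ℝ) ∂μ < ⊤ := by
    have h1 : ∫⁻ t, N t ^ (2:ℝ) ∂μ = ∫⁻ t, ENNReal.ofReal (ν t ^ 2) ∂μ := by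
      refine lintegral_congr_ae (ae_restrict_of_forall_mem measurableSet_Ioc fun t ht => ?_)
      show N t ^ (2:ℝ) = ENNReal.ofReal (ν t ^ 2)
      rw [show N t = ENNReal.ofReal (ν t) from rfl, show (2:ℝ) = ((2:ℕ):ℝ) by norm_num,
        ENNReal.rpow_natCast, ← ENNReal.ofReal_pow (hν_nn t ht)]
    rw [h1, ← ofReal_integral_eq_lintegral_ofReal hν2_int (ae_of_all _ fun t => sq_nonneg _)]
    exact ENNReal.ofReal_lt_top
  -- Cauchy-Schwarz
  have hCS : ∫⁻ t, G t * N t ∂μ < ⊤ := by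
    have hpq : Real.HolderConjugate 2 2 := Real.holderConjugate_iff.mpr ⟨one_lt_two, by norm_num⟩
    have h6 := ENNReal.lintegral_mul_le_Lp_mul_Lq μ hpq hG_meas hN_meas
    refine lt_of_le_of_lt h6 ?_
    exact ENNReal.mul_lt_top
      (ENNReal.rpow_lt_top_of_nonneg (by norm_num : (0:ℝ) ≤ 1/2) hGfin.ne)
      (ENNReal.rpow_lt_top_of_nonneg (by norm_num : (0:ℝ) ≤ 1/2) hNfin.ne)
  -- Tonelli / swap
  set f2 : ℝ → ℝ → ℝ≥0∞ := fun s t =>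
    C s * G t * Set.indicator {q : ℝ × ℝ | q.2 ≤ q.1} (fun _ => 1) (s, t) with hf2def
  have hS : MeasurableSet {q : ℝ × ℝ | q.2 ≤ q.1} :=
    measurableSet_le measurable_snd measurable_fst
  have huncurry : AEMeasurable (Function.uncurry f2) (μ.prod μ) := by
    refine (hC_meas.comp_fst.mul hG_meas.comp_snd).mul ?_
    exact (measurable_one.indicator hS).aemeasurable
  have hstep1 : ∀ s ∈ Set.Ioc (0:ℝ) 1,
      (∫⁻ t, f2 s t ∂μ) = (∫⁻ t in Set.Ioc 0 s, G t) * C s := by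
    intro s hs
    have e1 : ∀ t, f2 s t = C s * (Set.Iic s).indicator G t := by
      intro t
      simp only [hf2def, Set.indicator_apply, Set.mem_setOf_eq, Set.mem_Iic]
      by_cases h : t ≤ s <;> simp [h]
    have hIocIic : Set.Iic s ∩ Set.Ioc 0 1 = Set.Ioc 0 s := by
      ext t
      simp only [Set.mem_inter_iff, Set.mem_Iic, Set.mem_Ioc]
      constructor
      · rintro ⟨h1, h2, h3⟩; exact ⟨h2, h1⟩
      · rintro ⟨h1, h2⟩; exact ⟨h2, h1, h2.trans hs.2⟩
    calc (∫⁻ t, f2 s t ∂μ) = ∫⁻ t, C s * (Set.Iic s).indicator G t ∂μ := by simp_rw [e1]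
      _ = C s * ∫⁻ t, (Set.Iic s).indicator G t ∂μ :=
        lintegral_const_mul' _ _ ENNReal.ofReal_ne_top
      _ = C s * ∫⁻ t in Set.Iic s, G t ∂μ := by rw [lintegral_indicator measurableSet_Iic]
      _ = C s * ∫⁻ t in Set.Ioc 0 s, G t := by
        rw [hμdef, Measure.restrict_restrict measurableSet_Iic, hIocIic]
      _ = (∫⁻ t in Set.Ioc 0 s, G t) * C s := mul_comm _ _
  have hstep2 : ∀ t ∈ Set.Ioc (0:ℝ) 1, (∫⁻ s, f2 s t ∂μ) = G t * N t := by
    intro t ht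
    have e2 : ∀ s, f2 s t = G t * (Set.Ici t).indicator C s := by
      intro s
      simp only [hf2def, Set.indicator_apply, Set.mem_setOf_eq, Set.mem_Ici]
      by_cases h : t ≤ s <;> simp [h]
      ring
    have hIciIoc : Set.Ici t ∩ Set.Ioc 0 1 = Set.Icc t 1 := by
      ext s
      simp only [Set.mem_inter_iff, Set.mem_Ici, Set.mem_Ioc, Set.mem_Icc]
      constructor
      · rintro ⟨h1, h2, h3⟩; exact ⟨h1, h3⟩
      · rintro ⟨h1, h2⟩; exact ⟨h1, lt_of_lt_of_le ht.1 h1, h2⟩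
    calc (∫⁻ s, f2 s t ∂μ) = ∫⁻ s, G t * (Set.Ici t).indicator C s ∂μ := by simp_rw [e2]
      _ = G t * ∫⁻ s, (Set.Ici t).indicator C s ∂μ :=
        lintegral_const_mul' _ _ ENNReal.ofReal_ne_top
      _ = G t * ∫⁻ s in Set.Ici t, C s ∂μ := by rw [lintegral_indicator measurableSet_Ici]
      _ = G t * ∫⁻ s in Set.Icc t 1, C s := by
        rw [hμdef, Measure.restrict_restrict measurableSet_Ici, hIciIoc]
      _ = G t * ∫⁻ s in Set.Ioc t 1, C s := by
        rw [setLIntegral_congr (Ioc_ae_eq_Icc (μ := volume) (a := t) (b := 1)).symm]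
      _ = G t * N t := by
        exact congrArg (fun z => G t * z)
          (ofReal_integral_eq_lintegral_ofReal (hcinv_intOn t ht.1) (hcinv_nn t ht.1)).symm
  have hswap : (∫⁻ s, ∫⁻ t, f2 s t ∂μ ∂μ) = ∫⁻ t, ∫⁻ s, f2 s t ∂μ ∂μ :=
    lintegral_lintegral_swap huncurry
  have hkey : ∫⁻ s, (∫⁻ t in Set.Ioc 0 s, G t) * C s ∂μ < ⊤ := by
    have e3 : ∫⁻ s, (∫⁻ t in Set.Ioc 0 s, G t) * C s ∂μ = ∫⁻ s, ∫⁻ t, f2 s t ∂μ ∂μ :=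
      (lintegral_congr_ae (ae_restrict_of_forall_mem measurableSet_Ioc hstep1)).symm
    have e4 : (∫⁻ t, ∫⁻ s, f2 s t ∂μ ∂μ) = ∫⁻ t, G t * N t ∂μ :=
      lintegral_congr_ae (ae_restrict_of_forall_mem measurableSet_Ioc hstep2)
    rw [e3, hswap, e4]; exact hCS
  -- integrability of h₀
  have hW_ae : ∀ s ∈ Set.Ioc (0:ℝ) 1,
      (‖h₀ s‖₊ : ℝ≥0∞) ≤ (∫⁻ t in Set.Ioc 0 s, G t) * C s := by
    intro s hs
    have hs0 : (0:ℝ) < s := hs.1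
    have hgint_s : Integrable (fun t => |g t|) (volume.restrict (Set.Ioc 0 s)) :=
      (hg_int.mono_set (Set.Ioc_subset_Ioc_right hs.2)).abs
    have habs : |h₀ s| ≤ (∫ t in Set.Ioc 0 s, |g t|) * (c s)⁻¹ := by
      rw [hh₀def]
      rw [abs_div, abs_of_pos (hc_pos s hs0), div_eq_mul_inv]
      refine mul_le_mul_of_nonneg_right ?_ (inv_nonneg.2 (hc_pos s hs0).le)
      rw [hFb s hs]
      simpa [Real.norm_eq_abs] using
        norm_integral_le_integral_norm (μ := volume.restrict (Set.Ioc 0 s)) g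
    rw [← enorm_eq_nnnorm, Real.enorm_eq_ofReal_abs]
    refine le_trans (ENNReal.ofReal_le_ofReal habs) ?_
    rw [ENNReal.ofReal_mul (integral_nonneg fun t => abs_nonneg _),
      ofReal_integral_eq_lintegral_ofReal hgint_s (ae_of_all _ fun t => abs_nonneg _)]
  have hh₀_int : IntegrableOn h₀ (Set.Ioc 0 1) := by
    refine ⟨hh₀_meas, ?_⟩
    have h7 : (∫⁻ s, (‖h₀ s‖₊ : ℝ≥0∞) ∂μ) ≤ ∫⁻ s, (∫⁻ t in Set.Ioc 0 s, G t) * C s ∂μ :=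
      lintegral_mono_ae (ae_restrict_of_forall_mem measurableSet_Ioc hW_ae)
    exact lt_of_le_of_lt h7 hkey
  -- final assembly
  refine ⟨b, hFt, Φ 1 - ∫ s in (0:ℝ)..1, h₀ s, ?_⟩
  have h2 : Tendsto (fun x => Φ 1 - ∫ s in x..1, h₀ s) (𝓝[>] (0:ℝ))
      (𝓝 (Φ 1 - ∫ s in (0:ℝ)..1, h₀ s)) :=
    tendsto_const_nhds.sub (tendsto_primitive_aux hh₀_int)
  refine h2.congr' ?_
  filter_upwards [Ioc_mem_nhdsGT_of_mem (⟨le_refl 0, zero_lt_one⟩ : (0:ℝ) ∈ Set.Ico 0 1)]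
    with x hx
  have hsub : Set.uIcc x 1 ⊆ Set.Ioi 0 := by
    rw [Set.uIcc_of_le hx.2]; intro t ht; exact lt_of_lt_of_le hx.1 ht.1
  have hiF : IntervalIntegrable (fun s => F s / c s) volume x 1 :=
    (hFc_cont.mono hsub).intervalIntegrable
  have hic : IntervalIntegrable (fun s => b * (c s)⁻¹) volume x 1 :=
    (continuousOn_const.mul ((hc_cont.inv₀ hc_ne).mono hsub)).intervalIntegrable
  have e5 : (∫ s in x..1, h₀ s)
      = (∫ s in x..1, F s / c s) - ∫ s in x..1, b * (c s)⁻¹ := by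
    rw [← intervalIntegral.integral_sub hiF hic]
    refine intervalIntegral.integral_congr fun s _ => ?_
    rw [hh₀def]; ring
  have e6 : (∫ s in x..1, b * (c s)⁻¹) = b * ∫ s in x..1, (c s)⁻¹ :=
    intervalIntegral.integral_const_mul _ _
  have e7 := hΦtc x hx
  rw [e5, e6]
  linarith
end

section
/- Assume ∫₀¹ ν₊(x)² dx < ∞. Let F : (0,1) → ℝ be measurable with ∫₀¹ F(t)² dt < ∞. Then for every x ∈ (0,1]: ∫₀ˣ c(s)⁻¹·(∫₀ˢ |F(t)| dt) ds < ∞, and |∫₀ˣ c(s)⁻¹·(∫₀ˢ F(t) dt) ds| ≤ (∫₀¹ ν₊(t)² dt)^{1/2} · (∫₀ˣ F(t)² dt)^{1/2}. -/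
open MeasureTheory Filter Set Topology

lemma contPrim {f : ℝ → ℝ} (hf : ContinuousOn f (Set.Ioi 0)) {y : ℝ} (hy : 0 < y) :
    ContinuousOn (fun t => ∫ s in t..y, f s) (Set.Ioi 0) := by
  intro t₀ ht₀
  have ht₀' : (0:ℝ) < t₀ := ht₀
  set a : ℝ := min t₀ y / 2 with ha_def
  have ha : 0 < a := by positivity
  set b : ℝ := max t₀ y + 1 with hb_def
  have hat : a < t₀ := by
    have : min t₀ y ≤ t₀ := min_le_left _ _
    have h2 : a < min t₀ y := by
      have : 0 < min t₀ y := lt_min ht₀' hy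
      linarith [ha_def]
    linarith
  have hay : a ≤ y := by
    have : min t₀ y ≤ y := min_le_right _ _
    have : 0 < min t₀ y := lt_min ht₀' hy
    simp only [ha_def]; linarith [min_le_right t₀ y]
  have htb : t₀ < b := by
    have := le_max_left t₀ y
    simp only [hb_def]; linarith
  have hyb : y ≤ b := by
    have := le_max_right t₀ y
    simp only [hb_def]; linarith
  have hab : a ≤ b := by linarith
  have hsub : Set.Icc a b ⊆ Set.Ioi 0 := fun s hs => lt_of_lt_of_le ha hs.1
  have hInt : IntegrableOn f (Set.Icc a b) := (hf.mono hsub).integrableOn_Icc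
  have hprim : ContinuousOn (fun t => ∫ s in a..t, f s) (Set.Icc a b) := by
    have := intervalIntegral.continuousOn_primitive_interval (μ := volume) (a := a) (b := b)
      (f := f) (by rwa [Set.uIcc_of_le hab])
    rwa [Set.uIcc_of_le hab] at this
  have hiiy : IntervalIntegrable f volume a y :=
    (hInt.mono_set (by rw [Set.uIcc_of_le hay]; exact Set.Icc_subset_Icc le_rfl hyb)).intervalIntegrable
  have heq : ∀ t ∈ Set.Ioo a b, ∫ s in t..y, f s = (∫ s in a..y, f s) - ∫ s in a..t, f s := by
    intro t ht
    have hiit : IntervalIntegrable f volume a t :=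
      (hInt.mono_set (by rw [Set.uIcc_of_le ht.1.le]; exact Set.Icc_subset_Icc le_rfl ht.2.le)).intervalIntegrable
    exact (intervalIntegral.integral_interval_sub_left hiiy hiit).symm
  have hca : ContinuousAt (fun t => (∫ s in a..y, f s) - ∫ s in a..t, f s) t₀ :=
    continuousAt_const.sub (hprim.continuousAt (Icc_mem_nhds hat htb))
  have hev : (fun t => ∫ s in t..y, f s) =ᶠ[nhds t₀]
      (fun t => (∫ s in a..y, f s) - ∫ s in a..t, f s) :=
    eventually_of_mem (Ioo_mem_nhds hat htb) heq
  exact (hca.congr hev.symm).continuousWithinAt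

/-- Paper: Fubini–Cauchy–Schwarz estimate in the proof of Proposition 2.7. -/
theorem stmt_9 (c : ℝ → ℝ)
    (hc_cont : ContinuousOn c (Set.Ioi 0))
    (hc_pos : ∀ x > (0:ℝ), 0 < c x)
    (hν_L2 : MeasureTheory.IntegrableOn
      (fun x => (∫ s in x..1, (c s)⁻¹) ^ 2) (Set.Ioc 0 1))
    (F : ℝ → ℝ) (hF_meas : Measurable F)
    (hF_L2 : MeasureTheory.IntegrableOn (fun t => (F t) ^ 2) (Set.Ioc 0 1)) :
    ∀ x ∈ Set.Ioc (0:ℝ) 1,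
      MeasureTheory.IntegrableOn
        (fun s => (c s)⁻¹ * ∫ t in Set.Ioc (0:ℝ) s, |F t|) (Set.Ioc 0 x) ∧
      |∫ s in Set.Ioc (0:ℝ) x, (c s)⁻¹ * ∫ t in Set.Ioc (0:ℝ) s, F t|
        ≤ Real.sqrt (∫ t in Set.Ioc (0:ℝ) 1, (∫ s in t..1, (c s)⁻¹) ^ 2)
          * Real.sqrt (∫ t in Set.Ioc (0:ℝ) x, (F t) ^ 2) := by
  intro x hx
  obtain ⟨hx0, hx1⟩ := hx
  have hcinv_cont : ContinuousOn (fun s => (c s)⁻¹) (Set.Ioi 0) :=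
    hc_cont.inv₀ (fun s hs => (hc_pos s hs).ne')
  set ν : ℝ → ℝ := fun t => ∫ s in t..1, (c s)⁻¹ with hν_def
  set g : ℝ → ℝ := fun t => ∫ s in t..x, (c s)⁻¹ with hg_def
  have hcinv_nonneg : ∀ s : ℝ, 0 < s → 0 ≤ (c s)⁻¹ := fun s hs => (inv_pos.mpr (hc_pos s hs)).le
  have hIccInt : ∀ {a b : ℝ}, 0 < a → IntegrableOn (fun s => (c s)⁻¹) (Set.Icc a b) := by
    intro a b ha
    exact ((hcinv_cont.mono (fun s hs => lt_of_lt_of_le ha hs.1)).integrableOn_Icc)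
  have hii : ∀ {a b : ℝ}, 0 < a → a ≤ b → IntervalIntegrable (fun s => (c s)⁻¹) volume a b := by
    intro a b ha hab
    exact ((hIccInt ha).mono_set (by rw [Set.uIcc_of_le hab])).intervalIntegrable
  have hg_nonneg : ∀ t ∈ Set.Ioc (0:ℝ) x, 0 ≤ g t := by
    intro t ht
    exact intervalIntegral.integral_nonneg ht.2 (fun u hu => hcinv_nonneg u (lt_of_lt_of_le ht.1 hu.1))
  have hg_le : ∀ t ∈ Set.Ioc (0:ℝ) x, g t ≤ ν t := by
    intro t ht
    have h1 : IntervalIntegrable (fun s => (c s)⁻¹) volume t x := hii ht.1 ht.2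
    have h2 : IntervalIntegrable (fun s => (c s)⁻¹) volume x 1 := hii hx0 hx1
    have hadd := intervalIntegral.integral_add_adjacent_intervals h1 h2
    have h3 : 0 ≤ ∫ s in x..1, (c s)⁻¹ :=
      intervalIntegral.integral_nonneg hx1 (fun u hu => hcinv_nonneg u (lt_of_lt_of_le hx0 hu.1))
    simp only [hν_def, hg_def]
    linarith [hadd]
  have hν_aesm1 : AEStronglyMeasurable ν (volume.restrict (Set.Ioc 0 1)) :=
    ((contPrim hcinv_cont one_pos).aestronglyMeasurable measurableSet_Ioi).mono_measure
      (Measure.restrict_mono Set.Ioc_subset_Ioi_self le_rfl)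
  have hg_aesm : AEStronglyMeasurable g (volume.restrict (Set.Ioc 0 x)) :=
    ((contPrim hcinv_cont hx0).aestronglyMeasurable measurableSet_Ioi).mono_measure
      (Measure.restrict_mono Set.Ioc_subset_Ioi_self le_rfl)
  have hFν_int : Integrable (fun t => |F t| * ν t) (volume.restrict (Set.Ioc 0 1)) := by
    refine Integrable.mono' ((hF_L2.add hν_L2).div_const 2)
      ((hF_meas.abs.aestronglyMeasurable).mul hν_aesm1) ?_
    refine Eventually.of_forall (fun t => ?_)
    rw [Real.norm_eq_abs, abs_mul, abs_abs]
    simp only [Pi.add_apply]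
    nlinarith [sq_abs (F t), sq_abs (ν t), abs_nonneg (F t), abs_nonneg (ν t),
      two_mul_le_add_sq (|F t|) (|ν t|)]
  have hcinv_aem : AEMeasurable (fun s => (c s)⁻¹) (volume.restrict (Set.Ioc 0 x)) :=
    (hcinv_cont.aemeasurable measurableSet_Ioi).mono_measure
      (Measure.restrict_mono Set.Ioc_subset_Ioi_self le_rfl)
  set K : ℝ × ℝ → ℝ :=
    Set.indicator {p : ℝ × ℝ | p.2 ≤ p.1} (fun p => (c p.1)⁻¹ * F p.2) with hK_def
  have hsm : MeasurableSet {p : ℝ × ℝ | p.2 ≤ p.1} :=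
    measurableSet_le measurable_snd measurable_fst
  have hK_aesm : AEStronglyMeasurable K
      ((volume.restrict (Set.Ioc 0 x)).prod (volume.restrict (Set.Ioc 0 x))) := by
    have h1 : AEMeasurable (fun p : ℝ × ℝ => (c p.1)⁻¹ * F p.2)
        ((volume.restrict (Set.Ioc 0 x)).prod (volume.restrict (Set.Ioc 0 x))) :=
      (hcinv_aem.comp_fst).mul (hF_meas.aemeasurable.comp_snd)
    exact (h1.indicator hsm).aestronglyMeasurable
  have hK_apply : ∀ s t : ℝ, K (s, t) = if t ≤ s then (c s)⁻¹ * F t else 0 := by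
    intro s t
    simp [hK_def, Set.indicator_apply, Set.mem_setOf_eq]
  have hIccEq : ∀ t ∈ Set.Ioc (0:ℝ) x, (∫ s in Set.Icc t x, (c s)⁻¹) = g t := by
    intro t ht
    rw [integral_Icc_eq_integral_Ioc, hg_def]
    exact (intervalIntegral.integral_of_le ht.2).symm
  have hinterIci : ∀ t ∈ Set.Ioc (0:ℝ) x, Set.Ici t ∩ Set.Ioc 0 x = Set.Icc t x := by
    intro t ht
    ext s
    simp only [Set.mem_inter_iff, Set.mem_Ici, Set.mem_Ioc, Set.mem_Icc]
    constructor
    · rintro ⟨h1, _, h3⟩; exact ⟨h1, h3⟩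
    · rintro ⟨h1, h2⟩; exact ⟨h1, lt_of_lt_of_le ht.1 h1, h2⟩
  have hinterIic : ∀ s ∈ Set.Ioc (0:ℝ) x, Set.Ioc 0 x ∩ Set.Iic s = Set.Ioc 0 s := by
    intro s hs
    ext t
    simp only [Set.mem_inter_iff, Set.mem_Ioc, Set.mem_Iic]
    constructor
    · rintro ⟨⟨h1, _⟩, h3⟩; exact ⟨h1, h3⟩
    · rintro ⟨h1, h2⟩; exact ⟨⟨h1, h2.trans hs.2⟩, h2⟩
  have hinner : ∀ t ∈ Set.Ioc (0:ℝ) x,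
      (∫⁻ s in Set.Ioc 0 x, (‖K (s, t)‖₊ : ENNReal))
        = ENNReal.ofReal |F t| * ENNReal.ofReal (g t) := by
    intro t ht
    have hpt : ∀ s : ℝ, (‖K (s, t)‖₊ : ENNReal) =
        Set.indicator (Set.Ici t) (fun s => ENNReal.ofReal (|(c s)⁻¹| * |F t|)) s := by
      intro s
      rw [← enorm_eq_nnnorm, Real.enorm_eq_ofReal_abs, hK_apply]
      by_cases h : t ≤ s
      · simp [Set.indicator_of_mem, Set.mem_Ici.mpr h, abs_mul, h]
      · simp [Set.indicator_of_notMem, h, Set.mem_Ici]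
    calc (∫⁻ s in Set.Ioc 0 x, (‖K (s, t)‖₊ : ENNReal))
        = ∫⁻ s in Set.Ioc 0 x,
            Set.indicator (Set.Ici t) (fun s => ENNReal.ofReal (|(c s)⁻¹| * |F t|)) s :=
          lintegral_congr hpt
      _ = ∫⁻ s in Set.Ici t ∩ Set.Ioc 0 x, ENNReal.ofReal (|(c s)⁻¹| * |F t|) := by
          rw [lintegral_indicator measurableSet_Ici _,
            Measure.restrict_restrict measurableSet_Ici]
      _ = ∫⁻ s in Set.Icc t x, ENNReal.ofReal |F t| * ENNReal.ofReal |(c s)⁻¹| := by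
          rw [hinterIci t ht]
          exact lintegral_congr fun s => by
            rw [← ENNReal.ofReal_mul (abs_nonneg _), mul_comm]
      _ = ENNReal.ofReal |F t| * ∫⁻ s in Set.Icc t x, ENNReal.ofReal |(c s)⁻¹| :=
          lintegral_const_mul' _ _ ENNReal.ofReal_ne_top
      _ = ENNReal.ofReal |F t| * ENNReal.ofReal (∫ s in Set.Icc t x, |(c s)⁻¹|) := by
          rw [← ofReal_integral_eq_lintegral_ofReal ((hIccInt ht.1).abs)
            (Eventually.of_forall fun s => abs_nonneg _)]
      _ = ENNReal.ofReal |F t| * ENNReal.ofReal (g t) := by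
          congr 1
          rw [show (∫ s in Set.Icc t x, |(c s)⁻¹|) = ∫ s in Set.Icc t x, (c s)⁻¹ from
            setIntegral_congr_fun measurableSet_Icc fun s hs =>
              abs_of_nonneg (hcinv_nonneg s (lt_of_lt_of_le ht.1 hs.1))]
          exact congrArg _ (hIccEq t ht)
  have hJ : (∫⁻ p, (‖K p‖₊ : ENNReal)
      ∂((volume.restrict (Set.Ioc 0 x)).prod (volume.restrict (Set.Ioc 0 x)))) < ⊤ := by
    rw [lintegral_prod_symm _ hK_aesm.aemeasurable.nnnorm.coe_nnreal_ennreal]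
    calc (∫⁻ t in Set.Ioc 0 x, ∫⁻ s in Set.Ioc 0 x, (‖K (s, t)‖₊ : ENNReal))
        ≤ ∫⁻ t in Set.Ioc 0 x, ENNReal.ofReal (|F t| * ν t) := by
          refine lintegral_mono_ae ?_
          filter_upwards [ae_restrict_mem measurableSet_Ioc] with t ht
          rw [hinner t ht, ← ENNReal.ofReal_mul (abs_nonneg _)]
          exact ENNReal.ofReal_le_ofReal
            (mul_le_mul_of_nonneg_left (hg_le t ht) (abs_nonneg _))
      _ ≤ ∫⁻ t in Set.Ioc 0 1, (‖(|F t| * ν t)‖₊ : ENNReal) := by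
          refine lintegral_mono' (Measure.restrict_mono (Set.Ioc_subset_Ioc_right hx1) le_rfl)
            (fun t => Real.ofReal_le_enorm _)
      _ < ⊤ := hFν_int.2
  have hK_int : Integrable K
      ((volume.restrict (Set.Ioc 0 x)).prod (volume.restrict (Set.Ioc 0 x))) := ⟨hK_aesm, hJ⟩
  -- first conjunct
  have hint1 : IntegrableOn (fun s => (c s)⁻¹ * ∫ t in Set.Ioc (0:ℝ) s, |F t|) (Set.Ioc 0 x) := by
    have hnorm : Integrable (fun s => ∫ t in Set.Ioc (0:ℝ) x, ‖K (s, t)‖)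
        (volume.restrict (Set.Ioc 0 x)) := hK_int.integral_norm_prod_left
    refine hnorm.congr ?_
    filter_upwards [ae_restrict_mem measurableSet_Ioc] with s hs
    have h1 : (fun t => ‖K (s, t)‖) = Set.indicator (Set.Iic s) (fun t => (c s)⁻¹ * |F t|) := by
      funext t
      rw [hK_apply]
      by_cases h : t ≤ s
      · rw [Set.indicator_of_mem (Set.mem_Iic.mpr h), if_pos h, Real.norm_eq_abs, abs_mul,
          abs_of_nonneg (hcinv_nonneg s hs.1)]
      · rw [Set.indicator_of_notMem (by simpa using h), if_neg h, norm_zero]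
    rw [h1, setIntegral_indicator measurableSet_Iic, hinterIic s hs, integral_const_mul]
  refine ⟨hint1, ?_⟩
  -- Fubini
  have hswap : (∫ s in Set.Ioc (0:ℝ) x, ∫ t in Set.Ioc (0:ℝ) x, K (s, t))
      = ∫ t in Set.Ioc (0:ℝ) x, ∫ s in Set.Ioc (0:ℝ) x, K (s, t) :=
    integral_integral_swap hK_int
  have hL : (∫ s in Set.Ioc (0:ℝ) x, (c s)⁻¹ * ∫ t in Set.Ioc (0:ℝ) s, F t)
      = ∫ s in Set.Ioc (0:ℝ) x, ∫ t in Set.Ioc (0:ℝ) x, K (s, t) := by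
    refine integral_congr_ae ?_
    filter_upwards [ae_restrict_mem measurableSet_Ioc] with s hs
    have h1 : (fun t => K (s, t)) = Set.indicator (Set.Iic s) (fun t => (c s)⁻¹ * F t) := by
      funext t
      rw [hK_apply]
      by_cases h : t ≤ s
      · rw [Set.indicator_of_mem (Set.mem_Iic.mpr h), if_pos h]
      · rw [Set.indicator_of_notMem (by simpa using h), if_neg h]
    rw [h1, setIntegral_indicator measurableSet_Iic, hinterIic s hs, integral_const_mul]
  have hR : (∫ t in Set.Ioc (0:ℝ) x, ∫ s in Set.Ioc (0:ℝ) x, K (s, t))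
      = ∫ t in Set.Ioc (0:ℝ) x, F t * g t := by
    refine integral_congr_ae ?_
    filter_upwards [ae_restrict_mem measurableSet_Ioc] with t ht
    have h1 : (fun s => K (s, t)) = Set.indicator (Set.Ici t) (fun s => (c s)⁻¹ * F t) := by
      funext s
      rw [hK_apply]
      by_cases h : t ≤ s
      · rw [Set.indicator_of_mem (Set.mem_Ici.mpr h), if_pos h]
      · rw [Set.indicator_of_notMem (by simpa using h), if_neg h]
    rw [h1, setIntegral_indicator measurableSet_Ici]
    rw [show Set.Ioc (0:ℝ) x ∩ Set.Ici t = Set.Icc t x by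
      rw [Set.inter_comm]; exact hinterIci t ht]
    rw [integral_mul_const, hIccEq t ht, mul_comm]
  -- Cauchy-Schwarz
  have hofReal2 : ENNReal.ofReal (2:ℝ) = 2 := by norm_num
  have hF2 : MemLp F (ENNReal.ofReal 2) (volume.restrict (Set.Ioc 0 x)) := by
    rw [hofReal2]
    exact (memLp_two_iff_integrable_sq hF_meas.aestronglyMeasurable).mpr
      (hF_L2.mono_set (Set.Ioc_subset_Ioc_right hx1))
  have hg2_aesm : AEStronglyMeasurable (fun t => g t ^ 2) (volume.restrict (Set.Ioc 0 x)) := by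
    exact hg_aesm.pow 2
  have hgsq_int : IntegrableOn (fun t => g t ^ 2) (Set.Ioc 0 x) := by
    refine Integrable.mono' (hν_L2.mono_set (Set.Ioc_subset_Ioc_right hx1)) hg2_aesm ?_
    filter_upwards [ae_restrict_mem measurableSet_Ioc] with t ht
    rw [Real.norm_eq_abs, abs_of_nonneg (sq_nonneg _)]
    exact pow_le_pow_left₀ (hg_nonneg t ht) (hg_le t ht) 2
  have hg2 : MemLp g (ENNReal.ofReal 2) (volume.restrict (Set.Ioc 0 x)) := by
    rw [hofReal2]
    exact (memLp_two_iff_integrable_sq hg_aesm).mpr hgsq_int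
  have hCS := integral_mul_norm_le_Lp_mul_Lq (μ := volume.restrict (Set.Ioc 0 x))
    Real.HolderConjugate.two_two hF2 hg2
  have hrpow_abs : ∀ y : ℝ, ‖y‖ ^ (2:ℝ) = y ^ 2 := by
    intro y
    rw [Real.norm_eq_abs, show (2:ℝ) = ((2:ℕ):ℝ) by norm_num, Real.rpow_natCast, sq_abs]
  have hEF : (∫ t in Set.Ioc (0:ℝ) x, ‖F t‖ ^ (2:ℝ)) = ∫ t in Set.Ioc (0:ℝ) x, F t ^ 2 :=
    integral_congr_ae (Eventually.of_forall fun t => hrpow_abs (F t))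
  have hEg : (∫ t in Set.Ioc (0:ℝ) x, ‖g t‖ ^ (2:ℝ)) = ∫ t in Set.Ioc (0:ℝ) x, g t ^ 2 :=
    integral_congr_ae (Eventually.of_forall fun t => hrpow_abs (g t))
  have hgsq_le : (∫ t in Set.Ioc (0:ℝ) x, g t ^ 2) ≤ ∫ t in Set.Ioc (0:ℝ) 1, ν t ^ 2 := by
    have h1 : (∫ t in Set.Ioc (0:ℝ) x, g t ^ 2) ≤ ∫ t in Set.Ioc (0:ℝ) x, ν t ^ 2 := by
      refine integral_mono_ae hgsq_int (hν_L2.mono_set (Set.Ioc_subset_Ioc_right hx1)) ?_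
      filter_upwards [ae_restrict_mem measurableSet_Ioc] with t ht
      exact pow_le_pow_left₀ (hg_nonneg t ht) (hg_le t ht) 2
    have h2 : (∫ t in Set.Ioc (0:ℝ) x, ν t ^ 2) ≤ ∫ t in Set.Ioc (0:ℝ) 1, ν t ^ 2 :=
      setIntegral_mono_set hν_L2 (Eventually.of_forall fun t => sq_nonneg _)
        (HasSubset.Subset.eventuallyLE (Set.Ioc_subset_Ioc_right hx1))
    linarith
  have hFsq_nonneg : (0:ℝ) ≤ ∫ t in Set.Ioc (0:ℝ) x, F t ^ 2 :=
    integral_nonneg fun t => sq_nonneg _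
  have hgsq_nonneg : (0:ℝ) ≤ ∫ t in Set.Ioc (0:ℝ) x, g t ^ 2 :=
    integral_nonneg fun t => sq_nonneg _
  calc |∫ s in Set.Ioc (0:ℝ) x, (c s)⁻¹ * ∫ t in Set.Ioc (0:ℝ) s, F t|
      = |∫ t in Set.Ioc (0:ℝ) x, F t * g t| := by rw [hL, hswap, hR]
    _ ≤ ∫ t in Set.Ioc (0:ℝ) x, ‖F t * g t‖ := by
        rw [← Real.norm_eq_abs]
        exact norm_integral_le_integral_norm _
    _ = ∫ t in Set.Ioc (0:ℝ) x, ‖F t‖ * ‖g t‖ := by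
        simp only [norm_mul]
    _ ≤ (∫ t in Set.Ioc (0:ℝ) x, ‖F t‖ ^ (2:ℝ)) ^ (1/2:ℝ)
        * (∫ t in Set.Ioc (0:ℝ) x, ‖g t‖ ^ (2:ℝ)) ^ (1/2:ℝ) := hCS
    _ ≤ Real.sqrt (∫ t in Set.Ioc (0:ℝ) 1, ν t ^ 2)
        * Real.sqrt (∫ t in Set.Ioc (0:ℝ) x, F t ^ 2) := by
        rw [hEF, hEg, ← Real.sqrt_eq_rpow, ← Real.sqrt_eq_rpow, mul_comm]
        exact mul_le_mul_of_nonneg_right (Real.sqrt_le_sqrt hgsq_le) (Real.sqrt_nonneg _)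
end

section
/- Assume ∫₀¹ c(s)⁻¹ ds = ∞ (i.e. ν₊ ∉ L^∞(0,1)). Let σ₊ : (0,∞) → ℝ be smooth with 0 ≤ σ₊ ≤ 1, σ₊(x) = 1 for x ∈ (0,1) and σ₊(x) = 0 for x ≥ 2. For n ≥ 2 define χₙ : (0,∞) → ℝ by χₙ(x) = 1 for x ≤ 1/n, χₙ(x) = ν₊(x)/ν₊(1/n) for 1/n < x < 1, and χₙ(x) = 0 for x ≥ 1. Then: (a) χₙ·σ₊ is differentiable at every point of (0,∞) except possibly 1/n and 1; (b) ∫₀^∞ (χₙ(x)σ₊(x))² dx → 0 as n → ∞; and (c) ∫₀^∞ c(x)·(deriv(χₙ·σ₊)(x))² dx = ν₊(1/n)⁻¹, which tends to 0 as n → ∞. -/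
open MeasureTheory Filter Set Topology

/-- Paper: Lemma 2.9, explicit cut-off computation showing σ₊ belongs to the
domain of the closed form h̄₊ when ν₊ ∉ L^∞(0,1). -/
theorem stmt_10 (c : ℝ → ℝ)
    (hc_cont : ContinuousOn c (Set.Ioi 0))
    (hc_pos : ∀ x > (0:ℝ), 0 < c x)
    (hν_inf : ∫⁻ s in Set.Ioc (0:ℝ) 1, ENNReal.ofReal ((c s)⁻¹) = ⊤)
    (σ : ℝ → ℝ)
    (hσ_smooth : ContDiffOn ℝ (⊤ : ℕ∞) σ (Set.Ioi 0))
    (hσ_01 : ∀ x ∈ Set.Ioi (0:ℝ), σ x ∈ Set.Icc (0:ℝ) 1)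
    (hσ_one : ∀ x ∈ Set.Ioo (0:ℝ) 1, σ x = 1)
    (hσ_zero : ∀ x : ℝ, 2 ≤ x → σ x = 0)
    (χ : ℕ → ℝ → ℝ)
    (hχ : ∀ (n : ℕ) (x : ℝ), χ n x =
      if x ≤ ((n : ℝ))⁻¹ then 1
      else if x < 1 then (∫ s in x..1, (c s)⁻¹) / (∫ s in ((n : ℝ))⁻¹..1, (c s)⁻¹)
      else 0) :
    (∀ n : ℕ, 2 ≤ n → ∀ x > (0:ℝ), x ≠ ((n : ℝ))⁻¹ → x ≠ 1 →
      DifferentiableAt ℝ (fun y => χ n y * σ y) x) ∧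
    Filter.Tendsto (fun n => ∫ x in Set.Ioi (0:ℝ), (χ n x * σ x) ^ 2)
      Filter.atTop (nhds 0) ∧
    (∀ n : ℕ, 2 ≤ n →
      ∫ x in Set.Ioi (0:ℝ), c x * (deriv (fun y => χ n y * σ y) x) ^ 2
        = (∫ s in ((n : ℝ))⁻¹..1, (c s)⁻¹)⁻¹) ∧
    Filter.Tendsto (fun n : ℕ => (∫ s in ((n : ℝ))⁻¹..1, (c s)⁻¹)⁻¹)
      Filter.atTop (nhds 0) := by
  set F : ℝ → ℝ := fun x => ∫ s in x..1, (c s)⁻¹ with hFdef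
  have hcont_inv : ContinuousOn (fun s => (c s)⁻¹) (Set.Ioi 0) :=
    hc_cont.inv₀ (fun s hs => (hc_pos s hs).ne')
  have hci : ∀ x > (0:ℝ), ∀ y > (0:ℝ), IntervalIntegrable (fun s => (c s)⁻¹) volume x y := by
    intro x hx y hy
    exact (hcont_inv.mono (fun z hz => lt_of_lt_of_le (lt_min hx hy) (by
      simpa using hz.1))).intervalIntegrable
  have hFd : ∀ x > (0:ℝ), HasDerivAt F (-(c x)⁻¹) x := by
    intro x hx
    exact intervalIntegral.integral_hasDerivAt_left (hci x hx 1 one_pos)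
      (hcont_inv.stronglyMeasurableAtFilter isOpen_Ioi x hx)
      ((hcont_inv x hx).continuousAt (Ioi_mem_nhds hx))
  have hFc : ContinuousOn F (Set.Ioi 0) :=
    fun x hx => ((hFd x hx).continuousAt).continuousWithinAt
  have hmono : ∀ a b : ℝ, 0 < a → a ≤ b → F b ≤ F a := by
    intro a b ha hab
    have hb : 0 < b := ha.trans_le hab
    have h1 : F a = (∫ s in a..b, (c s)⁻¹) + F b :=
      (intervalIntegral.integral_add_adjacent_intervals (hci a ha b hb) (hci b hb 1 one_pos)).symm
    have h2 : 0 ≤ ∫ s in a..b, (c s)⁻¹ :=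
      intervalIntegral.integral_nonneg hab
        (fun s hs => inv_nonneg.2 (hc_pos s (ha.trans_le hs.1)).le)
    linarith
  have hFpos : ∀ x : ℝ, 0 < x → x < 1 → 0 < F x := by
    intro x hx hx1
    exact intervalIntegral.intervalIntegral_pos_of_pos_on (hci x hx 1 one_pos)
      (fun s hs => inv_pos.2 (hc_pos s (hx.trans hs.1))) hx1
  have hFneg : ∀ x : ℝ, 1 ≤ x → F x ≤ 0 := by
    intro x hx
    rw [hFdef]
    simp only
    rw [intervalIntegral.integral_symm]
    have : 0 ≤ ∫ s in (1:ℝ)..x, (c s)⁻¹ :=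
      intervalIntegral.integral_nonneg hx
        (fun s hs => inv_nonneg.2 (hc_pos s (lt_of_lt_of_le one_pos hs.1)).le)
    linarith
  have hFzero1 : F 1 = 0 := by simp [hFdef]
  -- divergence
  have hνt : Tendsto (fun n : ℕ => F ((n:ℝ))⁻¹) atTop atTop := by
    set g : ℝ → ENNReal := fun s => ENNReal.ofReal ((c s)⁻¹) with hg
    set μ : Measure ℝ := volume.withDensity g with hμ
    have hμs : ∀ s : Set ℝ, MeasurableSet s → μ s = ∫⁻ x in s, g x :=
      fun s hs => withDensity_apply _ hs
    have hmonoS : Monotone (fun k : ℕ => Set.Ioc (((k:ℝ)+1))⁻¹ 1) := by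
      intro i j hij
      apply Set.Ioc_subset_Ioc_left
      have : (i:ℝ) + 1 ≤ (j:ℝ) + 1 := by
        have := (Nat.cast_le (α := ℝ)).2 hij; linarith
      exact inv_anti₀ (by positivity) this
    have hUnion : (⋃ k : ℕ, Set.Ioc ((((k:ℝ))+1))⁻¹ 1) = Set.Ioc (0:ℝ) 1 := by
      ext x; simp only [Set.mem_iUnion, Set.mem_Ioc]
      constructor
      · rintro ⟨k, hk1, hk2⟩; exact ⟨lt_trans (by positivity) hk1, hk2⟩
      · rintro ⟨hx0, hx1⟩
        obtain ⟨k, hk⟩ := exists_nat_gt x⁻¹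
        refine ⟨k, ?_, hx1⟩
        rw [inv_lt_comm₀ (by positivity) hx0]
        exact hk.trans (by linarith)
    have htend : Tendsto (fun k : ℕ => μ (Set.Ioc (((k:ℝ)+1))⁻¹ 1)) atTop
        (nhds (⊤ : ENNReal)) := by
      have h := tendsto_measure_iUnion_atTop (μ := μ) hmonoS
      rw [hUnion] at h
      rwa [show μ (Set.Ioc (0:ℝ) 1) = ⊤ from (hμs _ measurableSet_Ioc).trans hν_inf] at h
    rw [tendsto_atTop]
    intro M
    have hev : ∀ᶠ k : ℕ in atTop, ENNReal.ofReal M < μ (Set.Ioc (((k:ℝ)+1))⁻¹ 1) :=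
      htend.eventually (eventually_gt_nhds ENNReal.ofReal_lt_top)
    obtain ⟨K, hK⟩ := hev.exists
    have haK : (0:ℝ) < ((K:ℝ)+1)⁻¹ := by positivity
    have haK1 : ((K:ℝ)+1)⁻¹ ≤ 1 := by
      rw [inv_le_one_iff₀]; right; linarith [Nat.cast_nonneg (α := ℝ) K]
    have hint : IntegrableOn (fun s => (c s)⁻¹) (Set.Ioc (((K:ℝ)+1))⁻¹ 1) volume :=
      (hci _ haK 1 one_pos).1
    have hreal : ENNReal.ofReal (∫ s in (((K:ℝ)+1))⁻¹..1, (c s)⁻¹)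
        = μ (Set.Ioc (((K:ℝ)+1))⁻¹ 1) := by
      rw [hμs _ measurableSet_Ioc, intervalIntegral.integral_of_le haK1]
      have hae : ∀ᵐ s ∂(volume.restrict (Set.Ioc (((K:ℝ)+1))⁻¹ 1)), 0 ≤ (c s)⁻¹ :=
        (ae_restrict_iff' measurableSet_Ioc).2 <| Filter.Eventually.of_forall
          fun s hs => inv_nonneg.2 (hc_pos s (haK.trans hs.1)).le
      exact ofReal_integral_eq_lintegral_ofReal hint hae
    have hMν : M ≤ ∫ s in (((K:ℝ)+1))⁻¹..1, (c s)⁻¹ := by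
      by_contra h
      push_neg at h
      exact absurd (hreal ▸ hK) (not_lt.2 (ENNReal.ofReal_le_ofReal h.le))
    filter_upwards [Filter.eventually_ge_atTop (K+1)] with n hn
    refine hMν.trans (hmono _ _ ?_ ?_)
    · have : (0:ℕ) < n := by omega
      positivity
    · apply inv_anti₀ (by positivity)
      exact_mod_cast by omega
  -- basic numerics for n ≥ 2
  have han : ∀ n : ℕ, 2 ≤ n → 0 < ((n:ℝ))⁻¹ ∧ ((n:ℝ))⁻¹ ≤ 1/2 := by
    intro n hn
    have h2 : (2:ℝ) ≤ (n:ℝ) := by exact_mod_cast hn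
    constructor
    · positivity
    · rw [show (1:ℝ)/2 = 2⁻¹ by norm_num]
      exact inv_anti₀ two_pos h2
  have hνpos : ∀ n : ℕ, 2 ≤ n → 0 < F ((n:ℝ))⁻¹ := by
    intro n hn
    exact hFpos _ (han n hn).1 (lt_of_le_of_lt (han n hn).2 (by norm_num))
  -- local descriptions
  have hf_left : ∀ n : ℕ, 2 ≤ n → ∀ x : ℝ, 0 < x → x < ((n:ℝ))⁻¹ →
      (fun y => χ n y * σ y) =ᶠ[nhds x] fun _ => (1:ℝ) := by
    intro n hn x hx hxa
    refine Filter.eventuallyEq_of_mem (Ioo_mem_nhds hx hxa) (fun y hy => ?_)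
    have hy1 : y < 1 := lt_of_lt_of_le hy.2 ((han n hn).2.trans (by norm_num))
    rw [hχ, if_pos hy.2.le, hσ_one y ⟨hy.1, hy1⟩, one_mul]
  have hf_mid : ∀ n : ℕ, 2 ≤ n → ∀ x : ℝ, ((n:ℝ))⁻¹ < x → x < 1 →
      (fun y => χ n y * σ y) =ᶠ[nhds x] fun y => F y / F ((n:ℝ))⁻¹ := by
    intro n hn x hxa hx1
    refine Filter.eventuallyEq_of_mem (Ioo_mem_nhds hxa hx1) (fun y hy => ?_)
    have hy0 : 0 < y := (han n hn).1.trans hy.1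
    rw [hχ, if_neg (not_le.2 hy.1), if_pos hy.2, hσ_one y ⟨hy0, hy.2⟩, mul_one]
  have hf_right : ∀ n : ℕ, 2 ≤ n → ∀ x : ℝ, 1 < x →
      (fun y => χ n y * σ y) =ᶠ[nhds x] fun _ => (0:ℝ) := by
    intro n hn x hx1
    refine Filter.eventuallyEq_of_mem (Ioi_mem_nhds hx1) (fun y (hy : 1 < y) => ?_)
    have hya : ¬ y ≤ ((n:ℝ))⁻¹ := not_le.2 (lt_of_le_of_lt ((han n hn).2.trans (by norm_num)) hy)
    rw [hχ, if_neg hya, if_neg (not_lt.2 hy.le), zero_mul]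
  -- (a) differentiability
  -- deriv values
  have hd_left : ∀ n : ℕ, 2 ≤ n → ∀ x : ℝ, 0 < x → x < ((n:ℝ))⁻¹ →
      deriv (fun y => χ n y * σ y) x = 0 := by
    intro n hn x hx h
    rw [(hf_left n hn x hx h).deriv_eq, deriv_const]
  have hd_mid : ∀ n : ℕ, 2 ≤ n → ∀ x : ℝ, ((n:ℝ))⁻¹ < x → x < 1 →
      deriv (fun y => χ n y * σ y) x = -(c x)⁻¹ / F ((n:ℝ))⁻¹ := by
    intro n hn x h h1
    rw [(hf_mid n hn x h h1).deriv_eq]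
    exact (((hFd x ((han n hn).1.trans h)).div_const _)).deriv
  have hd_right : ∀ n : ℕ, 2 ≤ n → ∀ x : ℝ, 1 < x →
      deriv (fun y => χ n y * σ y) x = 0 := by
    intro n hn x h
    rw [(hf_right n hn x h).deriv_eq, deriv_const]
  have part1 : ∀ n : ℕ, 2 ≤ n → ∀ x > (0:ℝ), x ≠ ((n : ℝ))⁻¹ → x ≠ 1 →
      DifferentiableAt ℝ (fun y => χ n y * σ y) x := by
    intro n hn x hx hxa hx1
    rcases lt_or_gt_of_ne hxa with h | h
    · exact (differentiableAt_const (1:ℝ)).congr_of_eventuallyEq (hf_left n hn x hx h)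
    · rcases lt_or_gt_of_ne hx1 with h1 | h1
      · exact (((hFd x hx).div_const _)).differentiableAt.congr_of_eventuallyEq
          (hf_mid n hn x h h1)
      · exact (differentiableAt_const (0:ℝ)).congr_of_eventuallyEq (hf_right n hn x h1)
  -- (c) the energy integral
  have part3 : ∀ n : ℕ, 2 ≤ n →
      ∫ x in Set.Ioi (0:ℝ), c x * (deriv (fun y => χ n y * σ y) x) ^ 2
        = (F ((n : ℝ))⁻¹)⁻¹ := by
    intro n hn
    set a : ℝ := ((n:ℝ))⁻¹ with hadef
    have ha0 : 0 < a := (han n hn).1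
    have ha1 : a < 1 := lt_of_le_of_lt (han n hn).2 (by norm_num)
    have hν : 0 < F a := hνpos n hn
    have hae : ∀ᵐ x ∂(volume.restrict (Set.Ioi (0:ℝ))),
        c x * (deriv (fun y => χ n y * σ y) x) ^ 2
          = Set.indicator (Set.Ioo a 1) (fun x => (c x)⁻¹ * ((F a)⁻¹)^2) x := by
      rw [ae_restrict_iff' measurableSet_Ioi]
      have h2 : ∀ᵐ x : ℝ, x ∉ ({a, 1} : Set ℝ) := by
        have : volume ({a, 1} : Set ℝ) = 0 := by
          exact measure_union_null (measure_singleton a) (measure_singleton 1)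
        exact measure_eq_zero_iff_ae_notMem.mp this
      filter_upwards [h2] with x hx2 hx
      have hxa : x ≠ a := fun h => hx2 (by simp [h])
      have hx1 : x ≠ 1 := fun h => hx2 (by simp [h])
      rcases lt_or_gt_of_ne hxa with h | h
      · rw [hd_left n hn x hx h, Set.indicator_of_notMem (by
          intro hmem; exact absurd hmem.1 (not_lt.2 h.le))]
        ring
      · rcases lt_or_gt_of_ne hx1 with h1 | h1
        · rw [hd_mid n hn x h h1, Set.indicator_of_mem (Set.mem_Ioo.2 ⟨h, h1⟩)]
          have hc0 : c x ≠ 0 := (hc_pos x hx).ne'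
          have hsq : (-(c x)⁻¹ / F a) ^ 2 = ((c x)⁻¹)^2 * ((F a)⁻¹)^2 := by
            rw [div_eq_mul_inv]; ring
          rw [hsq, ← mul_assoc, show c x * ((c x)⁻¹)^2 = (c x)⁻¹ by
            rw [sq, ← mul_assoc, mul_inv_cancel₀ hc0, one_mul]]
        · rw [hd_right n hn x h1, Set.indicator_of_notMem (by
            intro hmem; exact absurd hmem.2 (not_lt.2 h1.le))]
          ring
    have hsub : Set.Ioo a 1 ∩ Set.Ioi 0 = Set.Ioo a 1 :=
      Set.inter_eq_self_of_subset_left (fun y hy => lt_trans ha0 hy.1)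
    rw [integral_congr_ae hae, integral_indicator measurableSet_Ioo,
      Measure.restrict_restrict measurableSet_Ioo, hsub]
    rw [integral_mul_const, ← integral_Ioc_eq_integral_Ioo,
      ← intervalIntegral.integral_of_le ha1.le]
    show F a * ((F a)⁻¹)^2 = (F a)⁻¹
    field_simp
  -- (b)
  have part2 : Filter.Tendsto (fun n => ∫ x in Set.Ioi (0:ℝ), (χ n x * σ x) ^ 2)
      Filter.atTop (nhds 0) := by
    have hχmin : ∀ n : ℕ, 2 ≤ n → ∀ x : ℝ, 0 < x →
        χ n x = min 1 (max 0 (F x / F ((n:ℝ))⁻¹)) := by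
      intro n hn x hx
      have hν : 0 < F ((n:ℝ))⁻¹ := hνpos n hn
      have ha1 : ((n:ℝ))⁻¹ < 1 := lt_of_le_of_lt (han n hn).2 (by norm_num)
      rw [hχ]
      split_ifs with h1 h2
      · have h1' : 1 ≤ F x / F ((n:ℝ))⁻¹ :=
          (one_le_div hν).2 (hmono _ _ hx h1)
        rw [max_eq_right (le_trans zero_le_one h1'), min_eq_left h1']
      · have hnn : 0 ≤ F x / F ((n:ℝ))⁻¹ :=
          div_nonneg (hFpos x hx h2).le hν.le
        have hle : F x / F ((n:ℝ))⁻¹ ≤ 1 :=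
          (div_le_one hν).2 (hmono _ _ (han n hn).1 (not_le.1 h1).le)
        rw [max_eq_right hnn, min_eq_right hle]
      · have hle : F x / F ((n:ℝ))⁻¹ ≤ 0 :=
          div_nonpos_of_nonpos_of_nonneg (hFneg x (not_lt.1 h2)) hν.le
        rw [max_eq_left hle, min_eq_right zero_le_one]
    have hχ01 : ∀ n : ℕ, 2 ≤ n → ∀ x : ℝ, 0 < x → χ n x ∈ Set.Icc (0:ℝ) 1 := by
      intro n hn x hx
      rw [hχmin n hn x hx]
      constructor
      · exact le_min zero_le_one (le_max_left _ _)
      · exact min_le_left _ _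
    have hχtop : ∀ n : ℕ, 2 ≤ n → ∀ x : ℝ, 1 < x → χ n x = 0 := by
      intro n hn x hx
      rw [hχ, if_neg (not_le.2 (lt_of_le_of_lt ((han n hn).2.trans (by norm_num)) hx)),
        if_neg (not_lt.2 hx.le)]
    have hF_meas : ∀ᶠ n : ℕ in atTop,
        AEStronglyMeasurable (fun x => (χ n x * σ x) ^ 2) (volume.restrict (Set.Ioi (0:ℝ))) := by
      filter_upwards [Filter.eventually_ge_atTop 2] with n hn
      have hcont : ContinuousOn (fun x => (χ n x * σ x) ^ 2) (Set.Ioi (0:ℝ)) := by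
        apply ContinuousOn.pow
        apply ContinuousOn.mul _ hσ_smooth.continuousOn
        apply ContinuousOn.congr (f := fun x => min 1 (max 0 (F x / F ((n:ℝ))⁻¹)))
        · exact (continuousOn_const.inf ((continuousOn_const.sup
            (hFc.div_const _))))
        · exact fun x hx => hχmin n hn x hx
      exact hcont.aestronglyMeasurable measurableSet_Ioi
    set bound : ℝ → ℝ := Set.indicator (Set.Ioc (0:ℝ) 1) (fun _ => (1:ℝ)) with hbound
    have hbound_int : Integrable bound (volume.restrict (Set.Ioi (0:ℝ))) := by
      rw [hbound, integrable_indicator_iff measurableSet_Ioc]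
      exact integrableOn_const (lt_of_le_of_lt
        (Measure.restrict_apply_le _ _) measure_Ioc_lt_top).ne
    have h_bound : ∀ᶠ n : ℕ in atTop, ∀ᵐ x ∂(volume.restrict (Set.Ioi (0:ℝ))),
        ‖(χ n x * σ x) ^ 2‖ ≤ bound x := by
      filter_upwards [Filter.eventually_ge_atTop 2] with n hn
      rw [ae_restrict_iff' measurableSet_Ioi]
      refine Filter.Eventually.of_forall (fun x hx => ?_)
      by_cases hx1 : x ≤ 1
      · have hb : bound x = 1 := Set.indicator_of_mem (Set.mem_Ioc.2 ⟨hx, hx1⟩) _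
        rw [hb, Real.norm_eq_abs, abs_of_nonneg (sq_nonneg _)]
        obtain ⟨hχ0, hχ1⟩ := hχ01 n hn x hx
        obtain ⟨hσ0, hσ1⟩ := hσ_01 x hx
        have ht1 : χ n x * σ x ≤ 1 := by nlinarith
        have ht0 : 0 ≤ χ n x * σ x := mul_nonneg hχ0 hσ0
        nlinarith
      · rw [hχtop n hn x (not_le.1 hx1), zero_mul]
        have : (0:ℝ) ≤ bound x := Set.indicator_nonneg (fun _ _ => zero_le_one) x
        simpa using this
    have h_lim : ∀ᵐ x ∂(volume.restrict (Set.Ioi (0:ℝ))),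
        Tendsto (fun n : ℕ => (χ n x * σ x) ^ 2) atTop (nhds 0) := by
      rw [ae_restrict_iff' measurableSet_Ioi]
      refine Filter.Eventually.of_forall (fun x hx => ?_)
      by_cases hx1 : x < 1
      · have hg0 : Tendsto (fun n : ℕ => (F x * (F ((n:ℝ))⁻¹)⁻¹) ^ 2) atTop (nhds 0) := by
          have h1 : Tendsto (fun n : ℕ => F x * (F ((n:ℝ))⁻¹)⁻¹) atTop (nhds 0) := by
            simpa using (hνt.inv_tendsto_atTop).const_mul (F x)
          simpa using h1.pow 2
        refine squeeze_zero' (Filter.Eventually.of_forall (fun n => sq_nonneg _)) ?_ hg0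
        filter_upwards [Filter.eventually_ge_atTop 2,
          tendsto_inv_atTop_nhds_zero_nat.eventually (eventually_lt_nhds (show (0:ℝ) < x from hx))] with n hn hna
        have hν : 0 < F ((n:ℝ))⁻¹ := hνpos n hn
        rw [hχ, if_neg (not_le.2 hna), if_pos hx1]
        obtain ⟨hσ0, hσ1⟩ := hσ_01 x hx
        have hd0 : 0 ≤ F x / F ((n:ℝ))⁻¹ := div_nonneg (hFpos x hx hx1).le hν.le
        have hd0' : 0 ≤ F x * (F ((n:ℝ))⁻¹)⁻¹ := by rw [← div_eq_mul_inv]; exact hd0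
        have hle : F x / F ((n:ℝ))⁻¹ * σ x ≤ F x * (F ((n:ℝ))⁻¹)⁻¹ := by
          rw [div_eq_mul_inv]; exact mul_le_of_le_one_right hd0' hσ1
        have h0 : 0 ≤ F x / F ((n:ℝ))⁻¹ * σ x := mul_nonneg hd0 hσ0
        exact pow_le_pow_left₀ h0 hle 2
      · apply Tendsto.congr' _ (tendsto_const_nhds (x := (0:ℝ)))
        filter_upwards [Filter.eventually_ge_atTop 2] with n hn
        have hχx : χ n x = 0 := by
          have h12 : ((n:ℝ))⁻¹ < 1 := lt_of_le_of_lt (han n hn).2 (by norm_num)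
          rw [hχ, if_neg (not_le.2 (h12.trans_le (not_lt.1 hx1))),
            if_neg (not_lt.2 (not_lt.1 hx1))]
        rw [hχx, zero_mul]
        norm_num
    have := tendsto_integral_filter_of_dominated_convergence bound hF_meas h_bound hbound_int h_lim
    simpa using this
  refine ⟨part1, part2, part3, ?_⟩
  exact hνt.inv_tendsto_atTop
end

section
/- Let γ > 0. Suppose η : (0,∞) → ℝ is differentiable with ∫₀^∞ η(x)² dx < ∞, and the function x ↦ c(x)η'(x) is differentiable on (0,∞) with (c(x)η'(x))' = γ·η(x) for every x > 0. Then either η(x) ≥ 0 for all x > 0 and η is non-increasing on (0,∞) (x ≤ y implies η(y) ≤ η(x)), or η(x) ≤ 0 for all x > 0 and η is non-decreasing on (0,∞). -/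
open MeasureTheory Filter Set Topology

/-- Key lemma: there is no point where both η and cη' are strictly positive;
otherwise η stays above a positive constant on a half-line and cannot be L². -/
lemma no_pos_pos (c : ℝ → ℝ)
    (hc_pos : ∀ x > (0:ℝ), 0 < c x)
    (γ : ℝ) (hγ : 0 < γ)
    (η : ℝ → ℝ)
    (hη_diff : ∀ x > (0:ℝ), DifferentiableAt ℝ η x)
    (hη_L2 : MeasureTheory.IntegrableOn (fun x => (η x) ^ 2) (Set.Ioi 0))
    (hode : ∀ x > (0:ℝ), HasDerivAt (fun y => c y * deriv η y) (γ * η x) x)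
    (x₀ : ℝ) (hx₀ : 0 < x₀) (h1 : 0 < η x₀) (h2 : 0 < c x₀ * deriv η x₀) : False := by
  set u : ℝ → ℝ := fun y => c y * deriv η y with hu_def
  have hu_cont : ∀ x > (0:ℝ), ContinuousAt u x := fun x hx => (hode x hx).continuousAt
  have hη_cont : ∀ x > (0:ℝ), ContinuousAt η x := fun x hx => (hη_diff x hx).continuousAt
  have hderiv_eq : ∀ x > (0:ℝ), deriv η x = u x / c x := by
    intro x hx
    rw [eq_div_iff (ne_of_gt (hc_pos x hx))]
    simp only [hu_def]
    ring
  set A : Set ℝ := {x | η x₀ ≤ η x ∧ u x₀ ≤ u x} with hA_def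
  have key : ∀ X, x₀ ≤ X → X ∈ A := by
    intro X hX
    have hIcc_pos : Icc x₀ X ⊆ Ioi 0 := fun t ht => lt_of_lt_of_le hx₀ ht.1
    have hηc : ContinuousOn η (Icc x₀ X) :=
      fun t ht => (hη_cont t (hIcc_pos ht)).continuousWithinAt
    have huc : ContinuousOn u (Icc x₀ X) :=
      fun t ht => (hu_cont t (hIcc_pos ht)).continuousWithinAt
    have hclosed : IsClosed (A ∩ Icc x₀ X) := by
      have h1c : IsClosed (Icc x₀ X ∩ η ⁻¹' (Ici (η x₀))) :=
        hηc.preimage_isClosed_of_isClosed isClosed_Icc isClosed_Ici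
      have h2c : IsClosed (Icc x₀ X ∩ u ⁻¹' (Ici (u x₀))) :=
        huc.preimage_isClosed_of_isClosed isClosed_Icc isClosed_Ici
      have hEq : A ∩ Icc x₀ X =
          (Icc x₀ X ∩ η ⁻¹' (Ici (η x₀))) ∩ (Icc x₀ X ∩ u ⁻¹' (Ici (u x₀))) := by
        ext t
        simp only [hA_def, Set.mem_inter_iff, Set.mem_setOf_eq, Set.mem_preimage,
          Set.mem_Ici]
        tauto
      rw [hEq]
      exact h1c.inter h2c
    have hx₀A : x₀ ∈ A := ⟨le_refl _, le_refl _⟩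
    refine hclosed.Icc_subset_of_forall_exists_gt hx₀A ?_ ⟨hX, le_refl X⟩
    rintro x ⟨hxA, hx1, hx2⟩ y hy
    rw [Set.mem_setOf_eq] at hxA
    rw [Set.mem_Ioi] at hy
    have hxpos : (0:ℝ) < x := lt_of_lt_of_le hx₀ hx1
    have hηx : 0 < η x := lt_of_lt_of_le h1 hxA.1
    have hux : 0 < u x := lt_of_lt_of_le h2 hxA.2
    have hev : ∀ᶠ t in 𝓝 x, 0 < η t ∧ 0 < t :=
      ((hη_cont x hxpos).eventually (eventually_gt_nhds hηx)).and
        (eventually_gt_nhds hxpos)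
    obtain ⟨δ, hδ, hball⟩ := Metric.eventually_nhds_iff.mp hev
    set ε := min (δ/2) ((y - x)/2) with hε_def
    have hε0 : 0 < ε := lt_min (by linarith) (by linarith)
    have hεδ : ε < δ := lt_of_le_of_lt (min_le_left _ _) (by linarith)
    have hεy : x + ε ≤ y := by
      have : ε ≤ (y - x)/2 := min_le_right _ _
      linarith
    have hprop : ∀ t ∈ Icc x (x + ε), 0 < η t ∧ 0 < t := by
      intro t ht
      apply hball
      rw [Real.dist_eq, abs_of_nonneg (by linarith [ht.1])]
      linarith [ht.2]
    have huderiv : ∀ t ∈ interior (Icc x (x + ε)), 0 < deriv u t := by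
      intro t ht
      rw [interior_Icc] at ht
      have h := hprop t (Ioo_subset_Icc_self ht)
      rw [(hode t h.2).deriv]
      exact mul_pos hγ h.1
    have humono : StrictMonoOn u (Icc x (x + ε)) :=
      strictMonoOn_of_deriv_pos (convex_Icc _ _)
        (fun t ht => (hu_cont t (hprop t ht).2).continuousWithinAt) huderiv
    have hx' : x ∈ Icc x (x + ε) := ⟨le_refl _, by linarith⟩
    have hy' : x + ε ∈ Icc x (x + ε) := ⟨by linarith, le_refl _⟩
    have hu_gt : ∀ t ∈ Ioc x (x + ε), u x < u t := by
      intro t ht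
      exact humono hx' ⟨ht.1.le, ht.2⟩ ht.1
    have hηderiv : ∀ t ∈ interior (Icc x (x + ε)), 0 < deriv η t := by
      intro t ht
      rw [interior_Icc] at ht
      have htpos := (hprop t (Ioo_subset_Icc_self ht)).2
      rw [hderiv_eq t htpos]
      exact div_pos (lt_trans hux (hu_gt t ⟨ht.1, ht.2.le⟩)) (hc_pos t htpos)
    have hηmono : StrictMonoOn η (Icc x (x + ε)) :=
      strictMonoOn_of_deriv_pos (convex_Icc _ _)
        (fun t ht => (hη_cont t (hprop t ht).2).continuousWithinAt) hηderiv
    refine ⟨x + ε, ⟨?_, ?_⟩, by linarith, hεy⟩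
    · exact le_of_lt (lt_of_le_of_lt hxA.1 (hηmono hx' hy' (by linarith)))
    · exact le_of_lt (lt_of_le_of_lt hxA.2 (hu_gt (x + ε) ⟨by linarith, le_refl _⟩))
  -- contradiction with square-integrability
  have hint : IntegrableOn (fun x => (η x) ^ 2) (Ioi x₀) :=
    hη_L2.mono_set (Ioi_subset_Ioi hx₀.le)
  have hconst : IntegrableOn (fun _ : ℝ => (η x₀) ^ 2) (Ioi x₀) := by
    apply hint.mono' aestronglyMeasurable_const
    filter_upwards [ae_restrict_mem measurableSet_Ioi] with t ht
    have h := (key t (le_of_lt ht)).1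
    rw [Real.norm_eq_abs, abs_of_nonneg (sq_nonneg _)]
    exact pow_le_pow_left₀ h1.le h 2
  rw [integrableOn_const_iff] at hconst
  rcases hconst with h | h
  · exact pow_ne_zero 2 (ne_of_gt h1) (enorm_eq_zero.mp h)
  · rw [Real.volume_Ioi] at h
    exact absurd h (by simp)

/-- The ODE hypothesis transfers to `-η`. -/
lemma hode_neg (c : ℝ → ℝ) (γ : ℝ) (η : ℝ → ℝ)
    (hode : ∀ x > (0:ℝ), HasDerivAt (fun y => c y * deriv η y) (γ * η x) x) :
    ∀ x > (0:ℝ),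
      HasDerivAt (fun y => c y * deriv (fun z => -η z) y) (γ * (-η x)) x := by
  intro x hx
  have heq : (fun y => c y * deriv (fun z => -η z) y)
      = fun y => -(c y * deriv η y) := by
    funext y
    rw [deriv.fun_neg]
    ring
  rw [heq, mul_neg]
  exact (hode x hx).neg

/-- At an interior zero of η, cη' cannot be positive. -/
lemma zero_u_nonpos (c : ℝ → ℝ)
    (hc_pos : ∀ x > (0:ℝ), 0 < c x)
    (γ : ℝ) (hγ : 0 < γ)
    (η : ℝ → ℝ)
    (hη_diff : ∀ x > (0:ℝ), DifferentiableAt ℝ η x)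
    (hη_L2 : MeasureTheory.IntegrableOn (fun x => (η x) ^ 2) (Set.Ioi 0))
    (hode : ∀ x > (0:ℝ), HasDerivAt (fun y => c y * deriv η y) (γ * η x) x)
    (x : ℝ) (hx : 0 < x) (h0 : η x = 0) : c x * deriv η x ≤ 0 := by
  by_contra hcon
  push_neg at hcon
  have hev : ∀ᶠ t in 𝓝 x, 0 < c t * deriv η t ∧ 0 < t :=
    ((hode x hx).continuousAt.eventually (eventually_gt_nhds hcon)).and
      (eventually_gt_nhds hx)
  obtain ⟨δ, hδ, hball⟩ := Metric.eventually_nhds_iff.mp hev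
  set ε := δ/2 with hε_def
  have hε0 : 0 < ε := half_pos hδ
  have hprop : ∀ t ∈ Icc x (x + ε), 0 < c t * deriv η t ∧ 0 < t := by
    intro t ht
    apply hball
    rw [Real.dist_eq, abs_of_nonneg (by linarith [ht.1])]
    have := ht.2
    simp only [hε_def] at this ⊢
    linarith
  have hηderiv : ∀ t ∈ interior (Icc x (x + ε)), 0 < deriv η t := by
    intro t ht
    rw [interior_Icc] at ht
    have h := hprop t (Ioo_subset_Icc_self ht)
    have hd : deriv η t = (c t * deriv η t) / (c t) := by
      rw [eq_div_iff (ne_of_gt (hc_pos t h.2))]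
      ring
    rw [hd]
    exact div_pos h.1 (hc_pos t h.2)
  have hmono : StrictMonoOn η (Icc x (x + ε)) :=
    strictMonoOn_of_deriv_pos (convex_Icc _ _)
      (fun t ht => ((hη_diff t (hprop t ht).2).continuousAt).continuousWithinAt) hηderiv
  have hx' : x ∈ Icc x (x + ε) := ⟨le_refl _, by linarith⟩
  have hy' : x + ε ∈ Icc x (x + ε) := ⟨by linarith, le_refl _⟩
  have hηpos : 0 < η (x + ε) := by
    have := hmono hx' hy' (by linarith)
    rw [h0] at this
    exact this
  exact no_pos_pos c hc_pos γ hγ η hη_diff hη_L2 hode (x + ε) (hprop (x + ε) hy').2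
    hηpos (hprop (x + ε) hy').1

/-- Where η is negative, cη' is nonnegative. -/
lemma u_nonneg_of_neg (c : ℝ → ℝ)
    (hc_pos : ∀ x > (0:ℝ), 0 < c x)
    (γ : ℝ) (hγ : 0 < γ)
    (η : ℝ → ℝ)
    (hη_diff : ∀ x > (0:ℝ), DifferentiableAt ℝ η x)
    (hη_L2 : MeasureTheory.IntegrableOn (fun x => (η x) ^ 2) (Set.Ioi 0))
    (hode : ∀ x > (0:ℝ), HasDerivAt (fun y => c y * deriv η y) (γ * η x) x)
    (x : ℝ) (hx : 0 < x) (h : η x < 0) : 0 ≤ c x * deriv η x := by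
  by_contra hcon
  push_neg at hcon
  refine no_pos_pos c hc_pos γ hγ (fun z => -η z)
    (fun t ht => (hη_diff t ht).neg)
    (by simpa only [neg_sq] using hη_L2)
    (hode_neg c γ η hode) x hx (by simpa using h) ?_
  rw [deriv.fun_neg]
  have hq : c x * -deriv η x = -(c x * deriv η x) := by ring
  rw [hq]
  linarith

/-- η has a constant sign on (0,∞). -/
lemma sign_dichotomy (c : ℝ → ℝ)
    (hc_pos : ∀ x > (0:ℝ), 0 < c x)
    (γ : ℝ) (hγ : 0 < γ)
    (η : ℝ → ℝ)
    (hη_diff : ∀ x > (0:ℝ), DifferentiableAt ℝ η x)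
    (hη_L2 : MeasureTheory.IntegrableOn (fun x => (η x) ^ 2) (Set.Ioi 0))
    (hode : ∀ x > (0:ℝ), HasDerivAt (fun y => c y * deriv η y) (γ * η x) x) :
    (∀ x > (0:ℝ), 0 ≤ η x) ∨ (∀ x > (0:ℝ), η x ≤ 0) := by
  by_contra hcon
  push_neg at hcon
  obtain ⟨⟨a, ha, haneg⟩, ⟨b, hb, hbpos⟩⟩ := hcon
  obtain ⟨z, p, hz0, hzp, hηz, hηp⟩ :
      ∃ z p : ℝ, 0 < z ∧ z < p ∧ η z = 0 ∧ η p ≠ 0 := by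
    rcases lt_trichotomy a b with h | h | h
    · have hcont : ContinuousOn η (Icc a b) := fun t ht =>
        ((hη_diff t (lt_of_lt_of_le ha ht.1)).continuousAt).continuousWithinAt
      obtain ⟨z, hzmem, hz⟩ := intermediate_value_Ioo h.le hcont
        (show (0:ℝ) ∈ Ioo (η a) (η b) from ⟨haneg, hbpos⟩)
      exact ⟨z, b, lt_trans ha hzmem.1, hzmem.2, hz, ne_of_gt hbpos⟩
    · rw [h] at haneg; linarith
    · have hcont : ContinuousOn η (Icc b a) := fun t ht =>
        ((hη_diff t (lt_of_lt_of_le hb ht.1)).continuousAt).continuousWithinAt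
      obtain ⟨z, hzmem, hz⟩ := intermediate_value_Ioo' h.le hcont
        (show (0:ℝ) ∈ Ioo (η a) (η b) from ⟨haneg, hbpos⟩)
      exact ⟨z, a, lt_trans hb hzmem.1, hzmem.2, hz, ne_of_lt haneg⟩
  set F : ℝ → ℝ := fun t => (c t * deriv η t) * η t with hF_def
  have hFderiv : ∀ t > (0:ℝ),
      HasDerivAt F (γ * η t * η t + (c t * deriv η t) * deriv η t) t :=
    fun t ht => (hode t ht).mul ((hη_diff t ht).hasDerivAt)
  have hsign : ∀ t > (0:ℝ), F t ≤ 0 := by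
    intro t ht
    rcases lt_trichotomy (η t) 0 with h | h | h
    · have hu := u_nonneg_of_neg c hc_pos γ hγ η hη_diff hη_L2 hode t ht h
      simp only [hF_def]
      nlinarith
    · simp [hF_def, h]
    · have hu : c t * deriv η t ≤ 0 := by
        by_contra hcon2
        push_neg at hcon2
        exact no_pos_pos c hc_pos γ hγ η hη_diff hη_L2 hode t ht h hcon2
      simp only [hF_def]
      nlinarith
  have hFz : F z = 0 := by simp [hF_def, hηz]
  have hIcc_pos : Icc z p ⊆ Ioi 0 := fun t ht => lt_of_lt_of_le hz0 ht.1
  have hFc : ContinuousOn F (Icc z p) := fun t ht =>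
    ((hFderiv t (hIcc_pos ht)).continuousAt).continuousWithinAt
  have hFdiff : DifferentiableOn ℝ F (interior (Icc z p)) := by
    rw [interior_Icc]
    exact fun t ht =>
      ((hFderiv t (hIcc_pos (Ioo_subset_Icc_self ht))).differentiableAt).differentiableWithinAt
  have hFd_nonneg : ∀ t ∈ interior (Icc z p), 0 ≤ deriv F t := by
    rw [interior_Icc]
    intro t ht
    have htpos : 0 < t := hIcc_pos (Ioo_subset_Icc_self ht)
    rw [(hFderiv t htpos).deriv]
    have h1 : 0 ≤ γ * η t * η t := by nlinarith [mul_nonneg hγ.le (sq_nonneg (η t))]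
    have h2 : 0 ≤ (c t * deriv η t) * deriv η t := by
      nlinarith [mul_nonneg (hc_pos t htpos).le (sq_nonneg (deriv η t))]
    linarith
  have hFmono := monotoneOn_of_deriv_nonneg (convex_Icc z p) hFc hFdiff hFd_nonneg
  have hFzero : ∀ t ∈ Icc z p, F t = 0 := by
    intro t ht
    have h1 : F z ≤ F t := hFmono ⟨le_refl _, hzp.le⟩ ht ht.1
    have h2 : F t ≤ F p := hFmono ht ⟨hzp.le, le_refl _⟩ ht.2
    have h3 := hsign p (lt_trans hz0 hzp)
    linarith
  have hηzero : ∀ t ∈ Ioo z p, η t = 0 := by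
    intro t ht
    have htpos : 0 < t := lt_trans hz0 ht.1
    have hloc : F =ᶠ[𝓝 t] fun _ => (0:ℝ) := by
      filter_upwards [Ioo_mem_nhds ht.1 ht.2] with s hs
      exact hFzero s (Ioo_subset_Icc_self hs)
    have h0' : HasDerivAt F 0 t :=
      (hasDerivAt_const t (0:ℝ)).congr_of_eventuallyEq hloc
    have heq := (hFderiv t htpos).unique h0'
    have hcc := hc_pos t htpos
    have hsq : η t ^ 2 ≤ 0 := by
      nlinarith [mul_nonneg hcc.le (sq_nonneg (deriv η t)),
        mul_nonneg hγ.le (sq_nonneg (η t))]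
    exact pow_eq_zero_iff two_ne_zero |>.mp (le_antisymm hsq (sq_nonneg _))
  have h1 : Tendsto η (𝓝[<] p) (𝓝 (η p)) :=
    ((hη_diff p (lt_trans hz0 hzp)).continuousAt).continuousWithinAt
  have hmemIoo : Ioo z p ∈ 𝓝[<] p := Ioo_mem_nhdsLT_of_mem ⟨hzp, le_refl _⟩
  have h2 : Tendsto η (𝓝[<] p) (𝓝 0) := by
    refine Tendsto.congr' ?_ tendsto_const_nhds
    filter_upwards [hmemIoo] with t ht using (hηzero t ht).symm
  exact hηp (tendsto_nhds_unique h1 h2)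

/-- If η is nonnegative then it is non-increasing. -/
lemma antitone_of_nonneg (c : ℝ → ℝ)
    (hc_pos : ∀ x > (0:ℝ), 0 < c x)
    (γ : ℝ) (hγ : 0 < γ)
    (η : ℝ → ℝ)
    (hη_diff : ∀ x > (0:ℝ), DifferentiableAt ℝ η x)
    (hη_L2 : MeasureTheory.IntegrableOn (fun x => (η x) ^ 2) (Set.Ioi 0))
    (hode : ∀ x > (0:ℝ), HasDerivAt (fun y => c y * deriv η y) (γ * η x) x)
    (hnn : ∀ x > (0:ℝ), 0 ≤ η x) :
    ∀ x y : ℝ, 0 < x → x ≤ y → η y ≤ η x := by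
  have hu : ∀ x > (0:ℝ), c x * deriv η x ≤ 0 := by
    intro x hx
    rcases (hnn x hx).eq_or_lt with h0 | hpos
    · exact zero_u_nonpos c hc_pos γ hγ η hη_diff hη_L2 hode x hx h0.symm
    · by_contra hcon
      push_neg at hcon
      exact no_pos_pos c hc_pos γ hγ η hη_diff hη_L2 hode x hx hpos hcon
  have hanti : AntitoneOn η (Ioi 0) := by
    apply antitoneOn_of_deriv_nonpos (convex_Ioi 0)
      (fun t ht => ((hη_diff t ht).continuousAt).continuousWithinAt)
    · rw [interior_Ioi]
      exact fun t ht => (hη_diff t ht).differentiableWithinAt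
    · rw [interior_Ioi]
      intro t ht
      have hcc := hc_pos t ht
      have hd : deriv η t = (c t * deriv η t) / (c t) := by
        rw [eq_div_iff (ne_of_gt hcc)]
        ring
      rw [hd]
      exact div_nonpos_of_nonpos_of_nonneg (hu t ht) hcc.le
  intro x y hx hxy
  exact hanti (Set.mem_Ioi.mpr hx) (Set.mem_Ioi.mpr (lt_of_lt_of_le hx hxy)) hxy

/-- Paper: structural claim preceding Proposition 2.10. Every L²-solution of
(cη')' = γη on (0,∞) is, up to sign, non-negative and non-increasing. -/
theorem stmt_11 (c : ℝ → ℝ)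
    (hc_cont : ContinuousOn c (Set.Ioi 0))
    (hc_pos : ∀ x > (0:ℝ), 0 < c x)
    (γ : ℝ) (hγ : 0 < γ)
    (η : ℝ → ℝ)
    (hη_diff : ∀ x > (0:ℝ), DifferentiableAt ℝ η x)
    (hη_L2 : MeasureTheory.IntegrableOn (fun x => (η x) ^ 2) (Set.Ioi 0))
    (hode : ∀ x > (0:ℝ), HasDerivAt (fun y => c y * deriv η y) (γ * η x) x) :
    ((∀ x > (0:ℝ), 0 ≤ η x) ∧
      ∀ x y : ℝ, 0 < x → x ≤ y → η y ≤ η x) ∨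
    ((∀ x > (0:ℝ), η x ≤ 0) ∧
      ∀ x y : ℝ, 0 < x → x ≤ y → η x ≤ η y) := by
  rcases sign_dichotomy c hc_pos γ hγ η hη_diff hη_L2 hode with h | h
  · exact Or.inl ⟨h, antitone_of_nonneg c hc_pos γ hγ η hη_diff hη_L2 hode h⟩
  · refine Or.inr ⟨h, ?_⟩
    have hmono := antitone_of_nonneg c hc_pos γ hγ (fun z => -η z)
      (fun t ht => (hη_diff t ht).neg)
      (by simpa only [neg_sq] using hη_L2)
      (hode_neg c γ η hode)
      (fun t ht => by simpa using neg_nonneg.mpr (h t ht))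
    intro x y hx hxy
    have := hmono x y hx hxy
    simp only [neg_le_neg_iff] at this
    exact this
end

section
/- Assume ∫₁^∞ s·c(s)⁻¹ ds = ∞. Let ψ : (0,∞) → ℝ be differentiable, with x ↦ c(x)ψ'(x) differentiable on (0,∞) and (c(x)ψ'(x))' = ψ(x) for every x > 0. Assume the limit L := lim_{x→0⁺} c(x)·ψ(x)·ψ'(x) exists and L ≥ 0 (this holds in particular under the boundary condition lim_{x→0⁺} c(x)ψ'(x) = γ·lim_{x→0⁺} ψ(x) with γ ≥ 0, both limits existing). If ψ is not identically zero on (0,∞), then ψ(x)² → ∞ as x → ∞; consequently ψ is unbounded and ∫₀^∞ |ψ(x)|ᵖ dx = ∞ for every p ∈ [1,∞). -/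
open MeasureTheory Filter Set Topology

private lemma monoAux13 {u u' : ℝ → ℝ} {β : ℝ} (hβ : 0 < β)
    (hd : ∀ x ∈ Ioi (0:ℝ), HasDerivAt u (u' x) x)
    (hnn : ∀ x ∈ Ioi β, 0 ≤ u' x) : MonotoneOn u (Ici β) := by
  apply monotoneOn_of_deriv_nonneg (convex_Ici β)
  · intro x hx; exact (hd x (lt_of_lt_of_le hβ hx)).continuousAt.continuousWithinAt
  · intro x hx; rw [interior_Ici] at hx
    exact ((hd x (hβ.trans hx)).differentiableAt).differentiableWithinAt
  · intro x hx; rw [interior_Ici] at hx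
    rw [(hd x ((hβ.trans hx))).deriv]; exact hnn x hx

private lemma strictMonoAux13 {u u' : ℝ → ℝ} {β : ℝ} (hβ : 0 < β)
    (hd : ∀ x ∈ Ioi (0:ℝ), HasDerivAt u (u' x) x)
    (hpos : ∀ x ∈ Ioi β, 0 < u' x) : StrictMonoOn u (Ici β) := by
  apply strictMonoOn_of_deriv_pos (convex_Ici β)
  · intro x hx; exact (hd x (lt_of_lt_of_le hβ hx)).continuousAt.continuousWithinAt
  · intro x hx; rw [interior_Ici] at hx
    rw [(hd x ((hβ.trans hx))).deriv]; exact hpos x hx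


section
variable (c ψ : ℝ → ℝ)

-- The key analytic lemma about the integral I
private lemma tendstoI13 {B : ℝ} (hB1 : 1 < B)
    (hc_cont : ContinuousOn c (Set.Ioi 0))
    (hc_pos : ∀ x > (0:ℝ), 0 < c x)
    (hgrowth : ∫⁻ s in Set.Ioi (1:ℝ), ENNReal.ofReal (s * (c s)⁻¹) = ⊤) :
    Tendsto (fun x => ∫ t in B..x, t * (c t)⁻¹) atTop atTop := by
  have hB0 : (0:ℝ) < B := lt_trans one_pos hB1
  set k : ℝ → ℝ := fun t => t * (c t)⁻¹ with hk_def
  set K : ℝ → ENNReal := fun t => ENNReal.ofReal (k t) with hK_def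
  have hk_cont : ContinuousOn k (Ioi 0) :=
    continuousOn_id.mul (hc_cont.inv₀ (fun x hx => (hc_pos x hx).ne'))
  -- integrability on positive intervals
  have hk_int : ∀ x y : ℝ, 0 < x → 0 < y → IntervalIntegrable k volume x y := by
    intro x y hx hy
    apply ContinuousOn.intervalIntegrable
    apply hk_cont.mono
    intro t ht
    rcases le_total x y with h | h
    · rw [uIcc_of_le h] at ht; exact lt_of_lt_of_le hx ht.1
    · rw [uIcc_of_ge h] at ht; exact lt_of_lt_of_le hy ht.1
  -- finite up to B
  have step1 : (∫⁻ t in Ioc 1 B, K t) < ⊤ := by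
    obtain ⟨M, hM⟩ := (isCompact_Icc.image_of_continuousOn
      (hk_cont.mono (fun t ht => lt_of_lt_of_le one_pos ht.1 :
        Icc (1:ℝ) B ⊆ Ioi 0))).bddAbove
    calc (∫⁻ t in Ioc 1 B, K t) ≤ ∫⁻ _ in Ioc 1 B, ENNReal.ofReal M := by
          apply setLIntegral_mono measurable_const
          intro t ht
          exact ENNReal.ofReal_le_ofReal (hM ⟨t, Ioc_subset_Icc_self ht, rfl⟩)
      _ = ENNReal.ofReal M * volume (Ioc 1 B) := setLIntegral_const _ _
      _ < ⊤ := ENNReal.mul_lt_top ENNReal.ofReal_lt_top measure_Ioc_lt_top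
  -- infinite beyond B
  have step2 : (∫⁻ t in Ioi B, K t) = ⊤ := by
    have hle := lintegral_union_le K (Ioc 1 B) (Ioi B) (μ := volume)
    rw [Ioc_union_Ioi_eq_Ioi hB1.le] at hle
    have : (⊤:ENNReal) ≤ (∫⁻ t in Ioc 1 B, K t) + ∫⁻ t in Ioi B, K t := hgrowth ▸ hle
    rcases ENNReal.add_eq_top.mp (top_le_iff.mp this) with h | h
    · exact absurd h step1.ne
    · exact h
  -- a.e.-measurability
  have hKmeas : AEMeasurable K (volume.restrict (Ioi B)) := by
    have h0 : AEMeasurable K (volume.restrict (Ioi 0)) :=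
      ENNReal.measurable_ofReal.comp_aemeasurable (hk_cont.aemeasurable measurableSet_Ioi)
    exact h0.mono_measure (Measure.restrict_mono (Ioi_subset_Ioi hB0.le) le_rfl)
  -- value of finite pieces
  have hpiece : ∀ n : ℕ, (∫⁻ t in Ioc B (B + n), K t)
      = ENNReal.ofReal (∫ t in B..(B + n), k t) := by
    intro n
    have hBn : B ≤ B + n := le_add_of_nonneg_right n.cast_nonneg
    rw [intervalIntegral.integral_of_le hBn]
    have hint : IntegrableOn k (Ioc B (B + n)) volume := by
      have h2 : IntegrableOn k (Icc B (B + n)) volume :=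
        (hk_cont.mono (fun t ht => lt_of_lt_of_le hB0 ht.1 :
          Icc B (B + n) ⊆ Ioi 0)).integrableOn_Icc
      exact h2.mono_set Ioc_subset_Icc_self
    rw [ofReal_integral_eq_lintegral_ofReal hint]
    exact (ae_restrict_iff' measurableSet_Ioc).mpr (ae_of_all _ (fun t ht =>
      mul_nonneg (le_of_lt (lt_trans hB0 ht.1)) (le_of_lt (inv_pos.mpr
        (hc_pos t (lt_trans hB0 ht.1))))))
  -- sup of pieces is top
  have hsup : (⨆ n : ℕ, ∫⁻ t in Ioc B (B + n), K t) = ⊤ := by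
    set fn : ℕ → ℝ → ENNReal := fun n => (Ioc B (B + n)).indicator K with hfn_def
    have hmono : ∀ t, Monotone fun n => fn n t := by
      intro t n m hnm
      exact Set.indicator_le_indicator_of_subset
        (Ioc_subset_Ioc_right ((add_le_add_iff_left B).mpr (Nat.cast_le.mpr hnm)))
        (fun _ => zero_le) t
    have hpt : ∀ t, (⨆ n : ℕ, fn n t) = (Ioi B).indicator K t := by
      intro t
      by_cases ht : t ∈ Ioi B
      · rw [Set.indicator_of_mem ht]
        obtain ⟨n, hn⟩ := exists_nat_ge (t - B)
        apply le_antisymm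
        · exact iSup_le fun m => Set.indicator_le_self _ _ t
        · have : t ∈ Ioc B (B + n) := ⟨ht, by linarith⟩
          calc K t = fn n t := (Set.indicator_of_mem this K).symm
            _ ≤ _ := le_iSup (fun m => fn m t) n
      · simp only [Set.indicator_of_notMem ht]
        have : ∀ n : ℕ, fn n t = 0 := fun n =>
          Set.indicator_of_notMem (fun hmem => ht (Ioc_subset_Ioi_self hmem)) K
        simp [this]
    have hmeas : ∀ n : ℕ, AEMeasurable (fn n) (volume.restrict (Ioi B)) :=
      fun n => hKmeas.indicator measurableSet_Ioc
    have hMCT := lintegral_iSup' hmeas (ae_of_all _ hmono)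
    have hLHS : (∫⁻ t in Ioi B, ⨆ n : ℕ, fn n t) = ⊤ := by
      rw [show (fun t => ⨆ n : ℕ, fn n t) = (Ioi B).indicator K from funext hpt,
        lintegral_indicator measurableSet_Ioi, Measure.restrict_restrict measurableSet_Ioi,
        Set.inter_self]
      exact step2
    have hRHS : ∀ n : ℕ, (∫⁻ t, fn n t ∂(volume.restrict (Ioi B)))
        = ∫⁻ t in Ioc B (B + n), K t := by
      intro n
      rw [lintegral_indicator measurableSet_Ioc, Measure.restrict_restrict measurableSet_Ioc,
        Set.inter_eq_left.mpr Ioc_subset_Ioi_self]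
    rw [← funext hRHS]
    rw [← hMCT]
    exact hLHS
  -- conclude tendsto
  rw [tendsto_atTop]
  intro M
  have key : ∃ n : ℕ, M ≤ ∫ t in B..(B + n), k t := by
    by_contra hcon
    push_neg at hcon
    have : (⨆ n : ℕ, ∫⁻ t in Ioc B (B + n), K t) ≤ ENNReal.ofReal M := by
      apply iSup_le
      intro n
      rw [hpiece n]
      exact ENNReal.ofReal_le_ofReal (hcon n).le
    rw [hsup] at this
    exact lt_irrefl ⊤ (lt_of_le_of_lt this ENNReal.ofReal_lt_top)
  obtain ⟨n, hn⟩ := key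
  filter_upwards [eventually_ge_atTop (B + n)] with x hx
  have hBn0 : (0:ℝ) < B + n := by positivity
  have hx0 : (0:ℝ) < x := lt_of_lt_of_le hBn0 hx
  have hadd := intervalIntegral.integral_add_adjacent_intervals
    (hk_int B (B + n) hB0 hBn0) (hk_int (B + n) x hBn0 hx0)
  have hnn : 0 ≤ ∫ t in (B + n)..x, k t := by
    apply intervalIntegral.integral_nonneg hx
    intro u hu
    have hu0 : 0 < u := lt_of_lt_of_le hBn0 hu.1
    exact mul_nonneg hu0.le (inv_pos.mpr (hc_pos u hu0)).le
  calc M ≤ ∫ t in B..(B + n), k t := hn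
    _ ≤ ∫ t in B..x, k t := by rw [← hadd]; linarith
end


/-- Paper: Lemma 5.2. Under ∫₁^∞ s/c(s) ds = ∞, the equation (cψ')' = ψ with
non-negative boundary value L = lim (c·ψ·ψ')(0⁺) ≥ 0 has no non-zero bounded or
L^p solution: a non-zero solution satisfies ψ(x)² → ∞. -/
theorem stmt_13 (c : ℝ → ℝ)
    (hc_cont : ContinuousOn c (Set.Ioi 0))
    (hc_pos : ∀ x > (0:ℝ), 0 < c x)
    (hgrowth : ∫⁻ s in Set.Ioi (1:ℝ), ENNReal.ofReal (s * (c s)⁻¹) = ⊤)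
    (ψ : ℝ → ℝ)
    (hψ_diff : ∀ x > (0:ℝ), DifferentiableAt ℝ ψ x)
    (hode : ∀ x > (0:ℝ), HasDerivAt (fun y => c y * deriv ψ y) (ψ x) x)
    (L : ℝ) (hL_nonneg : 0 ≤ L)
    (hL : Filter.Tendsto (fun x => c x * ψ x * deriv ψ x)
      (nhdsWithin 0 (Set.Ioi 0)) (nhds L))
    (hψ_ne : ∃ x > (0:ℝ), ψ x ≠ 0) :
    Filter.Tendsto (fun x => (ψ x) ^ 2) Filter.atTop Filter.atTop ∧
    (¬ ∃ M : ℝ, ∀ x > (0:ℝ), |ψ x| ≤ M) ∧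
    (∀ p : ℝ, 1 ≤ p →
      ∫⁻ x in Set.Ioi (0:ℝ), ENNReal.ofReal (|ψ x| ^ p) = ⊤) := by
  obtain ⟨x₀, hx₀, hψx₀⟩ := hψ_ne
  set f : ℝ → ℝ := fun x => ψ x * (c x * deriv ψ x) with hf_def
  set g : ℝ → ℝ := fun x => (ψ x) ^ 2 with hg_def
  -- derivative of f
  have hfd : ∀ x ∈ Ioi (0:ℝ), HasDerivAt f (c x * (deriv ψ x)^2 + (ψ x)^2) x := by
    intro x hx
    have h := ((hψ_diff x hx).hasDerivAt.mul (hode x hx))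
    convert h using 1
    · rfl
    · rfl
    · rfl
    ring
  -- f is monotone on Ioi 0
  have hfmono : MonotoneOn f (Ioi 0) := by
    apply monotoneOn_of_deriv_nonneg (convex_Ioi 0)
    · intro x hx; exact (hfd x hx).continuousAt.continuousWithinAt
    · intro x hx; rw [interior_Ioi] at hx
      exact (hfd x hx).differentiableAt.differentiableWithinAt
    · intro x hx; rw [interior_Ioi] at hx
      rw [(hfd x hx).deriv]
      exact add_nonneg (mul_nonneg (hc_pos x hx).le (sq_nonneg _)) (sq_nonneg _)
  -- L ≤ f
  have hLf : Tendsto f (nhdsWithin 0 (Ioi 0)) (nhds L) := hL.congr (fun x => by simp only [hf_def]; ring)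
  have hfL : ∀ x ∈ Ioi (0:ℝ), L ≤ f x := by
    intro x hx
    apply le_of_tendsto hLf
    filter_upwards [Ioo_mem_nhdsGT_of_mem ⟨le_refl 0, hx⟩] with y hy
    exact hfmono hy.1 hx hy.2.le
  -- find a with f a > 0
  have hd_pos : 0 < c x₀ * (deriv ψ x₀)^2 + (ψ x₀)^2 := by
    have h1 := hc_pos x₀ hx₀
    have h2 : 0 < (ψ x₀)^2 := lt_of_le_of_ne (sq_nonneg _) (Ne.symm (pow_ne_zero 2 hψx₀))
    have h3 : 0 ≤ c x₀ * (deriv ψ x₀)^2 := mul_nonneg h1.le (sq_nonneg _)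
    linarith
  obtain ⟨a, hfa, hax₀⟩ : ∃ a, f x₀ < f a ∧ x₀ < a := by
    have hs := hasDerivAt_iff_tendsto_slope.mp (hfd x₀ hx₀)
    have hev : ∀ᶠ y in nhdsWithin x₀ (Ioi x₀), 0 < slope f x₀ y :=
      (hs.mono_left (nhdsWithin_mono x₀ (fun y hy => ne_of_gt hy))).eventually
        (eventually_gt_nhds hd_pos)
    obtain ⟨y, hy0, hy⟩ := (hev.and self_mem_nhdsWithin).exists
    refine ⟨y, ?_, hy⟩
    have h1 : 0 < y - x₀ := sub_pos.mpr hy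
    have := mul_pos hy0 h1
    rw [slope_def_field, div_mul_cancel₀ _ h1.ne'] at this
    linarith
  have ha0 : 0 < a := lt_trans hx₀ hax₀
  have hfa_pos : 0 < f a := lt_of_le_of_lt (le_trans hL_nonneg (hfL x₀ hx₀)) hfa
  -- f ≥ f a on Ici a
  have hfge : ∀ x ∈ Ici a, f a ≤ f x := fun x hx => hfmono (mem_Ioi.mpr ha0)
    (mem_Ioi.mpr (lt_of_lt_of_le ha0 hx)) hx
  -- derivative of g
  have hgd : ∀ x ∈ Ioi (0:ℝ), HasDerivAt g (2 * (f x * (c x)⁻¹)) x := by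
    intro x hx
    have h := (hψ_diff x hx).hasDerivAt.pow 2
    convert h using 1
    · rfl
    · rfl
    · rfl
    have hcne := (hc_pos x hx).ne'
    field_simp [hf_def]
    ring
  -- g strictly increasing on Ici a
  have hgs : StrictMonoOn g (Ici a) := by
    apply strictMonoOn_of_deriv_pos (convex_Ici a)
    · intro x hx; exact (hgd x (lt_of_lt_of_le ha0 hx)).continuousAt.continuousWithinAt
    · intro x hx; rw [interior_Ici] at hx
      have hx0 : (0:ℝ) < x := lt_trans ha0 hx
      rw [(hgd x hx0).deriv]
      have h1 : 0 < f x := lt_of_lt_of_le hfa_pos (hfge x (mem_Ici.mpr (le_of_lt hx)))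
      have h2 := mul_pos h1 (inv_pos.mpr (hc_pos x hx0))
      linarith
  set b : ℝ := a + 1 with hb_def
  set δ : ℝ := g b with hδ_def
  have hb1 : 1 < b := by simp [hb_def]; linarith
  have hb0 : (0:ℝ) < b := lt_trans one_pos hb1
  have hδ_pos : 0 < δ := by
    have h1 : g a < g b := hgs (self_mem_Ici) (by rw [hb_def]; exact le_of_lt (lt_add_one a)) (by rw [hb_def]; exact lt_add_one a)
    have h2 : 0 ≤ g a := sq_nonneg _
    linarith
  have hgb : ∀ x ∈ Ici b, δ ≤ g x := fun x hx =>
    (hgs.monotoneOn (by simp [hb_def] : b ∈ Ici a) (le_trans (by simp [hb_def] : a ≤ b) hx) hx)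
  -- linear growth of f
  have hflin : ∀ x ∈ Ici b, δ * (x - b) + f b ≤ f x := by
    have hm : MonotoneOn (fun x => f x - δ * (x - b)) (Ici b) := by
      apply monoAux13 (u' := fun x => c x * (deriv ψ x)^2 + (ψ x)^2 - δ * 1) hb0
      · intro x hx
        exact (hfd x hx).sub (((hasDerivAt_id x).sub_const b).const_mul δ)
      · intro x hx
        have hx0 : (0:ℝ) < x := lt_trans hb0 hx
        have h1 : δ ≤ (ψ x)^2 := hgb x (mem_Ici.mpr (le_of_lt hx))
        have h2 : 0 ≤ c x * (deriv ψ x)^2 := by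
          have := hc_pos x hx0; positivity
        simp only [mul_one]
        linarith
    intro x hx
    have := hm self_mem_Ici hx hx
    simp only [sub_self, mul_zero, sub_zero] at this
    linarith
  set B : ℝ := 2 * b with hB_def
  have hB1 : 1 < B := by simp [hB_def]; linarith
  have hB0 : (0:ℝ) < B := lt_trans one_pos hB1
  have hBb : b ≤ B := by simp [hB_def]; linarith
  -- f x ≥ δ x / 2 for x ≥ B
  have hfBig : ∀ x ∈ Ici B, δ * x / 2 ≤ f x := by
    intro x hx
    have h1 : δ * (x - b) + f b ≤ f x := hflin x (le_trans hBb hx)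
    have h2 : f a ≤ f b := hfge b (by simp [hb_def])
    have h3 : x / 2 ≤ x - b := by
      have : 2 * b ≤ x := hx
      linarith
    nlinarith
  set I : ℝ → ℝ := fun x => ∫ t in B..x, t * (c t)⁻¹ with hI_def
  have hIder : ∀ x ∈ Ioi (0:ℝ), HasDerivAt I (x * (c x)⁻¹) x := by
    intro x hx
    have hk_cont : ContinuousOn (fun t => t * (c t)⁻¹) (Ioi 0) :=
      continuousOn_id.mul (hc_cont.inv₀ (fun u hu => (hc_pos u hu).ne'))
    apply intervalIntegral.integral_hasDerivAt_right
    · apply ContinuousOn.intervalIntegrable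
      apply hk_cont.mono
      intro t ht
      rcases le_total B x with h | h
      · rw [uIcc_of_le h] at ht; exact lt_of_lt_of_le hB0 ht.1
      · rw [uIcc_of_ge h] at ht; exact lt_of_lt_of_le hx ht.1
    · exact hk_cont.stronglyMeasurableAtFilter isOpen_Ioi x hx
    · exact (hk_cont x hx).continuousAt (isOpen_Ioi.mem_nhds hx)
  -- g x ≥ g B + δ I x on Ici B
  have hgI : ∀ x ∈ Ici B, g B + δ * I x ≤ g x := by
    have hm : MonotoneOn (fun x => g x - δ * I x) (Ici B) := by
      apply monoAux13 (u' := fun x => 2 * (f x * (c x)⁻¹) - δ * (x * (c x)⁻¹)) hB0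
      · intro x hx
        exact (hgd x hx).sub ((hIder x hx).const_mul δ)
      · intro x hx
        have hx0 : (0:ℝ) < x := lt_trans hB0 hx
        have hc := hc_pos x hx0
        have h1 : δ * x / 2 ≤ f x := hfBig x (mem_Ici.mpr (le_of_lt hx))
        have key : 2 * (f x * (c x)⁻¹) - δ * (x * (c x)⁻¹) = (2 * f x - δ * x) * (c x)⁻¹ := by
          ring
        rw [key]
        have h2 : 0 ≤ 2 * f x - δ * x := by linarith
        exact mul_nonneg h2 (inv_pos.mpr hc).le
    intro x hx
    have h4 : g B - δ * I B ≤ g x - δ * I x := hm self_mem_Ici hx hx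
    have hIB : I B = 0 := intervalIntegral.integral_same
    rw [hIB] at h4
    simp only [mul_zero, sub_zero] at h4
    linarith
  have htI : Tendsto I atTop atTop := tendstoI13 c hB1 hc_cont hc_pos hgrowth
  -- Conclusion 1
  have conc1 : Tendsto g atTop atTop := by
    apply tendsto_atTop_mono' atTop (f₁ := fun x => g B + δ * I x)
    · filter_upwards [eventually_ge_atTop B] with x hx
      exact hgI x hx
    · exact tendsto_atTop_add_const_left atTop (g B) (htI.const_mul_atTop hδ_pos)
  refine ⟨conc1, ?_, ?_⟩
  · rintro ⟨M, hM⟩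
    obtain ⟨x, hgx, hx0⟩ := ((conc1.eventually_gt_atTop (M^2)).and (eventually_gt_atTop 0)).exists
    have h1 : |ψ x| ≤ M := hM x hx0
    have h2 : (ψ x)^2 ≤ M^2 := by
      rw [← sq_abs]
      exact pow_le_pow_left₀ (abs_nonneg _) h1 2
    exact absurd hgx (not_lt.mpr h2)
  · intro p hp
    obtain ⟨R, hR⟩ := eventually_atTop.mp (conc1.eventually_ge_atTop 1)
    set R' : ℝ := max R 1 with hR'_def
    have hpt : ∀ x, (Ioi R').indicator (fun _ => (1:ENNReal)) x ≤ ENNReal.ofReal (|ψ x| ^ p) := by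
      intro x
      by_cases hx : x ∈ Ioi R'
      · rw [Set.indicator_of_mem hx]
        have h1 : 1 ≤ g x := hR x (le_trans (le_max_left _ _) (le_of_lt hx))
        have h2 : 1 ≤ |ψ x| := by
          have h1' : (1:ℝ) ≤ (ψ x)^2 := h1
          nlinarith [abs_nonneg (ψ x), sq_abs (ψ x)]
        have h3 : 1 ≤ |ψ x| ^ p := Real.one_le_rpow h2 (le_trans zero_le_one hp)
        exact (ENNReal.ofReal_one ▸ ENNReal.ofReal_le_ofReal h3)
      · rw [Set.indicator_of_notMem hx]; exact zero_le
    have hle : (∫⁻ x in Ioi (0:ℝ), (Ioi R').indicator (fun _ => (1:ENNReal)) x)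
        ≤ ∫⁻ x in Ioi (0:ℝ), ENNReal.ofReal (|ψ x| ^ p) := lintegral_mono hpt
    rw [lintegral_indicator measurableSet_Ioi, Measure.restrict_restrict measurableSet_Ioi] at hle
    have hR'sub : Ioi R' ∩ Ioi 0 = Ioi R' :=
      inter_eq_left.mpr (Ioi_subset_Ioi (le_trans zero_le_one (le_max_right R 1)))
    rw [hR'sub, setLIntegral_one, Real.volume_Ioi] at hle
    exact top_le_iff.mp hle
end

section
/- Suppose c : ℝ → ℝ is continuous with c(x) > 0 for every x > 0, c is differentiable on (0,1) with sup_{x∈(0,1)} |c'(x)| < ∞, and ∫₀¹ c(s)⁻¹ ds = ∞. Then there exists N and a sequence of continuously differentiable functions φₙ : [0,∞) → ℝ (n ≥ N) such that: 0 ≤ φₙ ≤ 1; φₙ(x) = 0 for x ∈ [0,1/n]; φₙ(x) = 1 for x ≥ 1; φₙ(x) → 1 as n → ∞ for every x > 0; the function x ↦ c(x)φₙ'(x) is differentiable on (0,∞) except at finitely many points; and ∫₀^∞ |deriv(c·φₙ')(x)| dx → 0 as n → ∞. -/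
open MeasureTheory Filter Set Topology

noncomputable def uA (n : ℕ) (s : ℝ) : ℝ := max 0 (min (min 1 ((n : ℝ) * s - 1)) (2 - 2 * s))

lemma uA_nonneg (n : ℕ) (s : ℝ) : 0 ≤ uA n s := le_max_left _ _

lemma uA_le_one (n : ℕ) (s : ℝ) : uA n s ≤ 1 :=
  max_le (by norm_num) ((min_le_left _ _).trans (min_le_left _ _))

lemma uA_zero_left (n : ℕ) {s : ℝ} (h : s ≤ (n : ℝ)⁻¹) : uA n s = 0 := by
  have h1 : (n : ℝ) * s ≤ 1 := by
    rcases Nat.eq_zero_or_pos n with rfl | hn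
    · simp
    · have hn' : (0 : ℝ) < n := by exact_mod_cast hn
      calc (n : ℝ) * s ≤ (n : ℝ) * (n : ℝ)⁻¹ := by
            exact mul_le_mul_of_nonneg_left h hn'.le
        _ = 1 := mul_inv_cancel₀ hn'.ne'
  exact max_eq_left (((min_le_left _ _).trans (min_le_right _ _)).trans (by linarith))

lemma uA_zero_right (n : ℕ) {s : ℝ} (h : 1 ≤ s) : uA n s = 0 :=
  max_eq_left ((min_le_right _ _).trans (by linarith))

lemma uA_one (n : ℕ) (hn : 4 ≤ n) {s : ℝ} (h1 : 2 / (n : ℝ) ≤ s) (h2 : s ≤ 1 / 2) :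
    uA n s = 1 := by
  have hn' : (4 : ℝ) ≤ n := by exact_mod_cast hn
  have hns : (1 : ℝ) ≤ (n : ℝ) * s - 1 := by
    have h2n : (2 : ℝ) = (n : ℝ) * (2 / n) := by field_simp
    nlinarith [mul_le_mul_of_nonneg_left h1 (by linarith : (0:ℝ) ≤ (n:ℝ))]
  have h2s : (1 : ℝ) ≤ 2 - 2 * s := by linarith
  unfold uA
  rw [min_eq_left hns, min_eq_left h2s, max_eq_right zero_le_one]

lemma uA_linear (n : ℕ) (hn : 4 ≤ n) {s : ℝ} (h1 : (n : ℝ)⁻¹ ≤ s) (h2 : s ≤ 2 / n) :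
    uA n s = (n : ℝ) * s - 1 := by
  have hn' : (4 : ℝ) ≤ n := by exact_mod_cast hn
  have hnpos : (0 : ℝ) < n := by linarith
  have ha : (n : ℝ) * s - 1 ≤ 1 := by
    have : (n : ℝ) * s ≤ (n : ℝ) * (2 / n) := mul_le_mul_of_nonneg_left h2 hnpos.le
    rw [mul_div_cancel₀ _ hnpos.ne'] at this
    linarith
  have hb : 0 ≤ (n : ℝ) * s - 1 := by
    have : (n : ℝ) * (n : ℝ)⁻¹ ≤ (n : ℝ) * s := mul_le_mul_of_nonneg_left h1 hnpos.le
    rw [mul_inv_cancel₀ hnpos.ne'] at this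
    linarith
  have hs2 : s ≤ 1 / 2 := h2.trans (by rw [div_le_div_iff₀ hnpos (by norm_num)]; linarith)
  have hc : (n : ℝ) * s - 1 ≤ 2 - 2 * s := by linarith
  unfold uA
  rw [min_eq_right ha, min_eq_left hc, max_eq_right hb]

lemma uA_down (n : ℕ) (hn : 4 ≤ n) {s : ℝ} (h1 : 1 / 2 ≤ s) (h2 : s ≤ 1) :
    uA n s = 2 - 2 * s := by
  have hn' : (4 : ℝ) ≤ n := by exact_mod_cast hn
  have hns : (1 : ℝ) ≤ (n : ℝ) * s - 1 := by nlinarith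
  have h2s : 2 - 2 * s ≤ 1 := by linarith
  have h2s' : 0 ≤ 2 - 2 * s := by linarith
  unfold uA
  rw [min_eq_left hns, min_eq_right h2s, max_eq_right h2s']

lemma uA_mono {n m : ℕ} (h : n ≤ m) (s : ℝ) : uA n s ≤ uA m s := by
  rcases le_or_gt s 0 with hs | hs
  · rw [uA_zero_left n (hs.trans (by positivity)), uA_zero_left m (hs.trans (by positivity))]
  · unfold uA
    have : (n : ℝ) * s - 1 ≤ (m : ℝ) * s - 1 := by
      have : (n : ℝ) ≤ m := by exact_mod_cast h
      nlinarith
    exact max_le_max le_rfl (min_le_min (min_le_min le_rfl this) le_rfl)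

lemma uA_cont (n : ℕ) : Continuous (uA n) := by
  unfold uA
  exact continuous_const.max ((continuous_const.min
    ((continuous_const.mul continuous_id).sub continuous_const)).min
    (continuous_const.sub (continuous_const.mul continuous_id)))

lemma uA_zero_fun (s : ℝ) : uA 0 s = 0 := by
  unfold uA
  apply max_eq_left
  refine (min_le_left _ _).trans ((min_le_right _ _).trans ?_)
  norm_num
noncomputable def gA (c : ℝ → ℝ) (n : ℕ) (s : ℝ) : ℝ := uA n s * (c s)⁻¹

noncomputable def JA (c : ℝ → ℝ) (n : ℕ) : ℝ := ∫ s in (0:ℝ)..1, gA c n s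

noncomputable def phiA (c : ℝ → ℝ) (n : ℕ) (x : ℝ) : ℝ :=
  (∫ s in (0:ℝ)..x, gA c n s) / JA c n

section CLemmas

variable {c : ℝ → ℝ}

lemma gA_cont (hc_cont : Continuous c) (hc_pos : ∀ x > (0:ℝ), 0 < c x) (n : ℕ) :
    Continuous (gA c n) := by
  rcases Nat.eq_zero_or_pos n with rfl | hn
  · have : gA c 0 = fun _ => (0:ℝ) := funext fun s => by rw [gA, uA_zero_fun, zero_mul]
    rw [this]; exact continuous_const
  · rw [continuous_iff_continuousAt]
    intro x
    rcases lt_or_ge 0 x with hx | hx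
    · exact ((uA_cont n).continuousAt).mul
        ((hc_cont.continuousAt).inv₀ (hc_pos x hx).ne')
    · have hpos : (0:ℝ) < (n : ℝ)⁻¹ := by
        have : (0:ℝ) < n := by exact_mod_cast hn
        positivity
      have hmem : Iio ((n : ℝ)⁻¹) ∈ 𝓝 x := Iio_mem_nhds (lt_of_le_of_lt hx hpos)
      have hev : gA c n =ᶠ[𝓝 x] fun _ => (0:ℝ) := by
        filter_upwards [hmem] with s hs
        rw [gA, uA_zero_left n (le_of_lt hs), zero_mul]
      exact ContinuousAt.congr continuousAt_const hev.symm

lemma gA_nonneg (hc_pos : ∀ x > (0:ℝ), 0 < c x) (n : ℕ) (s : ℝ) : 0 ≤ gA c n s := by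
  rcases lt_or_ge 0 s with hs | hs
  · exact mul_nonneg (uA_nonneg n s) (inv_nonneg.2 (hc_pos s hs).le)
  · rw [gA, uA_zero_left n (hs.trans (by positivity)), zero_mul]

lemma gA_le_inv (hc_pos : ∀ x > (0:ℝ), 0 < c x) (n : ℕ) {s : ℝ} (hs : 0 < s) :
    gA c n s ≤ (c s)⁻¹ :=
  mul_le_of_le_one_left (inv_nonneg.2 (hc_pos s hs).le) (uA_le_one n s)

lemma gA_intInt (hc_cont : Continuous c) (hc_pos : ∀ x > (0:ℝ), 0 < c x) (n : ℕ)
    (a b : ℝ) : IntervalIntegrable (gA c n) volume a b :=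
  (gA_cont hc_cont hc_pos n).intervalIntegrable a b

lemma inv_c_intInt (hc_cont : Continuous c) (hc_pos : ∀ x > (0:ℝ), 0 < c x)
    {a b : ℝ} (ha : 0 < a) (hab : a ≤ b) :
    IntervalIntegrable (fun s => (c s)⁻¹) volume a b := by
  apply ContinuousOn.intervalIntegrable
  intro x hx
  rw [uIcc_of_le hab] at hx
  exact ((hc_cont.continuousAt.inv₀ (hc_pos x (lt_of_lt_of_le ha hx.1)).ne')).continuousWithinAt

lemma J_mono (hc_cont : Continuous c) (hc_pos : ∀ x > (0:ℝ), 0 < c x) :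
    Monotone (JA c) := by
  intro n m h
  apply intervalIntegral.integral_mono (by norm_num) (gA_intInt hc_cont hc_pos n 0 1)
    (gA_intInt hc_cont hc_pos m 0 1)
  intro s
  rcases lt_or_ge 0 s with hs | hs
  · exact mul_le_mul_of_nonneg_right (uA_mono h s) (inv_nonneg.2 (hc_pos s hs).le)
  · rw [gA, gA, uA_zero_left n (hs.trans (by positivity)),
      uA_zero_left m (hs.trans (by positivity))]

lemma nfacts {n : ℕ} (hn : 5 ≤ n) :
    (0:ℝ) < (n:ℝ)⁻¹ ∧ (n:ℝ)⁻¹ < 2 / n ∧ 2 / (n:ℝ) < 1/2 := by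
  have h5 : (5:ℝ) ≤ n := by exact_mod_cast hn
  have hp : (0:ℝ) < n := by linarith
  refine ⟨by positivity, ?_, ?_⟩
  · rw [inv_eq_one_div, div_lt_div_iff₀ hp hp]; linarith
  · rw [div_lt_div_iff₀ hp (by norm_num)]; linarith

lemma J_ge (hc_cont : Continuous c) (hc_pos : ∀ x > (0:ℝ), 0 < c x) {n : ℕ} (hn : 5 ≤ n) :
    (∫ s in (2/(n:ℝ))..(1/2), (c s)⁻¹) ≤ JA c n := by
  obtain ⟨h1, h2, h3⟩ := nfacts hn
  have hInt := gA_intInt hc_cont hc_pos n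
  have hJ : JA c n = (∫ s in (0:ℝ)..(2/n), gA c n s) +
      ((∫ s in (2/(n:ℝ))..(1/2), gA c n s) + ∫ s in (1/2:ℝ)..1, gA c n s) := by
    rw [intervalIntegral.integral_add_adjacent_intervals (hInt _ _) (hInt _ _),
      intervalIntegral.integral_add_adjacent_intervals (hInt _ _) (hInt _ _)]
    rfl
  have hmid : (∫ s in (2/(n:ℝ))..(1/2), gA c n s) = ∫ s in (2/(n:ℝ))..(1/2), (c s)⁻¹ := by
    apply intervalIntegral.integral_congr
    intro s hs
    rw [uIcc_of_le h3.le] at hs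
    rw [gA, uA_one n (by omega) hs.1 hs.2, one_mul]
  have hA : 0 ≤ ∫ s in (0:ℝ)..(2/n), gA c n s :=
    intervalIntegral.integral_nonneg (by positivity) fun s _ => gA_nonneg hc_pos n s
  have hB : 0 ≤ ∫ s in (1/2:ℝ)..1, gA c n s :=
    intervalIntegral.integral_nonneg (by norm_num) fun s _ => gA_nonneg hc_pos n s
  rw [hJ, hmid]; linarith

lemma J_pos (hc_cont : Continuous c) (hc_pos : ∀ x > (0:ℝ), 0 < c x) {n : ℕ} (hn : 5 ≤ n) :
    0 < JA c n := by
  obtain ⟨h1, h2, h3⟩ := nfacts hn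
  refine lt_of_lt_of_le ?_ (J_ge hc_cont hc_pos hn)
  apply intervalIntegral.intervalIntegral_pos_of_pos_on
    (inv_c_intInt hc_cont hc_pos (by positivity) h3.le)
  · intro x hx
    exact inv_pos.2 (hc_pos x (lt_trans (by positivity) hx.1))
  · exact h3

end CLemmas
section PhiLemmas

variable {c : ℝ → ℝ}

lemma phiA_hasDeriv (hc_cont : Continuous c) (hc_pos : ∀ x > (0:ℝ), 0 < c x) (n : ℕ)
    (x : ℝ) : HasDerivAt (phiA c n) (gA c n x / JA c n) x :=
  (((gA_cont hc_cont hc_pos n).integral_hasStrictDerivAt 0 x).hasDerivAt).div_const _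

lemma deriv_phiA (hc_cont : Continuous c) (hc_pos : ∀ x > (0:ℝ), 0 < c x) (n : ℕ) :
    deriv (phiA c n) = fun x => gA c n x / JA c n :=
  funext fun x => (phiA_hasDeriv hc_cont hc_pos n x).deriv

lemma phiA_contDiff (hc_cont : Continuous c) (hc_pos : ∀ x > (0:ℝ), 0 < c x) (n : ℕ) :
    ContDiff ℝ 1 (phiA c n) := by
  rw [contDiff_one_iff_deriv]
  refine ⟨fun x => (phiA_hasDeriv hc_cont hc_pos n x).differentiableAt, ?_⟩
  rw [deriv_phiA hc_cont hc_pos n]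
  exact (gA_cont hc_cont hc_pos n).div_const _

lemma key_eq (hc_cont : Continuous c) (hc_pos : ∀ x > (0:ℝ), 0 < c x) (n : ℕ) :
    (fun y => c y * deriv (phiA c n) y) = fun y => uA n y / JA c n := by
  funext y
  rw [deriv_phiA hc_cont hc_pos n]
  simp only
  rcases lt_or_ge 0 y with hy | hy
  · have hcy : c y ≠ 0 := (hc_pos y hy).ne'
    rw [gA]
    field_simp
  · rw [gA, uA_zero_left n (hy.trans (by positivity))]
    simp

lemma phi_eq_zero (hc_cont : Continuous c) (hc_pos : ∀ x > (0:ℝ), 0 < c x) (n : ℕ)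
    {x : ℝ} (hx : x ∈ Icc (0:ℝ) ((n:ℝ)⁻¹)) : phiA c n x = 0 := by
  have h0 : ∫ s in (0:ℝ)..x, gA c n s = 0 := by
    rw [intervalIntegral.integral_congr (g := fun _ => (0:ℝ)) ?_,
      intervalIntegral.integral_zero]
    intro s hs
    rw [uIcc_of_le hx.1] at hs
    exact (by rw [gA, uA_zero_left n (hs.2.trans hx.2), zero_mul] : gA c n s = 0)
  rw [phiA, h0, zero_div]

lemma int_0x_eq_J (hc_cont : Continuous c) (hc_pos : ∀ x > (0:ℝ), 0 < c x) (n : ℕ)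
    {x : ℝ} (hx : 1 ≤ x) : (∫ s in (0:ℝ)..x, gA c n s) = JA c n := by
  have h1 : ∫ s in (1:ℝ)..x, gA c n s = 0 := by
    rw [intervalIntegral.integral_congr (g := fun _ => (0:ℝ)) ?_,
      intervalIntegral.integral_zero]
    intro s hs
    rw [uIcc_of_le hx] at hs
    exact (by rw [gA, uA_zero_right n hs.1, zero_mul] : gA c n s = 0)
  have := intervalIntegral.integral_add_adjacent_intervals
    (gA_intInt hc_cont hc_pos n 0 1) (gA_intInt hc_cont hc_pos n 1 x)
  rw [h1, add_zero] at this
  rw [← this]; rfl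

lemma phi_eq_one (hc_cont : Continuous c) (hc_pos : ∀ x > (0:ℝ), 0 < c x) {n : ℕ}
    (hn : 5 ≤ n) {x : ℝ} (hx : 1 ≤ x) : phiA c n x = 1 := by
  rw [phiA, int_0x_eq_J hc_cont hc_pos n hx, div_self (J_pos hc_cont hc_pos hn).ne']

lemma phi_mem (hc_cont : Continuous c) (hc_pos : ∀ x > (0:ℝ), 0 < c x) {n : ℕ}
    (hn : 5 ≤ n) {x : ℝ} (hx : 0 ≤ x) : phiA c n x ∈ Icc (0:ℝ) 1 := by
  have hJ := J_pos hc_cont hc_pos hn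
  constructor
  · exact div_nonneg
      (intervalIntegral.integral_nonneg hx fun s _ => gA_nonneg hc_pos n s) hJ.le
  · rw [phiA, div_le_one hJ]
    rcases le_or_gt x 1 with hx1 | hx1
    · have hsplit := intervalIntegral.integral_add_adjacent_intervals
        (gA_intInt hc_cont hc_pos n 0 x) (gA_intInt hc_cont hc_pos n x 1)
      have htail : 0 ≤ ∫ s in x..(1:ℝ), gA c n s :=
        intervalIntegral.integral_nonneg hx1 fun s _ => gA_nonneg hc_pos n s
      have : JA c n = (∫ s in (0:ℝ)..x, gA c n s) + ∫ s in x..(1:ℝ), gA c n s := hsplit.symm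
      linarith
    · rw [int_0x_eq_J hc_cont hc_pos n hx1.le]

lemma phi_split (hc_cont : Continuous c) (hc_pos : ∀ x > (0:ℝ), 0 < c x) {n : ℕ}
    (hn : 5 ≤ n) (x : ℝ) :
    phiA c n x = 1 - (∫ s in x..(1:ℝ), gA c n s) / JA c n := by
  have hJ := (J_pos hc_cont hc_pos hn).ne'
  have hsplit := intervalIntegral.integral_add_adjacent_intervals
    (gA_intInt hc_cont hc_pos n 0 x) (gA_intInt hc_cont hc_pos n x 1)
  have h1 : (∫ s in (0:ℝ)..x, gA c n s) = JA c n - ∫ s in x..(1:ℝ), gA c n s := by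
    rw [JA, ← hsplit]; ring
  rw [phiA, h1, sub_div, div_self hJ]

end PhiLemmas
section DerivLemmas

variable {c : ℝ → ℝ}

lemma locderiv {f v : ℝ → ℝ} {x d : ℝ} (h : v =ᶠ[𝓝 x] f) (hd : HasDerivAt f d x) :
    DifferentiableAt ℝ v x ∧ deriv v x = d :=
  ⟨hd.differentiableAt.congr_of_eventuallyEq h, h.deriv_eq.trans hd.deriv⟩

lemma master (hc_cont : Continuous c) (hc_pos : ∀ x > (0:ℝ), 0 < c x) {n : ℕ}
    (hn : 5 ≤ n) {x : ℝ} (hx : 0 < x)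
    (hxS : x ∉ ({(n:ℝ)⁻¹, 2/(n:ℝ), (1/2:ℝ), (1:ℝ)} : Set ℝ)) :
    DifferentiableAt ℝ (fun y => uA n y / JA c n) x ∧
    |deriv (fun y => uA n y / JA c n) x| =
      (Ioo ((n:ℝ)⁻¹) (2/(n:ℝ))).indicator (fun _ => (n:ℝ)/JA c n) x +
      (Ioo (1/2:ℝ) 1).indicator (fun _ => 2/JA c n) x := by
  obtain ⟨ha, hab, hb2⟩ := nfacts hn
  have hJ := J_pos hc_cont hc_pos hn
  have hnn : (0:ℝ) ≤ (n:ℝ) := Nat.cast_nonneg n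
  simp only [mem_insert_iff, mem_singleton_iff, not_or] at hxS
  obtain ⟨hx1, hx2, hx3, hx4⟩ := hxS
  rcases lt_trichotomy x ((n:ℝ)⁻¹) with hA | hA | hA
  · -- x < 1/n : locally zero
    have h : (fun y => uA n y / JA c n) =ᶠ[𝓝 x] fun _ => (0:ℝ) := by
      filter_upwards [Iio_mem_nhds hA] with s hs
      rw [uA_zero_left n (le_of_lt hs), zero_div]
    obtain ⟨hdiff, hder⟩ := locderiv h (hasDerivAt_const x 0)
    refine ⟨hdiff, ?_⟩
    rw [hder, abs_zero,
      Set.indicator_of_notMem (fun hm => absurd hm.1 (not_lt.2 hA.le)),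
      Set.indicator_of_notMem (fun hm : x ∈ Ioo (1/2:ℝ) 1 =>
        absurd hm.1 (not_lt.2 (hA.le.trans (hab.le.trans hb2.le)))),
      add_zero]
  · exact absurd hA hx1
  · rcases lt_trichotomy x (2/(n:ℝ)) with hB | hB | hB
    · -- linear piece
      have h : (fun y => uA n y / JA c n) =ᶠ[𝓝 x] fun s => ((n:ℝ) * s - 1) / JA c n := by
        filter_upwards [Ioo_mem_nhds hA hB] with s hs
        rw [uA_linear n (by omega) hs.1.le hs.2.le]
      have hd : HasDerivAt (fun s => ((n:ℝ) * s - 1) / JA c n) ((n:ℝ) / JA c n) x := by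
        simpa using (((hasDerivAt_id x).const_mul (n:ℝ)).sub_const 1).div_const (JA c n)
      obtain ⟨hdiff, hder⟩ := locderiv h hd
      refine ⟨hdiff, ?_⟩
      rw [hder, abs_of_nonneg (by positivity),
        Set.indicator_of_mem (Set.mem_Ioo.2 ⟨hA, hB⟩),
        Set.indicator_of_notMem (fun hm : x ∈ Ioo (1/2:ℝ) 1 =>
          absurd hm.1 (not_lt.2 (hB.le.trans hb2.le))),
        add_zero]
    · exact absurd hB hx2
    · rcases lt_trichotomy x (1/2:ℝ) with hC | hC | hC
      · -- constant one piece
        have h : (fun y => uA n y / JA c n) =ᶠ[𝓝 x] fun _ => 1 / JA c n := by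
          filter_upwards [Ioo_mem_nhds hB hC] with s hs
          rw [uA_one n (by omega) hs.1.le hs.2.le]
        obtain ⟨hdiff, hder⟩ := locderiv h (hasDerivAt_const x _)
        refine ⟨hdiff, ?_⟩
        rw [hder, abs_zero,
          Set.indicator_of_notMem (fun hm : x ∈ Ioo _ (2/(n:ℝ)) =>
            absurd hm.2 (not_lt.2 hB.le)),
          Set.indicator_of_notMem (fun hm : x ∈ Ioo (1/2:ℝ) 1 =>
            absurd hm.1 (not_lt.2 hC.le)),
          add_zero]
      · exact absurd hC hx3
      · rcases lt_trichotomy x (1:ℝ) with hD | hD | hD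
        · -- descending piece
          have h : (fun y => uA n y / JA c n) =ᶠ[𝓝 x] fun s => (2 - 2 * s) / JA c n := by
            filter_upwards [Ioo_mem_nhds hC hD] with s hs
            rw [uA_down n (by omega) hs.1.le hs.2.le]
          have hd : HasDerivAt (fun s => (2 - 2 * s) / JA c n) (-2 / JA c n) x := by
            simpa using ((hasDerivAt_const x (2:ℝ)).sub
              ((hasDerivAt_id x).const_mul (2:ℝ))).div_const (JA c n)
          obtain ⟨hdiff, hder⟩ := locderiv h hd
          refine ⟨hdiff, ?_⟩
          rw [hder,
            Set.indicator_of_notMem (fun hm : x ∈ Ioo ((n:ℝ)⁻¹) (2/(n:ℝ)) =>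
              absurd hm.2 (not_lt.2 (hb2.le.trans hC.le))),
            Set.indicator_of_mem (Set.mem_Ioo.2 ⟨hC, hD⟩), zero_add,
            abs_div, abs_of_pos hJ]
          norm_num
        · exact absurd hD hx4
        · -- x > 1 : locally zero
          have h : (fun y => uA n y / JA c n) =ᶠ[𝓝 x] fun _ => (0:ℝ) := by
            filter_upwards [Ioi_mem_nhds hD] with s hs
            rw [uA_zero_right n (le_of_lt hs), zero_div]
          obtain ⟨hdiff, hder⟩ := locderiv h (hasDerivAt_const x 0)
          refine ⟨hdiff, ?_⟩
          rw [hder, abs_zero,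
            Set.indicator_of_notMem (fun hm : x ∈ Ioo ((n:ℝ)⁻¹) (2/(n:ℝ)) =>
              absurd hm.2 (not_lt.2 ((hb2.le.trans (by norm_num)).trans hD.le))),
            Set.indicator_of_notMem (fun hm : x ∈ Ioo (1/2:ℝ) 1 =>
              absurd hm.2 (not_lt.2 hD.le)),
            add_zero]

end DerivLemmas
section IntLemmas

variable {c : ℝ → ℝ}

lemma int_eq (hc_cont : Continuous c) (hc_pos : ∀ x > (0:ℝ), 0 < c x) {n : ℕ}
    (hn : 5 ≤ n) :
    (∫ x in Ioi (0:ℝ), |deriv (fun y => c y * deriv (phiA c n) y) x|) = 2 / JA c n := by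
  obtain ⟨ha, hab, hb2⟩ := nfacts hn
  have hJ := J_pos hc_cont hc_pos hn
  have hn0 : (n:ℝ) ≠ 0 := by positivity
  rw [key_eq hc_cont hc_pos n]
  set G : ℝ → ℝ := fun x =>
    (Ioo ((n:ℝ)⁻¹) (2/(n:ℝ))).indicator (fun _ => (n:ℝ)/JA c n) x +
    (Ioo (1/2:ℝ) 1).indicator (fun _ => 2/JA c n) x with hG
  have hS0 : volume ({(n:ℝ)⁻¹, 2/(n:ℝ), (1/2:ℝ), (1:ℝ)} : Set ℝ) = 0 :=
    (Set.toFinite _).measure_zero volume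
  have hae : ∀ᵐ x : ℝ, x ∉ ({(n:ℝ)⁻¹, 2/(n:ℝ), (1/2:ℝ), (1:ℝ)} : Set ℝ) :=
    measure_eq_zero_iff_ae_notMem.mp hS0
  have hcongr : (∫ x in Ioi (0:ℝ), |deriv (fun y => uA n y / JA c n) x|)
      = ∫ x in Ioi (0:ℝ), G x := by
    apply setIntegral_congr_ae measurableSet_Ioi
    filter_upwards [hae] with x hxS hxI
    exact (master hc_cont hc_pos hn hxI hxS).2
  rw [hcongr]
  have hint1 : IntegrableOn
      (fun x => (Ioo ((n:ℝ)⁻¹) (2/(n:ℝ))).indicator (fun _ => (n:ℝ)/JA c n) x)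
      (Ioi (0:ℝ)) volume := by
    apply Integrable.integrableOn
    rw [integrable_indicator_iff measurableSet_Ioo]
    exact integrableOn_const measure_Ioo_lt_top.ne
  have hint2 : IntegrableOn
      (fun x => (Ioo (1/2:ℝ) 1).indicator (fun _ => 2/JA c n) x)
      (Ioi (0:ℝ)) volume := by
    apply Integrable.integrableOn
    rw [integrable_indicator_iff measurableSet_Ioo]
    exact integrableOn_const measure_Ioo_lt_top.ne
  rw [hG]
  rw [integral_add hint1 hint2]
  rw [setIntegral_indicator measurableSet_Ioo, setIntegral_indicator measurableSet_Ioo]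
  have hI1 : Ioi (0:ℝ) ∩ Ioo ((n:ℝ)⁻¹) (2/(n:ℝ)) = Ioo ((n:ℝ)⁻¹) (2/(n:ℝ)) := by
    apply Set.inter_eq_self_of_subset_right
    intro y hy
    exact lt_trans ha hy.1
  have hI2 : Ioi (0:ℝ) ∩ Ioo (1/2:ℝ) 1 = Ioo (1/2:ℝ) 1 := by
    apply Set.inter_eq_self_of_subset_right
    intro y hy
    exact lt_trans (by norm_num) hy.1
  rw [hI1, hI2]
  rw [setIntegral_const, setIntegral_const, measureReal_def, measureReal_def, Real.volume_Ioo, Real.volume_Ioo,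
    ENNReal.toReal_ofReal (by linarith : (0:ℝ) ≤ 2/(n:ℝ) - (n:ℝ)⁻¹),
    ENNReal.toReal_ofReal (by norm_num : (0:ℝ) ≤ (1:ℝ) - 1/2)]
  have hba : 2/(n:ℝ) - (n:ℝ)⁻¹ = (n:ℝ)⁻¹ := by
    rw [inv_eq_one_div]; field_simp; ring
  rw [hba, smul_eq_mul, smul_eq_mul]
  field_simp
  norm_num

lemma exists_J_ge (hc_cont : Continuous c) (hc_pos : ∀ x > (0:ℝ), 0 < c x)
    (hν_inf : ∫⁻ s in Set.Ioc (0:ℝ) 1, ENNReal.ofReal ((c s)⁻¹) = ⊤) (R : ℝ) :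
    ∃ n : ℕ, R ≤ JA c n := by
  set f : ℝ → ENNReal := fun s => ENNReal.ofReal (c s)⁻¹ with hf
  have hfm : Measurable f := ENNReal.measurable_ofReal.comp (hc_cont.measurable.inv)
  set μ := volume.withDensity f with hμdef
  have hμ : ∀ A : Set ℝ, MeasurableSet A → μ A = ∫⁻ s in A, f s :=
    fun A hA => withDensity_apply f hA
  have h1 : μ (Ioc (0:ℝ) 1) = ⊤ := by rw [hμ _ measurableSet_Ioc]; exact hν_inf
  have hcontOn : ContinuousOn (fun s => (c s)⁻¹) (Icc (1/2:ℝ) 1) := by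
    intro x hx
    exact ((hc_cont.continuousAt.inv₀
      (hc_pos x (lt_of_lt_of_le (by norm_num) hx.1)).ne')).continuousWithinAt
  obtain ⟨x₀, hx₀, hmax⟩ := isCompact_Icc.exists_isMaxOn
    (Set.nonempty_Icc.mpr (by norm_num)) hcontOn
  have h2 : μ (Ioc (1/2:ℝ) 1) ≠ ⊤ := by
    rw [hμ _ measurableSet_Ioc]
    have hle : (∫⁻ s in Ioc (1/2:ℝ) 1, f s) ≤
        ∫⁻ _ in Ioc (1/2:ℝ) 1, ENNReal.ofReal ((c x₀)⁻¹) := by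
      apply setLIntegral_mono measurable_const
      intro s hs
      exact ENNReal.ofReal_le_ofReal (hmax (Ioc_subset_Icc_self hs))
    rw [setLIntegral_const] at hle
    exact (lt_of_le_of_lt hle
      (ENNReal.mul_lt_top ENNReal.ofReal_lt_top measure_Ioc_lt_top)).ne
  have h3 : μ (Ioc (0:ℝ) (1/2)) = ⊤ := by
    have hu : Ioc (0:ℝ) (1/2) ∪ Ioc (1/2:ℝ) 1 = Ioc (0:ℝ) 1 :=
      Set.Ioc_union_Ioc_eq_Ioc (by norm_num) (by norm_num)
    by_contra h
    have hle := measure_union_le (μ := μ) (Ioc (0:ℝ) (1/2)) (Ioc (1/2:ℝ) 1)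
    rw [hu, h1] at hle
    exact (ENNReal.add_ne_top.2 ⟨h, h2⟩) (top_le_iff.1 hle)
  set s : ℕ → Set ℝ := fun k => Ioc (2/((k:ℝ)+1)) (1/2) with hs
  have hmono : Monotone s := by
    intro k l hkl
    apply Ioc_subset_Ioc_left
    have : ((k:ℝ)+1) ≤ (l:ℝ)+1 := by exact_mod_cast Nat.succ_le_succ hkl
    gcongr
  have hunion : (⋃ k, s k) = Ioc (0:ℝ) (1/2) := by
    ext y
    simp only [hs, mem_iUnion, mem_Ioc]
    constructor
    · rintro ⟨k, hk1, hk2⟩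
      exact ⟨lt_trans (by positivity) hk1, hk2⟩
    · rintro ⟨hy1, hy2⟩
      obtain ⟨k, hk⟩ := exists_nat_gt (2/y)
      refine ⟨k, ?_, hy2⟩
      rw [div_lt_iff₀ (by positivity : (0:ℝ) < (k:ℝ)+1)]
      have h2y : 2 < y * ((k:ℝ)+1) := by
        have hk1 : 2/y < (k:ℝ)+1 := by linarith
        have := (div_lt_iff₀ hy1).1 hk1
        linarith
      linarith
  have hsup : (⨆ k, μ (s k)) = ⊤ := by
    rw [← Directed.measure_iUnion (hmono.directed_le), hunion, h3]
  have hlt : ENNReal.ofReal R < ⨆ k, μ (s k) := by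
    rw [hsup]; exact ENNReal.ofReal_lt_top
  obtain ⟨k, hk⟩ := lt_iSup_iff.1 hlt
  refine ⟨k + 5, ?_⟩
  have hn5 : 5 ≤ k + 5 := by omega
  obtain ⟨ha, hab, hb2⟩ := nfacts hn5
  have hsub : s k ⊆ Ioc (2/((k+5:ℕ):ℝ)) (1/2) := by
    apply Ioc_subset_Ioc_left
    have hc1 : ((k:ℝ)+1) ≤ ((k+5:ℕ):ℝ) := by push_cast; linarith
    gcongr
  have hIntOn : IntegrableOn (fun t => (c t)⁻¹) (Ioc (2/((k+5:ℕ):ℝ)) (1/2)) volume := by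
    have : ContinuousOn (fun t => (c t)⁻¹) (Icc (2/((k+5:ℕ):ℝ)) (1/2)) := by
      intro x hx
      have hx0 : 0 < x := lt_of_lt_of_le (by positivity) hx.1
      exact ((hc_cont.continuousAt.inv₀ (hc_pos x hx0).ne')).continuousWithinAt
    exact (this.integrableOn_Icc).mono_set Ioc_subset_Icc_self
  have hae2 : 0 ≤ᵐ[volume.restrict (Ioc (2/((k+5:ℕ):ℝ)) (1/2))] fun t => (c t)⁻¹ := by
    rw [EventuallyLE, ae_restrict_iff' measurableSet_Ioc]
    apply Filter.Eventually.of_forall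
    intro y hy
    exact inv_nonneg.2 (hc_pos y (lt_of_lt_of_le (by positivity) hy.1.le)).le
  have hμn : μ (Ioc (2/((k+5:ℕ):ℝ)) (1/2)) =
      ENNReal.ofReal (∫ t in (2/((k+5:ℕ):ℝ))..(1/2), (c t)⁻¹) := by
    rw [hμ _ measurableSet_Ioc,
      intervalIntegral.integral_of_le hb2.le,
      ofReal_integral_eq_lintegral_ofReal hIntOn hae2]
  have hR : ENNReal.ofReal R < ENNReal.ofReal (∫ t in (2/((k+5:ℕ):ℝ))..(1/2), (c t)⁻¹) :=
    lt_of_lt_of_le hk ((measure_mono hsub).trans_eq hμn)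
  have hIR : R ≤ ∫ t in (2/((k+5:ℕ):ℝ))..(1/2), (c t)⁻¹ := by
    by_contra h
    push_neg at h
    exact absurd hR (not_lt.2 (ENNReal.ofReal_le_ofReal h.le))
  exact hIR.trans (J_ge hc_cont hc_pos hn5)

lemma tendstoJ (hc_cont : Continuous c) (hc_pos : ∀ x > (0:ℝ), 0 < c x)
    (hν_inf : ∫⁻ s in Set.Ioc (0:ℝ) 1, ENNReal.ofReal ((c s)⁻¹) = ⊤) :
    Tendsto (JA c) atTop atTop :=
  tendsto_atTop_atTop_of_monotone (J_mono hc_cont hc_pos)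
    (fun R => exists_J_ge hc_cont hc_pos hν_inf R)

end IntLemmas
/-- Paper: construction in the proof of Proposition 5.3, establishing
conditions (cond1) and (cond2). -/
theorem stmt_14 (c : ℝ → ℝ)
    (hc_cont : Continuous c)
    (hc_pos : ∀ x > (0:ℝ), 0 < c x)
    (hc_diff : ∀ x ∈ Set.Ioo (0:ℝ) 1, DifferentiableAt ℝ c x)
    (M : ℝ) (hM : ∀ x ∈ Set.Ioo (0:ℝ) 1, |deriv c x| ≤ M)
    (hν_inf : ∫⁻ s in Set.Ioc (0:ℝ) 1, ENNReal.ofReal ((c s)⁻¹) = ⊤) :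
    ∃ (N : ℕ) (φ : ℕ → ℝ → ℝ),
      (∀ n : ℕ, N ≤ n →
        ContDiffOn ℝ 1 (φ n) (Set.Ici 0) ∧
        (∀ x ∈ Set.Ici (0:ℝ), φ n x ∈ Set.Icc (0:ℝ) 1) ∧
        (∀ x ∈ Set.Icc (0:ℝ) ((n : ℝ))⁻¹, φ n x = 0) ∧
        (∀ x : ℝ, 1 ≤ x → φ n x = 1) ∧
        (∃ S : Finset ℝ, ∀ x ∈ Set.Ioi (0:ℝ), x ∉ S →
          DifferentiableAt ℝ (fun y => c y * deriv (φ n) y) x)) ∧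
      (∀ x > (0:ℝ),
        Filter.Tendsto (fun n => φ n x) Filter.atTop (nhds 1)) ∧
      Filter.Tendsto
        (fun n => ∫ x in Set.Ioi (0:ℝ),
          |deriv (fun y => c y * deriv (φ n) y) x|)
        Filter.atTop (nhds 0) := by
  refine ⟨5, phiA c, ?_, ?_, ?_⟩
  · intro n hn
    refine ⟨(phiA_contDiff hc_cont hc_pos n).contDiffOn,
      fun x hx => phi_mem hc_cont hc_pos hn hx,
      fun x hx => phi_eq_zero hc_cont hc_pos n hx,
      fun x hx => phi_eq_one hc_cont hc_pos hn hx, ?_⟩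
    refine ⟨({(n:ℝ)⁻¹, 2/(n:ℝ), (1/2:ℝ), (1:ℝ)} : Finset ℝ), ?_⟩
    intro x hxI hxS
    have hxS' : x ∉ ({(n:ℝ)⁻¹, 2/(n:ℝ), (1/2:ℝ), (1:ℝ)} : Set ℝ) := by
      simp only [Finset.mem_insert, Finset.mem_singleton, not_or] at hxS
      simp only [mem_insert_iff, mem_singleton_iff, not_or]
      exact hxS
    rw [key_eq hc_cont hc_pos n]
    exact (master hc_cont hc_pos hn hxI hxS').1
  · intro x hx
    rcases le_or_gt 1 x with hx1 | hx1
    · apply Tendsto.congr' _ (tendsto_const_nhds : Tendsto (fun _ : ℕ => (1:ℝ)) atTop (𝓝 1))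
      filter_upwards [eventually_ge_atTop 5] with n hn
      exact (phi_eq_one hc_cont hc_pos hn hx1).symm
    · have hK : Tendsto (fun n : ℕ => (∫ s in x..(1:ℝ), (c s)⁻¹) / JA c n) atTop (𝓝 0) :=
        Tendsto.div_atTop tendsto_const_nhds (tendstoJ hc_cont hc_pos hν_inf)
      have h0 : Tendsto (fun n : ℕ => (∫ s in x..(1:ℝ), gA c n s) / JA c n) atTop (𝓝 0) := by
        apply squeeze_zero' ?_ ?_ hK
        · filter_upwards [eventually_ge_atTop 5] with n hn
          exact div_nonneg (intervalIntegral.integral_nonneg hx1.le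
            fun s _ => gA_nonneg hc_pos n s) (J_pos hc_cont hc_pos hn).le
        · filter_upwards [eventually_ge_atTop 5] with n hn
          have hb : (∫ s in x..(1:ℝ), gA c n s) ≤ ∫ s in x..(1:ℝ), (c s)⁻¹ :=
            intervalIntegral.integral_mono_on hx1.le (gA_intInt hc_cont hc_pos n x 1)
              (inv_c_intInt hc_cont hc_pos hx hx1.le)
              (fun s hs => gA_le_inv hc_pos n (lt_of_lt_of_le hx hs.1))
          exact div_le_div_of_nonneg_right hb (J_pos hc_cont hc_pos hn).le
            |>.trans_eq rfl
      have hT : Tendsto (fun n : ℕ => 1 - (∫ s in x..(1:ℝ), gA c n s) / JA c n)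
          atTop (𝓝 (1 - 0)) := tendsto_const_nhds.sub h0
      rw [sub_zero] at hT
      apply Tendsto.congr' _ hT
      filter_upwards [eventually_ge_atTop 5] with n hn
      exact (phi_split hc_cont hc_pos hn x).symm
  · have h2J : Tendsto (fun n : ℕ => 2 / JA c n) atTop (𝓝 0) :=
      Tendsto.div_atTop tendsto_const_nhds (tendstoJ hc_cont hc_pos hν_inf)
    apply Tendsto.congr' _ h2J
    filter_upwards [eventually_ge_atTop 5] with n hn
    exact (int_eq hc_cont hc_pos hn).symm
end
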